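/- arXiv:1509.01877 — 5 statements merged into one kernel-verified Lean document; each statement's English description precedes it below -/
import Mathlib

section
/- Let A ∈ ℝ^{m×p}, B ∈ ℝ^{m×n}, c ∈ ℝᵐ, d ∈ ℝᵖ, and suppose the polyhedron Q = {(ξ,θ) ∈ ℝ^{p+n} : Aξ + Bθ ≤ c} is nonempty. Fix y ∈ ℝⁿ. Then the objective (ξ,θ) ↦ (1/2)‖θ − y‖₂² + dᵀξ is bounded below on Q if and only if there exists λ ∈ ℝᵐ with λ ≥ 0 (componentwise) such that −d = Aᵀλ. -/
open Matrix

lemma farkas_aux : ∀ (m : ℕ) {p : ℕ} (a : Fin m → Fin p → ℝ) (b : Fin p → ℝ),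
    (∀ x : Fin p → ℝ, (∀ i, a i ⬝ᵥ x ≤ 0) → b ⬝ᵥ x ≤ 0) →
    ∃ lam : Fin m → ℝ, 0 ≤ lam ∧ (∑ i, lam i • a i) = b := by
  intro m
  induction m with
  | zero =>
    intro p a b h
    refine ⟨0, le_refl _, ?_⟩
    have hb : b ⬝ᵥ b ≤ 0 := h b (fun i => i.elim0)
    have hb2 : b ⬝ᵥ b = ∑ j, b j * b j := rfl
    have hb3 : ∀ j, b j * b j ≤ 0 → b j = 0 := by
      intro j hj
      nlinarith [sq_nonneg (b j)]
    have hbz : b = 0 := by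
      funext j
      have : ∑ j, b j * b j ≤ 0 := by rw [← hb2]; exact hb
      have hz : ∑ j, b j * b j = 0 :=
        le_antisymm this (Finset.sum_nonneg (fun j _ => mul_self_nonneg _))
      have hj := (Finset.sum_eq_zero_iff_of_nonneg (fun j _ => mul_self_nonneg (b j))).1 hz j (Finset.mem_univ j)
      simpa using hb3 j (le_of_eq hj)
    simp [hbz]
  | succ m ih =>
    intro p a b h
    by_cases hc : ∀ x : Fin p → ℝ, (∀ i : Fin m, a i.castSucc ⬝ᵥ x ≤ 0) → b ⬝ᵥ x ≤ 0
    · obtain ⟨mu, hmu0, hmu⟩ := ih (fun i => a i.castSucc) b hc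
      refine ⟨Fin.snoc mu 0, ?_, ?_⟩
      · intro i
        refine Fin.lastCases ?_ (fun j => ?_) i
        · simp
        · simpa using hmu0 j
      · rw [Fin.sum_univ_castSucc]
        simpa using hmu
    · push_neg at hc
      obtain ⟨x₀, hx₀, hbx₀⟩ := hc
      set aL := a (Fin.last m) with haL
      have ht : 0 < aL ⬝ᵥ x₀ := by
        by_contra hle
        push_neg at hle
        have := h x₀ (fun i => Fin.lastCases hle hx₀ i)
        linarith
      set t := aL ⬝ᵥ x₀ with htdef
      have htne : t ≠ 0 := ne_of_gt ht
      set a' : Fin m → Fin p → ℝ := fun i => a i.castSucc - (a i.castSucc ⬝ᵥ x₀ / t) • aL with ha'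
      set b' : Fin p → ℝ := b - (b ⬝ᵥ x₀ / t) • aL with hb'
      have key : ∀ x : Fin p → ℝ, (∀ i, a' i ⬝ᵥ x ≤ 0) → b' ⬝ᵥ x ≤ 0 := by
        intro x hx
        set x' : Fin p → ℝ := x - (aL ⬝ᵥ x / t) • x₀ with hx'
        have hLx' : aL ⬝ᵥ x' = 0 := by
          simp only [hx', dotProduct_sub, dotProduct_smul, smul_eq_mul, ← htdef]
          field_simp
          ring
        have hax' : ∀ i : Fin m, a i.castSucc ⬝ᵥ x' = a' i ⬝ᵥ x := by
          intro i
          simp only [ha', hx', sub_dotProduct, smul_dotProduct, dotProduct_sub,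
            dotProduct_smul, smul_eq_mul, ← htdef]
          field_simp
        have hbx' : b ⬝ᵥ x' = b' ⬝ᵥ x := by
          simp only [hb', hx', sub_dotProduct, smul_dotProduct, dotProduct_sub,
            dotProduct_smul, smul_eq_mul, ← htdef]
          field_simp
        have hfeas : ∀ i : Fin (m+1), a i ⬝ᵥ x' ≤ 0 := by
          intro i
          refine Fin.lastCases ?_ (fun j => ?_) i
          · rw [← haL, hLx']
          · rw [hax' j]; exact hx j
        have := h x' hfeas
        rwa [hbx'] at this
      obtain ⟨mu, hmu0, hmu⟩ := ih a' b' key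
      refine ⟨Fin.snoc mu (b ⬝ᵥ x₀ / t - ∑ i, mu i * (a i.castSucc ⬝ᵥ x₀ / t)), ?_, ?_⟩
      · intro i
        refine Fin.lastCases ?_ (fun j => ?_) i
        · simp only [Fin.snoc_last]
          have h1 : 0 < b ⬝ᵥ x₀ / t := div_pos hbx₀ ht
          have h3 : ∑ i, mu i * (a i.castSucc ⬝ᵥ x₀ / t) ≤ 0 :=
            Finset.sum_nonpos (fun i _ =>
              mul_nonpos_of_nonneg_of_nonpos (hmu0 i)
                (div_nonpos_of_nonpos_of_nonneg (hx₀ i) ht.le))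
          simpa using by linarith
        · simpa using hmu0 j
      · rw [Fin.sum_univ_castSucc]
        simp only [Fin.snoc_castSucc, Fin.snoc_last]
        have expand : ∑ i : Fin m, mu i • a i.castSucc
            = (∑ i, mu i • a' i) + (∑ i, mu i * (a i.castSucc ⬝ᵥ x₀ / t)) • aL := by
          rw [Finset.sum_smul, ← Finset.sum_add_distrib]
          refine Finset.sum_congr rfl (fun i _ => ?_)
          simp only [ha', smul_sub, smul_smul]
          abel
        rw [expand, hmu, hb']
        ext j
        simp only [Pi.add_apply, Pi.sub_apply, Pi.smul_apply, smul_eq_mul, sub_smul]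
        ring

/-- For a nonempty polyhedron `Q = {(ξ,θ) : Aξ + Bθ ≤ c}` and fixed `y`,
the objective `(1/2)‖θ − y‖₂² + dᵀξ` is bounded below on `Q` iff `−d = Aᵀλ` for some
componentwise nonnegative `λ`. -/
theorem bounded_below_iff_farkas {m p n : ℕ}
    (A : Matrix (Fin m) (Fin p) ℝ) (B : Matrix (Fin m) (Fin n) ℝ)
    (c : Fin m → ℝ) (d : Fin p → ℝ)
    (hQ : ∃ ξ : Fin p → ℝ, ∃ θ : Fin n → ℝ, A.mulVec ξ + B.mulVec θ ≤ c)
    (y : Fin n → ℝ) :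
    (∃ M : ℝ, ∀ ξ : Fin p → ℝ, ∀ θ : Fin n → ℝ, A.mulVec ξ + B.mulVec θ ≤ c →
      M ≤ (1 / 2) * (∑ j, (θ j - y j) ^ 2) + d ⬝ᵥ ξ) ↔
    (∃ lam : Fin m → ℝ, 0 ≤ lam ∧ Aᵀ.mulVec lam = -d) := by
  constructor
  · rintro ⟨M, hM⟩
    obtain ⟨ξ₀, θ₀, hfeas⟩ := hQ
    have hfar : ∀ x : Fin p → ℝ, (∀ i : Fin m, A i ⬝ᵥ x ≤ 0) → (-d) ⬝ᵥ x ≤ 0 := by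
      intro x hx
      by_contra hpos
      push_neg at hpos
      set s := d ⬝ᵥ x with hsdef
      have hs : s < 0 := by
        have : (-d) ⬝ᵥ x = -s := by simp [hsdef, neg_dotProduct]
        rw [this] at hpos; linarith
      set C := (1/2) * (∑ j, (θ₀ j - y j)^2) + d ⬝ᵥ ξ₀ with hCdef
      have hMC : M ≤ C := hM ξ₀ θ₀ hfeas
      set tt := (C - M + 1)/(-s) with httdef
      have htt : 0 ≤ tt := div_nonneg (by linarith) (by linarith)
      have hfeas2 : A.mulVec (ξ₀ + tt • x) + B.mulVec θ₀ ≤ c := by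
        intro i
        have h1 : A.mulVec (ξ₀ + tt • x) i = A.mulVec ξ₀ i + tt * (A i ⬝ᵥ x) := by
          have : A.mulVec (tt • x) i = tt * (A i ⬝ᵥ x) := by
            rw [Matrix.mulVec_smul]; rfl
          rw [Matrix.mulVec_add]; simp only [Pi.add_apply, this]
        have h2 : tt * (A i ⬝ᵥ x) ≤ 0 := mul_nonpos_of_nonneg_of_nonpos htt (hx i)
        have h3 := hfeas i
        simp only [Pi.add_apply] at h3 ⊢
        rw [h1]; linarith
      have hbound := hM (ξ₀ + tt • x) θ₀ hfeas2
      have hdx : d ⬝ᵥ (ξ₀ + tt • x) = d ⬝ᵥ ξ₀ + tt * s := by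
        rw [dotProduct_add, dotProduct_smul]; rfl
      have hts : tt * s = -(C - M + 1) := by
        have hns : tt * (-s) = C - M + 1 := by
          rw [httdef]
          exact div_mul_cancel₀ _ (neg_ne_zero.mpr (ne_of_lt hs))
        linear_combination -hns
      rw [hdx] at hbound
      have : M ≤ C + tt * s := by rw [hCdef]; linarith
      rw [hts] at this; linarith
    obtain ⟨lam, h0, hsum⟩ := farkas_aux m (fun i => A i) (-d) hfar
    refine ⟨lam, h0, ?_⟩
    funext j
    have hj := congrFun hsum j
    simp only [Finset.sum_apply, Pi.smul_apply, smul_eq_mul] at hj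
    rw [← hj]
    simp [Matrix.mulVec, dotProduct, Matrix.transpose_apply, mul_comm]
  · rintro ⟨lam, hlam0, hlam⟩
    set w := Bᵀ.mulVec lam with hwdef
    refine ⟨(∑ j, (-(1/2) * (w j)^2 + w j * y j)) - lam ⬝ᵥ c, ?_⟩
    intro ξ θ hfe
    have h1 : lam ⬝ᵥ (A.mulVec ξ + B.mulVec θ) ≤ lam ⬝ᵥ c := by
      refine Finset.sum_le_sum (fun i _ => ?_)
      exact mul_le_mul_of_nonneg_left (hfe i) (hlam0 i)
    have h2 : lam ⬝ᵥ A.mulVec ξ = -(d ⬝ᵥ ξ) := by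
      rw [Matrix.dotProduct_mulVec, ← Matrix.mulVec_transpose, hlam, neg_dotProduct]
    have h3 : lam ⬝ᵥ B.mulVec θ = w ⬝ᵥ θ := by
      rw [Matrix.dotProduct_mulVec, ← Matrix.mulVec_transpose, hwdef]
    have h4 : w ⬝ᵥ θ - lam ⬝ᵥ c ≤ d ⬝ᵥ ξ := by
      rw [dotProduct_add, h2, h3] at h1; linarith
    have h5 : (1/2)*(∑ j, (θ j - y j)^2) + w ⬝ᵥ θ
        = ∑ j, ((1/2)*(θ j - y j)^2 + w j * θ j) := by
      rw [Finset.mul_sum, dotProduct, ← Finset.sum_add_distrib]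
    have h6 : ∑ j, (-(1/2) * (w j)^2 + w j * y j)
        ≤ (1/2)*(∑ j, (θ j - y j)^2) + w ⬝ᵥ θ := by
      rw [h5]
      refine Finset.sum_le_sum (fun j _ => ?_)
      nlinarith [sq_nonneg (θ j - y j + w j)]
    linarith
end

section
/- Let Q = {(ξ,θ) ∈ ℝ^{p+n} : Aξ + Bθ ≤ c} be a nonempty polyhedron with A ∈ ℝ^{m×p}, B ∈ ℝ^{m×n}, c ∈ ℝᵐ, and let d ∈ ℝᵖ satisfy −d = Aᵀλ₀ for some λ₀ ≥ 0. For y ∈ ℝⁿ let (θ̂(y), ξ̂(y)) be a minimizer of (1/2)‖θ − y‖₂² + dᵀξ over Q. Then: (i) the θ-component θ̂(y) is unique for each y; (ii) for Lebesgue-almost every y ∈ ℝⁿ, θ̂ is differentiable at y and its divergence equals D(y) = n − |I_y| + rank(A_{I_y}), where J_y = {1 ≤ i ≤ m : ⟨a_i, ξ̂(y)⟩ + ⟨b_i, θ̂(y)⟩ = c_i} is the set of binding constraints, I_y ⊆ J_y is any index set such that the rows {[a_iᵀ, b_iᵀ] : i ∈ I_y} form a maximal linearly independent subset of the rows of [A_{J_y},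 B_{J_y}], and A_{I_y} is the submatrix of A with rows in I_y. -/
open Matrix MeasureTheory Module

section Alg
variable {m p n : ℕ} (A : Matrix (Fin m) (Fin p) ℝ) (B : Matrix (Fin m) (Fin n) ℝ)
  (c : Fin m → ℝ) (d : Fin p → ℝ)

lemma sum_quad (y θ' θ : Fin n → ℝ) :
    (1/2) * (∑ j, (θ j - y j)^2) =
    (1/2) * (∑ j, (θ' j - y j)^2) + (∑ j, (θ' j - y j) * (θ j - θ' j))
      + (1/2) * (∑ j, (θ j - θ' j)^2) := by
  rw [Finset.mul_sum, Finset.mul_sum, Finset.mul_sum, ← Finset.sum_add_distrib,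
    ← Finset.sum_add_distrib]
  exact Finset.sum_congr rfl fun j _ => by ring

/-- Variational inequality: necessity (point version). -/
lemma vi_nec {y : Fin n → ℝ} {ξ0 : Fin p → ℝ} {θ0 : Fin n → ℝ}
    (hfeas0 : A.mulVec ξ0 + B.mulVec θ0 ≤ c)
    (hmin0 : ∀ ξ θ, A.mulVec ξ + B.mulVec θ ≤ c →
        (1 / 2) * (∑ j, (θ0 j - y j) ^ 2) + d ⬝ᵥ ξ0
          ≤ (1 / 2) * (∑ j, (θ j - y j) ^ 2) + d ⬝ᵥ ξ)
    (ξ : Fin p → ℝ) (θ : Fin n → ℝ)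
    (hfeas : A.mulVec ξ + B.mulVec θ ≤ c) :
    0 ≤ (∑ j, (θ0 j - y j) * (θ j - θ0 j)) + (d ⬝ᵥ ξ - d ⬝ᵥ ξ0) := by
  set L := (∑ j, (θ0 j - y j) * (θ j - θ0 j)) + (d ⬝ᵥ ξ - d ⬝ᵥ ξ0) with hL
  set Q := (1/2) * (∑ j, (θ j - θ0 j)^2) with hQdef
  have hQ : 0 ≤ Q := by positivity
  have key : ∀ s : ℝ, 0 < s → s ≤ 1 → 0 ≤ L + s * Q := by
    intro s hs hs1
    have hfeas' : A.mulVec (ξ0 + s • (ξ - ξ0)) + B.mulVec (θ0 + s • (θ - θ0)) ≤ c := by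
      intro i
      have h1 := hfeas0 i
      have h2 := hfeas i
      simp only [Matrix.mulVec_add, Matrix.mulVec_smul, Matrix.mulVec_sub, Pi.add_apply,
        Pi.smul_apply, Pi.sub_apply, smul_eq_mul] at h1 h2 ⊢
      nlinarith
    have h := hmin0 _ _ hfeas'
    have hsum : (1/2) * (∑ j, ((θ0 + s • (θ - θ0)) j - y j)^2)
        = (1/2) * (∑ j, (θ0 j - y j)^2) + s * (∑ j, (θ0 j - y j) * (θ j - θ0 j))
          + s^2 * Q := by
      rw [sum_quad (θ' := θ0)]
      have e1 : (∑ j, (θ0 j - y j) * ((θ0 + s • (θ - θ0)) j - θ0 j))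
          = s * (∑ j, (θ0 j - y j) * (θ j - θ0 j)) := by
        rw [Finset.mul_sum]; exact Finset.sum_congr rfl fun j _ => by
          simp only [Pi.add_apply, Pi.smul_apply, Pi.sub_apply, smul_eq_mul]; ring
      have e2 : (1/2) * (∑ j, ((θ0 + s • (θ - θ0)) j - θ0 j)^2) = s^2 * Q := by
        have e3 : ∀ j ∈ Finset.univ, ((θ0 + s • (θ - θ0)) j - θ0 j)^2
            = s^2 * (θ j - θ0 j)^2 := fun j _ => by
          simp only [Pi.add_apply, Pi.smul_apply, Pi.sub_apply, smul_eq_mul]; ring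
        rw [Finset.sum_congr rfl e3, ← Finset.mul_sum, hQdef]; ring
      rw [e1, e2]
    have hdot : d ⬝ᵥ (ξ0 + s • (ξ - ξ0)) = d ⬝ᵥ ξ0 + s * (d ⬝ᵥ ξ - d ⬝ᵥ ξ0) := by
      simp only [dotProduct_add, dotProduct_smul, dotProduct_sub, smul_eq_mul]
      try ring
    rw [hsum, hdot] at h
    have : 0 ≤ s * L + s^2 * Q := by rw [hL]; nlinarith
    nlinarith
  by_contra hneg
  push_neg at hneg
  have hs : 0 < min 1 ((-L) / (2 * (Q + 1))) := by
    apply lt_min one_pos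
    apply div_pos (by linarith) (by linarith)
  have h := key _ hs (min_le_left _ _)
  have h2 : min 1 ((-L) / (2 * (Q + 1))) ≤ (-L) / (2 * (Q + 1)) := min_le_right _ _
  have h3 : min 1 ((-L) / (2 * (Q + 1))) * Q ≤ ((-L) / (2 * (Q + 1))) * Q :=
    mul_le_mul_of_nonneg_right h2 hQ
  have h4 : ((-L) / (2 * (Q + 1))) * Q < -L := by
    rw [div_mul_eq_mul_div, div_lt_iff₀ (by linarith)]
    nlinarith
  linarith
/-- Uniqueness of the θ-component of minimizers. -/
lemma theta_uniq {y : Fin n → ℝ} {ξ0 ξ1 : Fin p → ℝ} {θ0 θ1 : Fin n → ℝ}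
    (hfeas0 : A.mulVec ξ0 + B.mulVec θ0 ≤ c)
    (hmin0 : ∀ ξ θ, A.mulVec ξ + B.mulVec θ ≤ c →
        (1 / 2) * (∑ j, (θ0 j - y j) ^ 2) + d ⬝ᵥ ξ0
          ≤ (1 / 2) * (∑ j, (θ j - y j) ^ 2) + d ⬝ᵥ ξ)
    (hfeas1 : A.mulVec ξ1 + B.mulVec θ1 ≤ c)
    (hmin1 : ∀ ξ θ, A.mulVec ξ + B.mulVec θ ≤ c →
        (1 / 2) * (∑ j, (θ1 j - y j) ^ 2) + d ⬝ᵥ ξ1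
          ≤ (1 / 2) * (∑ j, (θ j - y j) ^ 2) + d ⬝ᵥ ξ) :
    θ1 = θ0 := by
  have b1 := vi_nec A B c d hfeas0 hmin0 ξ1 θ1 hfeas1
  have b2 := vi_nec A B c d hfeas1 hmin1 ξ0 θ0 hfeas0
  have key : (∑ j, (θ1 j - θ0 j)^2) ≤ 0 := by
    have e : (∑ j, (θ0 j - y j) * (θ1 j - θ0 j)) + (∑ j, (θ1 j - y j) * (θ0 j - θ1 j))
        = -(∑ j, (θ1 j - θ0 j)^2) := by
      rw [← Finset.sum_add_distrib, ← Finset.sum_neg_distrib]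
      exact Finset.sum_congr rfl fun j _ => by ring
    nlinarith [b1, b2]
  have hz : ∀ j ∈ Finset.univ, (θ1 j - θ0 j)^2 = 0 := by
    intro j hj
    have hnn : ∀ j ∈ (Finset.univ : Finset (Fin n)), 0 ≤ (θ1 j - θ0 j)^2 :=
      fun j _ => sq_nonneg _
    have := (Finset.sum_eq_zero_iff_of_nonneg hnn).mp (le_antisymm key (Finset.sum_nonneg hnn))
    exact this j hj
  funext j
  have := hz j (Finset.mem_univ j)
  have := pow_eq_zero_iff (n := 2) (by norm_num) |>.mp this
  linarith [sub_eq_zero.mp this]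

/-- Monotonicity of the solution map. -/
lemma mono_ineq {θhat : (Fin n → ℝ) → (Fin n → ℝ)} {ξhat : (Fin n → ℝ) → (Fin p → ℝ)}
    (hmin : ∀ y, A.mulVec (ξhat y) + B.mulVec (θhat y) ≤ c ∧
      ∀ ξ θ, A.mulVec ξ + B.mulVec θ ≤ c →
        (1 / 2) * (∑ j, (θhat y j - y j) ^ 2) + d ⬝ᵥ ξhat y
          ≤ (1 / 2) * (∑ j, (θ j - y j) ^ 2) + d ⬝ᵥ ξ)
    (y y' : Fin n → ℝ) :
    (∑ j, (θhat y j - θhat y' j)^2) ≤ ∑ j, (θhat y j - θhat y' j) * (y j - y' j) := by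
  have b1 := vi_nec A B c d (hmin y).1 (hmin y).2 (ξhat y') (θhat y') (hmin y').1
  have b2 := vi_nec A B c d (hmin y').1 (hmin y').2 (ξhat y) (θhat y) (hmin y).1
  have e : (∑ j, (θhat y j - y j) * (θhat y' j - θhat y j))
      + (∑ j, (θhat y' j - y' j) * (θhat y j - θhat y' j))
      = (∑ j, (θhat y j - θhat y' j) * (y j - y' j)) - (∑ j, (θhat y j - θhat y' j)^2) := by
    rw [← Finset.sum_add_distrib, ← Finset.sum_sub_distrib]
    exact Finset.sum_congr rfl fun j _ => by ring
  nlinarith [b1, b2]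

/-- The solution map is Lipschitz. -/
lemma lip_thetahat {θhat : (Fin n → ℝ) → (Fin n → ℝ)} {ξhat : (Fin n → ℝ) → (Fin p → ℝ)}
    (hmin : ∀ y, A.mulVec (ξhat y) + B.mulVec (θhat y) ≤ c ∧
      ∀ ξ θ, A.mulVec ξ + B.mulVec θ ≤ c →
        (1 / 2) * (∑ j, (θhat y j - y j) ^ 2) + d ⬝ᵥ ξhat y
          ≤ (1 / 2) * (∑ j, (θ j - y j) ^ 2) + d ⬝ᵥ ξ) :
    LipschitzWith (n : NNReal) θhat := by
  apply LipschitzWith.of_dist_le_mul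
  intro y y'
  set a := dist (θhat y) (θhat y') with ha
  set b := dist y y' with hb
  have hb0 : 0 ≤ b := dist_nonneg
  set s := Real.sqrt (∑ j, (θhat y j - θhat y' j)^2) with hs
  have hs0 : 0 ≤ s := Real.sqrt_nonneg _
  have hssq : s^2 = ∑ j, (θhat y j - θhat y' j)^2 :=
    Real.sq_sqrt (Finset.sum_nonneg fun j _ => sq_nonneg _)
  have hcoord : ∀ j, |θhat y j - θhat y' j| ≤ s := by
    intro j
    have h1 : (θhat y j - θhat y' j)^2 ≤ s^2 := by
      rw [hssq]
      exact Finset.single_le_sum (f := fun j => (θhat y j - θhat y' j)^2)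
        (fun j _ => sq_nonneg _) (Finset.mem_univ j)
    exact abs_le_of_sq_le_sq h1 hs0
  have hsb : s ≤ n * b := by
    have key : s^2 ≤ n * s * b := by
      rw [hssq]
      calc (∑ j, (θhat y j - θhat y' j)^2)
          ≤ ∑ j, (θhat y j - θhat y' j) * (y j - y' j) := mono_ineq A B c d hmin y y'
        _ ≤ ∑ j, s * b := by
            apply Finset.sum_le_sum
            intro j _
            calc (θhat y j - θhat y' j) * (y j - y' j)
                ≤ |(θhat y j - θhat y' j) * (y j - y' j)| := le_abs_self _
              _ = |θhat y j - θhat y' j| * |y j - y' j| := abs_mul _ _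
              _ ≤ s * b := by
                  apply mul_le_mul (hcoord j) ?_ (abs_nonneg _) hs0
                  rw [← Real.dist_eq]
                  exact dist_le_pi_dist y y' j
        _ = n * s * b := by simp [Finset.sum_const, Finset.card_univ]; ring
    rcases eq_or_lt_of_le hs0 with h0 | h0
    · rw [← h0]; positivity
    · nlinarith
  rw [ha, hb]
  rcases isEmpty_or_nonempty (Fin n) with hn | hn
  · have : dist (θhat y) (θhat y') = 0 := by
      rw [dist_pi_def]
      simp
    rw [this]; positivity
  · apply (dist_pi_le_iff (by positivity)).mpr
    intro j
    calc dist (θhat y j) (θhat y' j) = |θhat y j - θhat y' j| := Real.dist_eq _ _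
      _ ≤ s := hcoord j
      _ ≤ n * b := hsb
      _ = (n : NNReal) * dist y y' := by push_cast; rw [hb]
/-- Along directions tangent to the binding constraints, θhat is locally exactly affine. -/
lemma local_line {θhat : (Fin n → ℝ) → (Fin n → ℝ)} {ξhat : (Fin n → ℝ) → (Fin p → ℝ)}
    (hmin : ∀ y, A.mulVec (ξhat y) + B.mulVec (θhat y) ≤ c ∧
      ∀ ξ θ, A.mulVec ξ + B.mulVec θ ≤ c →
        (1 / 2) * (∑ j, (θhat y j - y j) ^ 2) + d ⬝ᵥ ξhat y
          ≤ (1 / 2) * (∑ j, (θ j - y j) ^ 2) + d ⬝ᵥ ξ)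
    (y₀ : Fin n → ℝ) (u : Fin p → ℝ) (v : Fin n → ℝ)
    (hu : ∀ i, A i ⬝ᵥ ξhat y₀ + B i ⬝ᵥ θhat y₀ = c i → A i ⬝ᵥ u + B i ⬝ᵥ v = 0) :
    ∃ t₀ : ℝ, 0 < t₀ ∧ ∀ t : ℝ, |t| ≤ t₀ → θhat (y₀ + t • v) = θhat y₀ + t • v := by
  classical
  have mv : ∀ {k : ℕ} (M : Matrix (Fin m) (Fin k) ℝ) (x : Fin k → ℝ) (i : Fin m),
      M.mulVec x i = M i ⬝ᵥ x := fun M x i => rfl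
  set slack : Fin m → ℝ := fun i => c i - (A i ⬝ᵥ ξhat y₀ + B i ⬝ᵥ θhat y₀) with hslackdef
  set g : Fin m → ℝ := fun i => A i ⬝ᵥ u + B i ⬝ᵥ v with hgdef
  have hslack : ∀ i, 0 ≤ slack i := by
    intro i
    have h := (hmin y₀).1 i
    simp only [Pi.add_apply, mv] at h
    simp only [hslackdef]
    linarith
  have hg : ∀ i, slack i = 0 → g i = 0 := by
    intro i hi
    apply hu
    simp only [hslackdef] at hi
    linarith
  set r : Fin m → ℝ := fun i => if slack i = 0 then (1:ℝ) else slack i / (|g i| + 1) with hrdef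
  have hr : ∀ i, 0 < r i := by
    intro i
    simp only [hrdef]
    split
    · norm_num
    · rename_i h
      have := lt_of_le_of_ne (hslack i) (Ne.symm h)
      positivity
  set t₀ : ℝ := (insert (1:ℝ) (Finset.image r Finset.univ)).min'
    ⟨1, Finset.mem_insert_self _ _⟩ with ht₀def
  have ht₀pos : 0 < t₀ := by
    rw [ht₀def]; refine (Finset.lt_min'_iff _ _).mpr ?_
    intro b hb
    rcases Finset.mem_insert.mp hb with h | h
    · rw [h]; norm_num
    · obtain ⟨i, _, rfl⟩ := Finset.mem_image.mp h
      exact hr i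
  have ht₀r : ∀ i, t₀ ≤ r i := fun i => Finset.min'_le _ _
    (Finset.mem_insert_of_mem (Finset.mem_image_of_mem r (Finset.mem_univ i)))
  have feas : ∀ t : ℝ, |t| ≤ t₀ →
      A.mulVec (ξhat y₀ + t • u) + B.mulVec (θhat y₀ + t • v) ≤ c := by
    intro t ht i
    have habs : 0 ≤ |t| := abs_nonneg t
    have key : t * g i ≤ slack i := by
      by_cases hsl : slack i = 0
      · rw [hsl, hg i hsl, mul_zero]
      · have hslpos : 0 < slack i := lt_of_le_of_ne (hslack i) (Ne.symm hsl)
        calc t * g i ≤ |t * g i| := le_abs_self _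
          _ = |t| * |g i| := abs_mul _ _
          _ ≤ t₀ * |g i| := mul_le_mul_of_nonneg_right ht (abs_nonneg _)
          _ ≤ r i * |g i| := mul_le_mul_of_nonneg_right (ht₀r i) (abs_nonneg _)
          _ = slack i / (|g i| + 1) * |g i| := by rw [hrdef]; simp [hsl]
          _ ≤ slack i := by
              rw [div_mul_eq_mul_div, div_le_iff₀ (by positivity)]
              nlinarith [abs_nonneg (g i)]
    simp only [Pi.add_apply, Matrix.mulVec_add, Matrix.mulVec_smul, Pi.smul_apply,
      smul_eq_mul, mv]
    simp only [hgdef, hslackdef] at key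
    linarith
  have hb : ∀ t : ℝ, |t| ≤ t₀ →
      0 ≤ t * ((∑ j, (θhat y₀ j - y₀ j) * v j) + d ⬝ᵥ u) := by
    intro t ht
    have h := vi_nec A B c d (hmin y₀).1 (hmin y₀).2 _ _ (feas t ht)
    have e1 : (∑ j, (θhat y₀ j - y₀ j) * ((θhat y₀ + t • v) j - θhat y₀ j))
        = t * (∑ j, (θhat y₀ j - y₀ j) * v j) := by
      rw [Finset.mul_sum]
      exact Finset.sum_congr rfl fun j _ => by
        simp only [Pi.add_apply, Pi.smul_apply, smul_eq_mul]; ring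
    have e2 : d ⬝ᵥ (ξhat y₀ + t • u) - d ⬝ᵥ ξhat y₀ = t * (d ⬝ᵥ u) := by
      simp only [dotProduct_add, dotProduct_smul, smul_eq_mul]
      ring
    rw [e1, e2] at h
    linarith
  have hE : (∑ j, (θhat y₀ j - y₀ j) * v j) + d ⬝ᵥ u = 0 := by
    have h1 := hb t₀ (by rw [abs_of_pos ht₀pos])
    have h2 := hb (-t₀) (by rw [abs_neg, abs_of_pos ht₀pos])
    nlinarith
  refine ⟨t₀, ht₀pos, fun t ht => ?_⟩
  symm
  apply theta_uniq A B c d (hmin (y₀ + t • v)).1 (hmin (y₀ + t • v)).2 (feas t ht)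
  intro ξ θ hfeas
  rw [sum_quad (y₀ + t • v) (θhat y₀ + t • v) θ]
  have e0 : (∑ j, ((θhat y₀ + t • v) j - (y₀ + t • v) j)^2) = ∑ j, (θhat y₀ j - y₀ j)^2 := by
    exact Finset.sum_congr rfl fun j _ => by
      simp only [Pi.add_apply, Pi.smul_apply, smul_eq_mul]; ring
  have e1 : (∑ j, ((θhat y₀ + t • v) j - (y₀ + t • v) j) * (θ j - (θhat y₀ + t • v) j))
      = (∑ j, (θhat y₀ j - y₀ j) * (θ j - θhat y₀ j))
        - t * (∑ j, (θhat y₀ j - y₀ j) * v j) := by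
    rw [Finset.mul_sum, ← Finset.sum_sub_distrib]
    exact Finset.sum_congr rfl fun j _ => by
      simp only [Pi.add_apply, Pi.smul_apply, smul_eq_mul]; ring
  have e2 : d ⬝ᵥ (ξhat y₀ + t • u) = d ⬝ᵥ ξhat y₀ + t * (d ⬝ᵥ u) := by
    simp only [dotProduct_add, dotProduct_smul, smul_eq_mul]
  have hvi := vi_nec A B c d (hmin y₀).1 (hmin y₀).2 ξ θ hfeas
  have hsq : 0 ≤ (1/2) * (∑ j, (θ j - (θhat y₀ + t • v) j)^2) := by positivity
  have htE : t * ((∑ j, (θhat y₀ j - y₀ j) * v j) + d ⬝ᵥ u) = 0 := by rw [hE]; ring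
  rw [e1, e2]
  nlinarith [hvi, hsq, htE]

end Alg

section LinAlg
variable {m p n : ℕ}

lemma append_dot (a : Fin p → ℝ) (b : Fin n → ℝ) (x : Fin (p+n) → ℝ) :
    Fin.append a b ⬝ᵥ x
      = a ⬝ᵥ (fun j => x (Fin.castAdd n j)) + b ⬝ᵥ (fun j => x (Fin.natAdd p j)) := by
  simp only [dotProduct]
  rw [Fin.sum_univ_add (f := fun i => Fin.append a b i * x i)]
  simp [Fin.append_left, Fin.append_right]

lemma span_dot_zero {ι : Type*} (r : ι → (Fin (p+n) → ℝ)) (x : Fin (p+n) → ℝ)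
    (hx : ∀ i, r i ⬝ᵥ x = 0) {w : Fin (p+n) → ℝ}
    (hw : w ∈ Submodule.span ℝ (Set.range r)) : w ⬝ᵥ x = 0 := by
  induction hw using Submodule.span_induction with
  | mem w hw => obtain ⟨i, rfl⟩ := hw; exact hx i
  | zero => simp
  | add a b _ _ ha hb => rw [add_dotProduct, ha, hb, add_zero]
  | smul t a _ ha => rw [smul_dotProduct, ha, smul_zero]

/-- Dimension of the θ-section of the kernel of the binding rows. -/
lemma finrank_T (A : Matrix (Fin m) (Fin p) ℝ) (B : Matrix (Fin m) (Fin n) ℝ)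
    (I : Finset (Fin m))
    (hli : LinearIndependent ℝ (fun i : I => Fin.append (A i.1) (B i.1))) :
    (finrank ℝ ((LinearMap.ker
        (Matrix.mulVecLin (Matrix.of (fun i : I => Fin.append (A i.1) (B i.1))))).map
        (LinearMap.funLeft ℝ ℝ (Fin.natAdd p)) : Submodule ℝ (Fin n → ℝ)) : ℝ)
      = (n : ℝ) - (I.card : ℝ)
        + (Matrix.rank (A.submatrix (fun i : I => (i : Fin m)) id) : ℝ) := by
  classical
  set R : Matrix I (Fin (p+n)) ℝ := Matrix.of (fun i : I => Fin.append (A i.1) (B i.1)) with hR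
  set AI : Matrix I (Fin p) ℝ := A.submatrix (fun i : I => (i : Fin m)) id with hAI
  set π : (Fin (p+n) → ℝ) →ₗ[ℝ] (Fin n → ℝ) := LinearMap.funLeft ℝ ℝ (Fin.natAdd p) with hπ
  set K : Submodule ℝ (Fin (p+n) → ℝ) := LinearMap.ker R.mulVecLin with hK
  set T : Submodule ℝ (Fin n → ℝ) := K.map π with hT
  -- E1 : finrank K + I.card = p + n
  have hrankR : R.rank = I.card := by
    rw [← Matrix.rank_transpose, Matrix.rank_eq_finrank_span_cols]
    exact (finrank_span_eq_card hli).trans (Fintype.card_coe I)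
  have E1 : finrank ℝ K + I.card = p + n := by
    have h := LinearMap.finrank_range_add_finrank_ker R.mulVecLin
    rw [Module.finrank_pi, Fintype.card_fin] at h
    have h2 : finrank ℝ (LinearMap.range R.mulVecLin) = I.card := by
      rw [← hrankR]; rfl
    show finrank ℝ (LinearMap.ker R.mulVecLin) + I.card = p + n
    omega
  -- E2 : finrank T + finrank (K ⊓ ker π) = finrank K
  have E2 : finrank ℝ T + finrank ℝ (K ⊓ LinearMap.ker π : Submodule ℝ (Fin (p+n) → ℝ))
      = finrank ℝ K := by
    have h := LinearMap.finrank_range_add_finrank_ker (π.domRestrict K)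
    rw [LinearMap.range_domRestrict, LinearMap.ker_domRestrict] at h
    have h2 : finrank ℝ ((LinearMap.ker π).comap K.subtype)
        = finrank ℝ (K ⊓ LinearMap.ker π : Submodule ℝ (Fin (p+n) → ℝ)) := by
      rw [← Submodule.map_comap_subtype]
      exact (Submodule.equivMapOfInjective K.subtype (Submodule.injective_subtype K)
        _).finrank_eq
    rw [h2] at h
    exact h
  -- E3 : finrank (K ⊓ ker π) = finrank (ker AI.mulVecLin)
  have E3 : finrank ℝ (K ⊓ LinearMap.ker π : Submodule ℝ (Fin (p+n) → ℝ))
      = finrank ℝ (LinearMap.ker AI.mulVecLin) := by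
    set N : Submodule ℝ (Fin (p+n) → ℝ) := K ⊓ LinearMap.ker π with hN
    set lcast : (Fin (p+n) → ℝ) →ₗ[ℝ] (Fin p → ℝ) := LinearMap.funLeft ℝ ℝ (Fin.castAdd n)
      with hlcast
    have hmem : ∀ x : N, lcast x.1 ∈ LinearMap.ker AI.mulVecLin := by
      rintro ⟨x, hx⟩
      have hxK : x ∈ K := (Submodule.mem_inf.mp hx).1
      have hxπ : x ∈ LinearMap.ker π := (Submodule.mem_inf.mp hx).2
      have hright : ∀ j, x (Fin.natAdd p j) = 0 := by
        intro j
        exact congrFun (LinearMap.mem_ker.mp hxπ) j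
      rw [LinearMap.mem_ker]
      funext i
      have hrow : Fin.append (A i.1) (B i.1) ⬝ᵥ x = 0 := congrFun (LinearMap.mem_ker.mp hxK) i
      have hsplit := append_dot (A i.1) (B i.1) x
      have hzero : (B i.1) ⬝ᵥ (fun j => x (Fin.natAdd p j)) = 0 := by
        simp only [dotProduct]
        exact Finset.sum_eq_zero fun j _ => by rw [hright j, mul_zero]
      rw [hsplit, hzero, add_zero] at hrow
      simpa [Matrix.mulVecLin_apply, Matrix.mulVec, hAI, Matrix.submatrix_apply,
        dotProduct, hlcast, LinearMap.funLeft_apply] using hrow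
    let φ : N →ₗ[ℝ] LinearMap.ker AI.mulVecLin :=
      LinearMap.codRestrict _ (lcast.comp N.subtype) hmem
    have hinj : Function.Injective φ := by
      intro x y hxy
      apply Subtype.ext
      funext k
      refine Fin.addCases (fun j => ?_) (fun j => ?_) k
      · have := congrFun (congrArg Subtype.val hxy) j
        simpa [φ, hlcast, LinearMap.funLeft_apply] using this
      · have hx := congrFun (LinearMap.mem_ker.mp x.2.2) j
        have hy := congrFun (LinearMap.mem_ker.mp y.2.2) j
        simp only [hπ, LinearMap.funLeft_apply, Pi.zero_apply] at hx hy
        rw [hx, hy]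
    have hsurj : Function.Surjective φ := by
      rintro ⟨u, hu⟩
      have humem : Fin.append u 0 ∈ N := by
        refine Submodule.mem_inf.mpr ⟨?_, ?_⟩
        · rw [hK, LinearMap.mem_ker]
          funext i
          have h0 : AI.mulVecLin u i = 0 := by rw [LinearMap.mem_ker.mp hu]; rfl
          have hsplit := append_dot (A i.1) (B i.1) (Fin.append u 0)
          have hleft : (fun j => Fin.append u (0 : Fin n → ℝ) (Fin.castAdd n j)) = u := by
            funext j; exact Fin.append_left u 0 j
          have hrightv : (fun j => Fin.append u (0 : Fin n → ℝ) (Fin.natAdd p j))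
              = (0 : Fin n → ℝ) := by
            funext j; exact Fin.append_right u 0 j
          simp only [Matrix.mulVecLin_apply] at h0 ⊢
          show R i ⬝ᵥ Fin.append u 0 = 0
          rw [show R i = Fin.append (A i.1) (B i.1) from rfl, hsplit, hleft, hrightv,
            dotProduct_zero, add_zero]
          simpa [hAI, Matrix.mulVec, Matrix.submatrix_apply, dotProduct] using h0
        · rw [LinearMap.mem_ker]
          funext j
          simp only [hπ, LinearMap.funLeft_apply]
          exact Fin.append_right u 0 j
      refine ⟨⟨Fin.append u 0, humem⟩, ?_⟩
      apply Subtype.ext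
      funext j
      simpa [φ, hlcast, LinearMap.funLeft_apply] using Fin.append_left u 0 j
    exact (LinearEquiv.ofBijective φ ⟨hinj, hsurj⟩).finrank_eq
  -- E4 : AI.rank + finrank (ker AI.mulVecLin) = p
  have E4 : AI.rank + finrank ℝ (LinearMap.ker AI.mulVecLin) = p := by
    have h := LinearMap.finrank_range_add_finrank_ker AI.mulVecLin
    rw [Module.finrank_pi, Fintype.card_fin] at h
    exact h
  -- Combine
  have hfin : finrank ℝ T + I.card + finrank ℝ (LinearMap.ker AI.mulVecLin) = p + n
      - finrank ℝ (K ⊓ LinearMap.ker π : Submodule ℝ (Fin (p+n) → ℝ))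
      + finrank ℝ (LinearMap.ker AI.mulVecLin) := by omega
  have : (finrank ℝ T : ℝ) = (n : ℝ) - (I.card : ℝ) + (AI.rank : ℝ) := by
    have c1 : (finrank ℝ K : ℝ) + (I.card : ℝ) = (p : ℝ) + n := by exact_mod_cast E1
    have c2 : (finrank ℝ T : ℝ)
        + (finrank ℝ (K ⊓ LinearMap.ker π : Submodule ℝ (Fin (p+n) → ℝ)) : ℝ)
        = (finrank ℝ K : ℝ) := by exact_mod_cast E2
    have c3 : (finrank ℝ (K ⊓ LinearMap.ker π : Submodule ℝ (Fin (p+n) → ℝ)) : ℝ)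
        = (finrank ℝ (LinearMap.ker AI.mulVecLin) : ℝ) := by exact_mod_cast E3
    have c4 : (AI.rank : ℝ) + (finrank ℝ (LinearMap.ker AI.mulVecLin) : ℝ) = (p : ℝ) := by
      exact_mod_cast E4
    linarith
  exact this

end LinAlg

section Calc
variable {n : ℕ}

/-- Trace of a projection-like continuous linear map. -/
lemma trace_proj (T : Submodule ℝ (Fin n → ℝ)) (M : (Fin n → ℝ) →L[ℝ] (Fin n → ℝ))
    (h1 : ∀ x, M x ∈ T) (h2 : ∀ x ∈ T, M x = x) :
    ∑ i, M (Pi.single i 1) i = (finrank ℝ T : ℝ) := by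
  have hp : LinearMap.IsProj T (M : (Fin n → ℝ) →ₗ[ℝ] (Fin n → ℝ)) := ⟨h1, h2⟩
  have htr := hp.trace
  rw [LinearMap.trace_eq_matrix_trace ℝ (Pi.basisFun ℝ (Fin n))] at htr
  rw [← htr, Matrix.trace]
  refine Finset.sum_congr rfl fun i _ => ?_
  simp [Matrix.diag, LinearMap.toMatrix_apply]

/-- The derivative fixes directions along which the map is locally affine. -/
lemma fderiv_fix (θhat : (Fin n → ℝ) → (Fin n → ℝ)) (y₀ v : Fin n → ℝ)
    (hdiff : DifferentiableAt ℝ θhat y₀) (t₀ : ℝ) (ht₀ : 0 < t₀)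
    (hline : ∀ t : ℝ, |t| ≤ t₀ → θhat (y₀ + t • v) = θhat y₀ + t • v) :
    fderiv ℝ θhat y₀ v = v := by
  have h1 : HasDerivAt (fun t : ℝ => y₀ + t • v) v 0 := by
    simpa using ((hasDerivAt_id (0:ℝ)).smul_const v).const_add y₀
  have hf : HasFDerivAt θhat (fderiv ℝ θhat y₀) (y₀ + (0:ℝ) • v) := by
    simpa using hdiff.hasFDerivAt
  have h2 : HasDerivAt (fun t : ℝ => θhat (y₀ + t • v)) (fderiv ℝ θhat y₀ v) 0 :=
    hf.comp_hasDerivAt 0 h1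
  have h3 : HasDerivAt (fun t : ℝ => θhat y₀ + t • v) v 0 := by
    simpa using ((hasDerivAt_id (0:ℝ)).smul_const v).const_add (θhat y₀)
  have heq : (fun t : ℝ => θhat (y₀ + t • v)) =ᶠ[nhds 0] (fun t : ℝ => θhat y₀ + t • v) := by
    filter_upwards [Metric.ball_mem_nhds (0:ℝ) ht₀] with t ht
    exact hline t (le_of_lt (by simpa [Real.dist_eq] using ht))
  have h4 : HasDerivAt (fun t : ℝ => θhat (y₀ + t • v)) v 0 :=
    h3.congr_of_eventuallyEq heq
  exact h2.unique h4

/-- From a density point, pick nearby points of `S` in the direction `v`. -/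
lemma density_pick (S : Set (Fin n → ℝ)) (y₀ : Fin n → ℝ)
    (hdens : Filter.Tendsto
      (fun r => volume (S ∩ Metric.closedBall y₀ r) / volume (Metric.closedBall y₀ r))
      (nhdsWithin 0 (Set.Ioi 0)) (nhds 1))
    (v : Fin n → ℝ) {ε δ : ℝ} (hε : 0 < ε) (hδ : 0 < δ) :
    ∃ t : ℝ, 0 < t ∧ t ≤ δ ∧ ∃ y' ∈ S, dist y' (y₀ + t • v) ≤ ε * t := by
  by_contra hcon
  push_neg at hcon
  set R := ‖v‖ + ε with hRdef
  have hRpos : 0 < R := by positivity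
  have hεR : ε / R ≤ 1 := by
    rw [div_le_one hRpos]
    have := norm_nonneg v
    linarith
  set q : ENNReal := ENNReal.ofReal ((ε / R) ^ (finrank ℝ (Fin n → ℝ))) with hq
  have hq0 : q ≠ 0 := by
    rw [hq]
    simp only [ne_eq, ENNReal.ofReal_eq_zero, not_le]
    positivity
  have key : ∀ r : ℝ, 0 < r → r ≤ δ * R →
      volume (S ∩ Metric.closedBall y₀ r) / volume (Metric.closedBall y₀ r) ≤ 1 - q := by
    intro r hr hrle
    set t := r / R with htdef
    have htpos : 0 < t := div_pos hr hRpos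
    have htle : t ≤ δ := by
      rw [htdef, div_le_iff₀ hRpos]
      linarith
    have htR : t * R = r := by rw [htdef]; field_simp
    have hdisj : S ∩ Metric.closedBall y₀ r
        ⊆ Metric.closedBall y₀ r \ Metric.closedBall (y₀ + t • v) (ε * t) := by
      rintro x ⟨hxS, hxB⟩
      refine ⟨hxB, fun hx => ?_⟩
      exact absurd (Metric.mem_closedBall.mp hx) (not_le.mpr (hcon t htpos htle x hxS))
    have hsub : Metric.closedBall (y₀ + t • v) (ε * t) ⊆ Metric.closedBall y₀ r := by
      intro x hx
      rw [Metric.mem_closedBall] at hx ⊢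
      calc dist x y₀ ≤ dist x (y₀ + t • v) + dist (y₀ + t • v) y₀ := dist_triangle _ _ _
        _ ≤ ε * t + t * ‖v‖ := by
            apply add_le_add hx
            rw [dist_eq_norm]
            simp only [add_sub_cancel_left]
            rw [norm_smul, Real.norm_eq_abs, abs_of_pos htpos]
        _ = t * R := by rw [hRdef]; ring
        _ = r := htR
    have hfin : volume (Metric.closedBall (y₀ + t • v) (ε * t)) ≠ ⊤ :=
      measure_closedBall_lt_top.ne
    have h1 : volume (S ∩ Metric.closedBall y₀ r)
        ≤ volume (Metric.closedBall y₀ r) - volume (Metric.closedBall (y₀ + t • v) (ε * t)) := by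
      calc volume (S ∩ Metric.closedBall y₀ r)
          ≤ volume (Metric.closedBall y₀ r \ Metric.closedBall (y₀ + t • v) (ε * t)) :=
            measure_mono hdisj
        _ = _ := measure_diff hsub measurableSet_closedBall.nullMeasurableSet hfin
    have hballs : volume (Metric.closedBall (y₀ + t • v) (ε * t))
        = q * volume (Metric.closedBall y₀ r) := by
      rw [Measure.addHaar_closedBall _ _ (by positivity : (0:ℝ) ≤ ε * t),
        Measure.addHaar_closedBall _ _ (le_of_lt hr), hq, ← mul_assoc,
        ← ENNReal.ofReal_mul (by positivity), ← mul_pow]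
      congr 3
      rw [div_mul_eq_mul_div, ← htR]
      field_simp
    set a := volume (Metric.closedBall y₀ r) with ha
    have ha0 : a ≠ 0 := (Metric.measure_closedBall_pos volume _ hr).ne'
    have h2 : volume (S ∩ Metric.closedBall y₀ r) ≤ (1 - q) * a := by
      rw [hballs] at h1
      calc volume (S ∩ Metric.closedBall y₀ r) ≤ a - q * a := h1
        _ = (1 - q) * a := by
            have haT : a ≠ ⊤ := measure_closedBall_lt_top.ne
            have hsm : ((1:ENNReal) - q) * a = 1 * a - q * a :=
              ENNReal.sub_mul (fun _ _ => haT)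
            rw [hsm, one_mul]
    exact ENNReal.div_le_of_le_mul h2
  have hev : ∀ᶠ r in nhdsWithin (0:ℝ) (Set.Ioi 0),
      volume (S ∩ Metric.closedBall y₀ r) / volume (Metric.closedBall y₀ r) ≤ 1 - q := by
    filter_upwards [Ioc_mem_nhdsGT_of_mem ⟨le_refl (0:ℝ), mul_pos hδ hRpos⟩] with r hr
    exact key r hr.1 hr.2
  have hle : (1 : ENNReal) ≤ 1 - q := le_of_tendsto hdens hev
  have hlt : (1 : ENNReal) - q < 1 := ENNReal.sub_lt_self ENNReal.one_ne_top one_ne_zero hq0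
  exact absurd hle (not_le.mpr hlt)

/-- The derivative maps into `T` when `θhat y' - θhat y₀ ∈ T` on a set of density one. -/
lemma fderiv_mem (θhat : (Fin n → ℝ) → (Fin n → ℝ)) (y₀ : Fin n → ℝ)
    (hdiff : DifferentiableAt ℝ θhat y₀) (T : Submodule ℝ (Fin n → ℝ))
    (S : Set (Fin n → ℝ)) (hS : ∀ y' ∈ S, θhat y' - θhat y₀ ∈ T)
    (hdens : Filter.Tendsto
      (fun r => volume (S ∩ Metric.closedBall y₀ r) / volume (Metric.closedBall y₀ r))
      (nhdsWithin 0 (Set.Ioi 0)) (nhds 1))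
    (v : Fin n → ℝ) : fderiv ℝ θhat y₀ v ∈ T := by
  set M := fderiv ℝ θhat y₀ with hM
  have hclosed : IsClosed (T : Set (Fin n → ℝ)) := Submodule.closed_of_finiteDimensional T
  have hmemclosure : M v ∈ closure (T : Set (Fin n → ℝ)) := by
    rw [Metric.mem_closure_iff]
    intro η hη
    set ε : ℝ := min 1 (η / (2 * (‖M‖ + 1))) with hε
    have hεpos : 0 < ε := lt_min one_pos (by positivity)
    have hε1 : ε ≤ 1 := min_le_left _ _
    set ε' : ℝ := η / (4 * (‖v‖ + 1)) with hε'
    have hε'pos : 0 < ε' := by positivity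
    have hlittle := hdiff.hasFDerivAt.isLittleO.def hε'pos
    rw [Metric.eventually_nhds_iff] at hlittle
    obtain ⟨δ, hδpos, hδ⟩ := hlittle
    obtain ⟨t, htpos, htδ, y', hy'S, hy'close⟩ :=
      density_pick S y₀ hdens v hεpos (show 0 < δ / (2 * (‖v‖ + 1)) by positivity)
    have hz : t⁻¹ • (θhat y' - θhat y₀) ∈ T := T.smul_mem _ (hS y' hy'S)
    refine ⟨_, hz, ?_⟩
    have hyy₀ : ‖y' - y₀‖ ≤ t * (‖v‖ + 1) := by
      calc ‖y' - y₀‖ = ‖(y' - (y₀ + t • v)) + t • v‖ := by congr 1; abel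
        _ ≤ ‖y' - (y₀ + t • v)‖ + ‖t • v‖ := norm_add_le _ _
        _ ≤ ε * t + t * ‖v‖ := by
            apply add_le_add
            · rw [← dist_eq_norm]; exact hy'close
            · rw [norm_smul, Real.norm_eq_abs, abs_of_pos htpos]
        _ ≤ t * (‖v‖ + 1) := by nlinarith
    have hyδ : dist y' y₀ < δ := by
      rw [dist_eq_norm]
      calc ‖y' - y₀‖ ≤ t * (‖v‖ + 1) := hyy₀
        _ ≤ (δ / (2 * (‖v‖ + 1))) * (‖v‖ + 1) := by
            apply mul_le_mul_of_nonneg_right htδ (by positivity)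
        _ < δ := by
            have h0 : (0:ℝ) < ‖v‖ + 1 := by positivity
            have heq : (δ / (2 * (‖v‖ + 1))) * (‖v‖ + 1) = δ / 2 := by
              field_simp
            rw [heq]
            linarith
    have hbound := hδ hyδ
    -- ‖θhat y' - θhat y₀ - M (y' - y₀)‖ ≤ ε' * ‖y' - y₀‖
    have hMdiff : ‖M (t • v) - M (y' - y₀)‖ ≤ ‖M‖ * (ε * t) := by
      rw [← map_sub]
      calc ‖M (t • v - (y' - y₀))‖ ≤ ‖M‖ * ‖t • v - (y' - y₀)‖ := M.le_opNorm _
        _ ≤ ‖M‖ * (ε * t) := by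
            apply mul_le_mul_of_nonneg_left _ (norm_nonneg M)
            calc ‖t • v - (y' - y₀)‖ = dist y' (y₀ + t • v) := by
                  rw [dist_eq_norm, ← norm_neg]; congr 1; abel
              _ ≤ ε * t := hy'close
    have hterm : dist (M v) (t⁻¹ • (θhat y' - θhat y₀)) ≤ 3 / 4 * η := by
      rw [dist_eq_norm]
      have hMv : t⁻¹ • M (t • v) = M v := by
        rw [M.map_smul, smul_smul, inv_mul_cancel₀ htpos.ne', one_smul]
      have hrw : M v - t⁻¹ • (θhat y' - θhat y₀)
          = t⁻¹ • (M (t • v) - (θhat y' - θhat y₀)) := by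
        simp only [smul_sub]
        rw [← hMv]
      rw [hrw, norm_smul, Real.norm_eq_abs, abs_of_pos (inv_pos.mpr htpos)]
      have hsplit : ‖M (t • v) - (θhat y' - θhat y₀)‖
          ≤ ‖M (t • v) - M (y' - y₀)‖ + ‖θhat y' - θhat y₀ - M (y' - y₀)‖ := by
        calc ‖M (t • v) - (θhat y' - θhat y₀)‖
            = ‖(M (t • v) - M (y' - y₀)) - ((θhat y' - θhat y₀) - M (y' - y₀))‖ := by
              congr 1; abel
          _ ≤ _ := norm_sub_le _ _
      have hb1 : ‖M (t • v) - M (y' - y₀)‖ ≤ t * (η / 2) := by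
        calc ‖M (t • v) - M (y' - y₀)‖ ≤ ‖M‖ * (ε * t) := hMdiff
          _ ≤ (‖M‖ + 1) * (ε * t) := by nlinarith [norm_nonneg M, mul_pos hεpos htpos]
          _ ≤ (‖M‖ + 1) * ((η / (2 * (‖M‖ + 1))) * t) := by
              apply mul_le_mul_of_nonneg_left _ (by positivity)
              exact mul_le_mul_of_nonneg_right (min_le_right _ _) htpos.le
          _ = t * (η / 2) := by field_simp
      have hb2 : ‖θhat y' - θhat y₀ - M (y' - y₀)‖ ≤ t * (η / 4) := by
        calc ‖θhat y' - θhat y₀ - M (y' - y₀)‖ ≤ ε' * ‖y' - y₀‖ := hbound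
          _ ≤ ε' * (t * (‖v‖ + 1)) := mul_le_mul_of_nonneg_left hyy₀ hε'pos.le
          _ = t * (η / 4) := by rw [hε']; field_simp
      calc t⁻¹ * ‖M (t • v) - (θhat y' - θhat y₀)‖
          ≤ t⁻¹ * (t * (η / 2) + t * (η / 4)) := by
            apply mul_le_mul_of_nonneg_left _ (inv_pos.mpr htpos).le
            calc ‖M (t • v) - (θhat y' - θhat y₀)‖
                ≤ ‖M (t • v) - M (y' - y₀)‖ + ‖θhat y' - θhat y₀ - M (y' - y₀)‖ := hsplit
              _ ≤ t * (η / 2) + t * (η / 4) := add_le_add hb1 hb2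
        _ = 3 / 4 * η := by field_simp; ring
    calc dist (M v) (t⁻¹ • (θhat y' - θhat y₀)) ≤ 3 / 4 * η := hterm
      _ < η := by linarith
  rwa [hclosed.closure_eq] at hmemclosure

end Calc

/-- Null sets from restricted a.e. statements (no measurability needed). -/
lemma null_of_restrict {α : Type*} [MeasurableSpace α] (μ : MeasureTheory.Measure α)
    (s t : Set α) (h : μ.restrict s t = 0) : μ (t ∩ s) = 0 := by
  have h1 : μ.restrict s (MeasureTheory.toMeasurable (μ.restrict s) t) = 0 := by
    rwa [MeasureTheory.measure_toMeasurable]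
  rw [MeasureTheory.Measure.restrict_apply
    (MeasureTheory.measurableSet_toMeasurable _ _)] at h1
  exact MeasureTheory.measure_mono_null
    (Set.inter_subset_inter_left _ (MeasureTheory.subset_toMeasurable _ _)) h1

open Matrix MeasureTheory

/-- The divergence of a map `ℝⁿ → ℝⁿ` at `y`: the trace of its derivative,
`∑ i, ∂fᵢ/∂yᵢ (y)`. -/
noncomputable def divg {n : ℕ} (f : (Fin n → ℝ) → (Fin n → ℝ)) (y : Fin n → ℝ) : ℝ :=
  ∑ i, fderiv ℝ f y (Pi.single i 1) i

/-- Linearly perturbed partial projection onto a polyhedron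
`Q = {(ξ,θ) : Aξ + Bθ ≤ c}` with `−d = Aᵀλ₀`, `λ₀ ≥ 0`: (i) the θ-component of any
minimizer of `(1/2)‖θ − y‖₂² + dᵀξ` over `Q` is unique; (ii) for almost every `y`, `θ̂`
is differentiable at `y` and, for any `I_y ⊆ J_y` indexing a maximal linearly
independent subset of the binding rows `[a_iᵀ, b_iᵀ]`, the divergence equals
`n − |I_y| + rank(A_{I_y})`. -/
theorem divergence_linearly_perturbed_partial_projection {m p n : ℕ}
    (A : Matrix (Fin m) (Fin p) ℝ) (B : Matrix (Fin m) (Fin n) ℝ)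
    (c : Fin m → ℝ) (d : Fin p → ℝ)
    (hQ : ∃ ξ : Fin p → ℝ, ∃ θ : Fin n → ℝ, A.mulVec ξ + B.mulVec θ ≤ c)
    (hd : ∃ lam₀ : Fin m → ℝ, 0 ≤ lam₀ ∧ Aᵀ.mulVec lam₀ = -d)
    (θhat : (Fin n → ℝ) → (Fin n → ℝ)) (ξhat : (Fin n → ℝ) → (Fin p → ℝ))
    (hmin : ∀ y, A.mulVec (ξhat y) + B.mulVec (θhat y) ≤ c ∧
      ∀ ξ θ, A.mulVec ξ + B.mulVec θ ≤ c →
        (1 / 2) * (∑ j, (θhat y j - y j) ^ 2) + d ⬝ᵥ ξhat y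
          ≤ (1 / 2) * (∑ j, (θ j - y j) ^ 2) + d ⬝ᵥ ξ) :
    (∀ y, ∀ ξ' : Fin p → ℝ, ∀ θ' : Fin n → ℝ,
      (A.mulVec ξ' + B.mulVec θ' ≤ c ∧
        ∀ ξ θ, A.mulVec ξ + B.mulVec θ ≤ c →
          (1 / 2) * (∑ j, (θ' j - y j) ^ 2) + d ⬝ᵥ ξ'
            ≤ (1 / 2) * (∑ j, (θ j - y j) ^ 2) + d ⬝ᵥ ξ) → θ' = θhat y) ∧
    (∀ᵐ y ∂(volume : Measure (Fin n → ℝ)), DifferentiableAt ℝ θhat y ∧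
      ∀ I : Finset (Fin m),
        (↑I : Set (Fin m)) ⊆ {i | A i ⬝ᵥ ξhat y + B i ⬝ᵥ θhat y = c i} →
        LinearIndependent ℝ (fun i : I => Fin.append (A i.1) (B i.1)) →
        (∀ j ∈ {i : Fin m | A i ⬝ᵥ ξhat y + B i ⬝ᵥ θhat y = c i},
          Fin.append (A j) (B j) ∈
            Submodule.span ℝ (Set.range (fun i : I => Fin.append (A i.1) (B i.1)))) →
        divg θhat y = (n : ℝ) - (I.card : ℝ)
          + (Matrix.rank (A.submatrix (fun i : I => (i : Fin m)) id) : ℝ)) := by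
  classical
  constructor
  · rintro y ξ' θ' ⟨hf, hm⟩
    exact theta_uniq A B c d (hmin y).1 (hmin y).2 hf hm
  · -- the binding pattern of a point
    set bset : (Fin n → ℝ) → Finset (Fin m) := fun y =>
      Finset.univ.filter (fun i => A i ⬝ᵥ ξhat y + B i ⬝ᵥ θhat y = c i) with hbset
    set SZ : Finset (Fin m) → Set (Fin n → ℝ) := fun Z => {y | bset y = Z} with hSZ
    have hbadall : volume (⋃ Z : Finset (Fin m),
        ({y | ¬ Filter.Tendsto
            (fun r => volume (SZ Z ∩ Metric.closedBall y r) / volume (Metric.closedBall y r))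
            (nhdsWithin 0 (Set.Ioi 0)) (nhds 1)} ∩ SZ Z)) = 0 := by
      apply measure_iUnion_null
      intro Z
      apply null_of_restrict
      exact ae_iff.mp (Besicovitch.ae_tendsto_measure_inter_div volume (SZ Z))
    have hlip := lip_thetahat A B c d hmin
    filter_upwards [hlip.ae_differentiableAt, (measure_eq_zero_iff_ae_notMem.mp hbadall)]
      with y₀ hdiff hnb
    refine ⟨hdiff, ?_⟩
    intro I hIsub hli hspan
    have hy₀mem : y₀ ∈ SZ (bset y₀) := rfl
    have hdens : Filter.Tendsto
        (fun r => volume (SZ (bset y₀) ∩ Metric.closedBall y₀ r)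
          / volume (Metric.closedBall y₀ r)) (nhdsWithin 0 (Set.Ioi 0)) (nhds 1) := by
      by_contra h
      exact hnb (Set.mem_iUnion.mpr ⟨bset y₀, ⟨h, hy₀mem⟩⟩)
    set K : Submodule ℝ (Fin (p+n) → ℝ) := LinearMap.ker
      (Matrix.mulVecLin (Matrix.of (fun i : I => Fin.append (A i.1) (B i.1)))) with hK
    set π : (Fin (p+n) → ℝ) →ₗ[ℝ] (Fin n → ℝ) := LinearMap.funLeft ℝ ℝ (Fin.natAdd p) with hπ
    set T : Submodule ℝ (Fin n → ℝ) := K.map π with hT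
    have h2 : ∀ v ∈ T, fderiv ℝ θhat y₀ v = v := by
      rintro v ⟨x, hxK, rfl⟩
      have hu : ∀ i, A i ⬝ᵥ ξhat y₀ + B i ⬝ᵥ θhat y₀ = c i →
          A i ⬝ᵥ (fun j => x (Fin.castAdd n j)) + B i ⬝ᵥ (π x) = 0 := by
        intro i hi
        have hx : ∀ i' : I, Fin.append (A i'.1) (B i'.1) ⬝ᵥ x = 0 := fun i' =>
          congrFun (LinearMap.mem_ker.mp hxK) i'
        have hsp := hspan i hi
        have hzero := span_dot_zero (fun i' : I => Fin.append (A i'.1) (B i'.1)) x hx hsp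
        rw [append_dot] at hzero
        exact hzero
      obtain ⟨t₀, ht₀, hline⟩ := local_line A B c d hmin y₀ _ (π x) hu
      exact fderiv_fix θhat y₀ (π x) hdiff t₀ ht₀ hline
    have h1 : ∀ w, fderiv ℝ θhat y₀ w ∈ T := by
      intro w
      apply fderiv_mem θhat y₀ hdiff T (SZ (bset y₀)) ?_ hdens w
      intro y' hy'
      have hbeq : bset y' = bset y₀ := hy'
      refine ⟨Fin.append (ξhat y' - ξhat y₀) (θhat y' - θhat y₀), ?_, ?_⟩
      · rw [SetLike.mem_coe, hK, LinearMap.mem_ker]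
        funext i
        have hb₀ : A i.1 ⬝ᵥ ξhat y₀ + B i.1 ⬝ᵥ θhat y₀ = c i.1 := hIsub i.2
        have hiZ : i.1 ∈ bset y' := by
          rw [hbeq, hbset]
          exact Finset.mem_filter.mpr ⟨Finset.mem_univ _, hb₀⟩
        have hb' : A i.1 ⬝ᵥ ξhat y' + B i.1 ⬝ᵥ θhat y' = c i.1 := by
          rw [hbset] at hiZ
          exact (Finset.mem_filter.mp hiZ).2
        show Fin.append (A i.1) (B i.1) ⬝ᵥ Fin.append (ξhat y' - ξhat y₀) (θhat y' - θhat y₀)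
          = 0
        rw [append_dot]
        have hl : (fun j => Fin.append (ξhat y' - ξhat y₀) (θhat y' - θhat y₀)
            (Fin.castAdd n j)) = ξhat y' - ξhat y₀ := by
          funext j; exact Fin.append_left _ _ j
        have hr : (fun j => Fin.append (ξhat y' - ξhat y₀) (θhat y' - θhat y₀)
            (Fin.natAdd p j)) = θhat y' - θhat y₀ := by
          funext j; exact Fin.append_right _ _ j
        rw [hl, hr, dotProduct_sub, dotProduct_sub]
        linarith
      · funext j
        simp only [hπ, LinearMap.funLeft_apply]
        exact Fin.append_right _ _ j
    have htrace := trace_proj T (fderiv ℝ θhat y₀) h1 h2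
    show (∑ i, fderiv ℝ θhat y₀ (Pi.single i 1) i) = _
    rw [htrace]
    exact finrank_T A B I hli
end

section
/- Let Q = {(ξ,θ) ∈ ℝ^{p+n} : Aξ + Bθ ≤ c} be a nonempty polyhedron and d ∈ ℝᵖ satisfy −d = Aᵀλ₀ for some λ₀ ≥ 0. For z ∈ ℝⁿ, let (θ̂(z), ξ̂(z)) minimize (1/2)‖θ − z‖₂² + dᵀξ over Q. Then for Lebesgue-almost every y ∈ ℝⁿ the following holds: with J_y = {1 ≤ i ≤ m : ⟨a_i, ξ̂(y)⟩ + ⟨b_i, θ̂(y)⟩ = c_i}, there is an open neighborhood U of y such that for every z ∈ U, θ̂(z) equals the θ-component θ̃(z) of a minimizer of (1/2)‖θ − z‖₂² + dᵀξ over the affine set {(ξ,θ) ∈ ℝ^{p+n} : A_{J_y} ξ + B_{J_y} θ = c_{J_y}}. -/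
open Matrix MeasureTheory
open scoped InnerProductSpace

section FarkasAux

variable {ι : Type} [Fintype ι] {H : Type} [NormedAddCommGroup H]
  [InnerProductSpace ℝ H] [FiniteDimensional ℝ H]

/-- Carathéodory-type reduction for conic combinations. -/
lemma cara_cone (v : ι → H) :
    ∀ (N : ℕ) (lam : ι → ℝ), (Finset.univ.filter fun i => lam i ≠ 0).card ≤ N →
      (∀ i, 0 ≤ lam i) →
      ∃ lam' : ι → ℝ, (∀ i, 0 ≤ lam' i) ∧ (∑ i, lam' i • v i = ∑ i, lam i • v i) ∧
        LinearIndependent ℝ (fun i : {i // lam' i ≠ 0} => v (i : ι)) := by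
  classical
  intro N
  induction N with
  | zero =>
    intro lam hcard hlam
    have hz : ∀ i, lam i = 0 := by
      intro i
      by_contra hi
      have : i ∈ Finset.univ.filter fun i => lam i ≠ 0 := by simp [hi]
      have := Finset.card_pos.mpr ⟨i, this⟩
      omega
    refine ⟨fun _ => 0, fun _ => le_refl _, by simp [hz], ?_⟩
    apply Fintype.linearIndependent_iff.mpr
    intro g _ i
    exact absurd rfl i.2
  | succ N ih =>
    intro lam hcard hlam
    by_cases hind : LinearIndependent ℝ (fun i : {i // lam i ≠ 0} => v (i : ι))
    · exact ⟨lam, hlam, rfl, hind⟩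
    obtain ⟨g, hgsum, ⟨i₁, hi₁⟩⟩ := Fintype.not_linearIndependent_iff.mp hind
    set G : ι → ℝ := fun i => if h : lam i ≠ 0 then g ⟨i, h⟩ else 0 with hG
    have hGsum : ∑ i, G i • v i = 0 := by
      have h1 : ∑ i ∈ Finset.univ.filter (fun i => lam i ≠ 0), G i • v i
          = ∑ i, G i • v i := by
        apply Finset.sum_subset (Finset.subset_univ _)
        intro i _ hi
        simp only [Finset.mem_filter, Finset.mem_univ, true_and] at hi
        push_neg at hi
        simp [hG, hi]
      have h2 : ∑ i ∈ Finset.univ.filter (fun i => lam i ≠ 0), G i • v i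
          = ∑ i : {i // lam i ≠ 0}, g i • v (i : ι) := by
        rw [Finset.sum_subtype (p := fun i => lam i ≠ 0)
          (Finset.univ.filter fun i => lam i ≠ 0) (by intro x; simp)
          (fun i => G i • v i)]
        apply Finset.sum_congr rfl
        intro i _
        simp [hG, i.2]
      rw [← h1, h2, hgsum]
    have hGsupp : ∀ i, lam i = 0 → G i = 0 := by
      intro i hi; simp [hG, hi]
    have key : ∀ G : ι → ℝ, (∑ i, G i • v i = 0) → (∀ i, lam i = 0 → G i = 0) →
        (∃ i, 0 < G i) →
        ∃ lam' : ι → ℝ, (∀ i, 0 ≤ lam' i) ∧ (∑ i, lam' i • v i = ∑ i, lam i • v i) ∧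
          LinearIndependent ℝ (fun i : {i // lam' i ≠ 0} => v (i : ι)) := by
      clear hGsum hGsupp hG hgsum hi₁ hind
      intro G hGsum hGsupp hex
      obtain ⟨ip, hip⟩ := hex
      set T : Finset ι := Finset.univ.filter fun i => 0 < G i with hT
      have hTne : T.Nonempty := ⟨ip, by simp [hT, hip]⟩
      obtain ⟨istar, histar, ht⟩ := Finset.exists_mem_eq_inf' hTne fun i => lam i / G i
      set t : ℝ := T.inf' hTne fun i => lam i / G i with htdef
      have hGstar : 0 < G istar := by
        simp only [hT, Finset.mem_filter] at histar; exact histar.2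
      have hteq : t = lam istar / G istar := ht
      have htnn : 0 ≤ t := by
        rw [hteq]; exact div_nonneg (hlam istar) hGstar.le
      set lam' : ι → ℝ := fun i => lam i - t * G i with hlam'def
      have hlam'nn : ∀ i, 0 ≤ lam' i := by
        intro i
        by_cases hGi : 0 < G i
        · have hle : t ≤ lam i / G i :=
            Finset.inf'_le _ (by simp [hT, hGi])
          have := (le_div_iff₀ hGi).mp hle
          simp only [hlam'def]; linarith
        · have h1 : t * G i ≤ 0 :=
            mul_nonpos_of_nonneg_of_nonpos htnn (not_lt.mp hGi)
          have h2 := hlam i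
          simp only [hlam'def]; linarith
      have hsum' : ∑ i, lam' i • v i = ∑ i, lam i • v i := by
        simp only [hlam'def, sub_smul, Finset.sum_sub_distrib, mul_smul]
        rw [← Finset.smul_sum, hGsum, smul_zero, sub_zero]
      have hlamstar : lam istar ≠ 0 := by
        intro h0
        rw [hGsupp istar h0] at hGstar
        exact lt_irrefl 0 hGstar
      have hlam'star : lam' istar = 0 := by
        simp only [hlam'def]
        rw [hteq]
        field_simp
        ring
      have hsubset : (Finset.univ.filter fun i => lam' i ≠ 0)
          ⊆ (Finset.univ.filter fun i => lam i ≠ 0).erase istar := by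
        intro i hi
        simp only [Finset.mem_filter, Finset.mem_univ, true_and] at hi
        rw [Finset.mem_erase]
        constructor
        · intro h; rw [h] at hi; exact hi hlam'star
        · simp only [Finset.mem_filter, Finset.mem_univ, true_and]
          intro h0
          apply hi
          simp only [hlam'def, h0, hGsupp i h0, mul_zero, sub_zero]
      have hcard' : (Finset.univ.filter fun i => lam' i ≠ 0).card ≤ N := by
        have h1 := Finset.card_le_card hsubset
        have h2 : istar ∈ Finset.univ.filter fun i => lam i ≠ 0 := by
          simp [hlamstar]
        rw [Finset.card_erase_of_mem h2] at h1
        omega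
      obtain ⟨lam'', h0'', hsum'', hind''⟩ := ih lam' hcard' hlam'nn
      exact ⟨lam'', h0'', by rw [hsum'', hsum'], hind''⟩
    by_cases hpos : ∃ i, 0 < G i
    · exact key G hGsum hGsupp hpos
    · apply key (-G)
      · simp [hGsum]
      · intro i hi; simp [hGsupp i hi]
      · push_neg at hpos
        refine ⟨(i₁ : ι), ?_⟩
        have h1 : G (i₁ : ι) = g i₁ := by
          simp only [hG]
          rw [dif_pos i₁.2]
        have h2 := hpos (i₁ : ι)
        simp only [Pi.neg_apply]
        rw [h1] at h2 ⊢
        rcases lt_or_eq_of_le h2 with h | h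
        · linarith
        · exact absurd h hi₁

end FarkasAux
set_option linter.unusedSectionVars false

section Part2
variable {ι : Type} [Fintype ι] {H : Type} [NormedAddCommGroup H]
  [InnerProductSpace ℝ H] [FiniteDimensional ℝ H]

open scoped InnerProductSpace

lemma isClosed_piece (v : ι → H) (S : Finset ι) :
    IsClosed {x : H | LinearIndependent ℝ (fun i : {i // i ∈ S} => v (i : ι)) ∧
      ∃ lam : ι → ℝ, (∀ i, 0 ≤ lam i) ∧ (∀ i ∉ S, lam i = 0) ∧ x = ∑ i, lam i • v i} := by
  classical
  by_cases hind : LinearIndependent ℝ (fun i : {i // i ∈ S} => v (i : ι))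
  · let T : ({i // i ∈ S} → ℝ) →ₗ[ℝ] H :=
      { toFun := fun u => ∑ i : {i // i ∈ S}, u i • v (i : ι)
        map_add' := by intro a b; simp [add_smul, Finset.sum_add_distrib]
        map_smul' := by intro r a; simp [mul_smul, Finset.smul_sum] }
    have hker : LinearMap.ker T = ⊥ := by
      rw [LinearMap.ker_eq_bot']
      intro u hu
      have := Fintype.linearIndependent_iff.mp hind u hu
      funext i
      exact this i
    have hemb := (T.isClosedEmbedding_of_injective hker).isClosedMap
    have himg : {x : H | LinearIndependent ℝ (fun i : {i // i ∈ S} => v (i : ι)) ∧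
        ∃ lam : ι → ℝ, (∀ i, 0 ≤ lam i) ∧ (∀ i ∉ S, lam i = 0) ∧ x = ∑ i, lam i • v i}
        = T '' {u | ∀ i, 0 ≤ u i} := by
      ext x
      constructor
      · rintro ⟨-, lam, hnn, hsupp, rfl⟩
        refine ⟨fun i => lam i, fun i => hnn i, ?_⟩
        show ∑ i : {i // i ∈ S}, lam i • v (i : ι) = ∑ i, lam i • v i
        rw [← Finset.sum_subtype (p := fun i => i ∈ S) S (by intro x; simp)
          (fun i => lam i • v i)]
        apply Finset.sum_subset (Finset.subset_univ _)
        intro i _ hi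
        rw [hsupp i hi, zero_smul]
      · rintro ⟨u, hu, rfl⟩
        refine ⟨hind, fun i => if h : i ∈ S then u ⟨i, h⟩ else 0, ?_, ?_, ?_⟩
        · intro i
          by_cases h : i ∈ S
          · simp only [dif_pos h]; exact hu _
          · simp [h]
        · intro i hi; simp [hi]
        · show T u = ∑ i : ι, (fun i => if h : i ∈ S then u ⟨i, h⟩ else 0) i • v i
          show ∑ i : {i // i ∈ S}, u i • v (i : ι) = _
          have hz : ∀ i ∈ Finset.univ, i ∉ S →
              (if h : i ∈ S then u ⟨i, h⟩ else 0) • v i = 0 := by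
            intro i _ hi; simp [hi]
          rw [← Finset.sum_subset (Finset.subset_univ S) hz]
          rw [Finset.sum_subtype (p := fun i => i ∈ S) S (by intro x; simp)
            (fun i => (if h : i ∈ S then u ⟨i, h⟩ else 0) • v i)]
          apply Finset.sum_congr rfl
          intro i _
          simp
    rw [himg]
    apply hemb
    have : {u : {i // i ∈ S} → ℝ | ∀ i, 0 ≤ u i} = ⋂ i, {u | 0 ≤ u i} := by
      ext u; simp
    rw [this]
    exact isClosed_iInter fun i => isClosed_le continuous_const (continuous_apply i)
  · convert isClosed_empty
    ext x
    simp [hind]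

lemma isClosed_cone (v : ι → H) :
    IsClosed {x : H | ∃ lam : ι → ℝ, (∀ i, 0 ≤ lam i) ∧ x = ∑ i, lam i • v i} := by
  classical
  have hdecomp : {x : H | ∃ lam : ι → ℝ, (∀ i, 0 ≤ lam i) ∧ x = ∑ i, lam i • v i}
      = ⋃ S : Finset ι, {x : H | LinearIndependent ℝ (fun i : {i // i ∈ S} => v (i : ι)) ∧
          ∃ lam : ι → ℝ, (∀ i, 0 ≤ lam i) ∧ (∀ i ∉ S, lam i = 0) ∧ x = ∑ i, lam i • v i} := by
    ext x
    constructor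
    · rintro ⟨lam, hnn, rfl⟩
      obtain ⟨lam', hnn', hsum', hind'⟩ :=
        cara_cone v (Finset.univ.filter fun i => lam i ≠ 0).card lam le_rfl hnn
      refine Set.mem_iUnion.mpr ⟨Finset.univ.filter fun i => lam' i ≠ 0, ?_, lam', hnn', ?_, hsum'.symm⟩
      · have hφ : Function.Injective
            (fun x : {i // i ∈ Finset.univ.filter fun i => lam' i ≠ 0} =>
              (⟨x.1, (Finset.mem_filter.mp x.2).2⟩ : {i // lam' i ≠ 0})) := by
          intro a b hab
          cases a; cases b
          simpa using hab
        exact hind'.comp _ hφ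
      · intro i hi
        by_contra h
        exact hi (by simp [h])
    · rintro hx
      obtain ⟨S, -, lam, hnn, -, rfl⟩ := Set.mem_iUnion.mp hx
      exact ⟨lam, hnn, rfl⟩
  rw [hdecomp]
  exact isClosed_iUnion_of_finite fun S => isClosed_piece v S

/-- Farkas' lemma in a finite-dimensional real inner product space. -/
theorem farkas_abstract (v : ι → H) (g : H)
    (h : ∀ x : H, (∀ i, ⟪v i, x⟫_ℝ ≤ 0) → ⟪g, x⟫_ℝ ≤ 0) :
    ∃ lam : ι → ℝ, (∀ i, 0 ≤ lam i) ∧ g = ∑ i, lam i • v i := by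
  classical
  by_contra hng
  have hg : g ∉ {x : H | ∃ lam : ι → ℝ, (∀ i, 0 ≤ lam i) ∧ x = ∑ i, lam i • v i} := hng
  let K : ConvexCone ℝ H :=
    { carrier := {x : H | ∃ lam : ι → ℝ, (∀ i, 0 ≤ lam i) ∧ x = ∑ i, lam i • v i}
      smul_mem' := by
        rintro cc hc x ⟨lam, hnn, rfl⟩
        refine ⟨fun i => cc * lam i, fun i => mul_nonneg hc.le (hnn i), ?_⟩
        rw [Finset.smul_sum]
        apply Finset.sum_congr rfl
        intro i _
        rw [mul_smul]
      add_mem' := by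
        rintro x ⟨lam, hnn, rfl⟩ y ⟨lam', hnn', rfl⟩
        exact ⟨fun i => lam i + lam' i, fun i => add_nonneg (hnn i) (hnn' i), by
          simp [add_smul, Finset.sum_add_distrib]⟩ }
  have hKne : (K : Set H).Nonempty := ⟨0, fun _ => 0, fun _ => le_refl _, by simp⟩
  have hKcl : IsClosed (K : Set H) := isClosed_cone v
  obtain ⟨y, hy1, hy2⟩ :
      ∃ y, (∀ x ∈ K, 0 ≤ ⟪x, y⟫_ℝ) ∧ ⟪y, g⟫_ℝ < 0 := by
    let C : ProperCone ℝ H :=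
      { carrier := (K : Set H)
        add_mem' := fun ha hb => K.add_mem ha hb
        zero_mem' := ⟨fun _ => 0, fun _ => le_refl _, by simp⟩
        smul_mem' := by
          rintro cc x ⟨lam, hnn, rfl⟩
          refine ⟨fun i => (cc : ℝ) * lam i, fun i => mul_nonneg cc.2 (hnn i), ?_⟩
          change (cc : ℝ) • ∑ i, lam i • v i = _
          rw [Finset.smul_sum]
          simp [mul_smul]
        isClosed' := hKcl }
    obtain ⟨y, hy1, hy2⟩ := C.hyperplane_separation' (x₀ := g) hg
    exact ⟨y, hy1, by rw [real_inner_comm]; exact hy2⟩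
  have hvK : ∀ i, v i ∈ K := by
    intro i
    refine ⟨fun j => if j = i then 1 else 0, fun j => by positivity, ?_⟩
    simp [ite_smul]
  have hyneg : ∀ i, ⟪v i, -y⟫_ℝ ≤ 0 := by
    intro i
    rw [inner_neg_right]
    linarith [hy1 (v i) (hvK i)]
  have := h (-y) hyneg
  rw [inner_neg_right] at this
  rw [real_inner_comm] at hy2
  linarith

end Part2
section Part3
open Matrix
open scoped InnerProductSpace

theorem farkas_dot {ι κ : Type} [Fintype ι] [Fintype κ] (v : ι → κ → ℝ) (g : κ → ℝ)
    (h : ∀ x : κ → ℝ, (∀ i, (∑ j, v i j * x j) ≤ 0) → (∑ j, g j * x j) ≤ 0) :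
    ∃ lam : ι → ℝ, (∀ i, 0 ≤ lam i) ∧ ∀ j, g j = ∑ i, lam i * v i j := by
  classical
  set E := (WithLp.linearEquiv 2 ℝ (κ → ℝ)) with hE
  have hinner : ∀ (a : κ → ℝ) (x : EuclideanSpace ℝ κ),
      ⟪E.symm a, x⟫_ℝ = ∑ j, a j * E x j := by
    intro a x
    rw [PiLp.inner_apply]
    apply Finset.sum_congr rfl
    intro j _
    rw [RCLike.inner_apply, conj_trivial]
    rw [mul_comm]
    congr 1
  have hyp : ∀ x : EuclideanSpace ℝ κ,
      (∀ i, ⟪E.symm (v i), x⟫_ℝ ≤ 0) → ⟪E.symm g, x⟫_ℝ ≤ 0 := by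
    intro x hx
    have hx' : ∀ i, (∑ j, v i j * E x j) ≤ 0 := by
      intro i
      have := hx i
      rw [hinner] at this
      exact this
    have h1 := h (E x) hx'
    rw [hinner]
    exact h1
  obtain ⟨lam, hnn, hg⟩ := farkas_abstract (H := EuclideanSpace ℝ κ)
      (fun i => E.symm (v i)) (E.symm g) hyp
  refine ⟨lam, hnn, ?_⟩
  have hg2 : g = ∑ i, lam i • v i := by
    have h2 := congrArg E hg
    simpa only [map_sum, _root_.map_smul, LinearEquiv.apply_symm_apply] using h2
  intro j
  rw [hg2, Finset.sum_apply]
  apply Finset.sum_congr rfl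
  intro i _
  simp

theorem farkas_matrix {m' p' n' : ℕ} (A : Matrix (Fin m') (Fin p') ℝ)
    (B : Matrix (Fin m') (Fin n') ℝ)
    (P : Fin m' → Prop) [DecidablePred P] (g1 : Fin p' → ℝ) (g2 : Fin n' → ℝ)
    (h : ∀ (u : Fin p' → ℝ) (w : Fin n' → ℝ),
      (∀ i, P i → A i ⬝ᵥ u + B i ⬝ᵥ w ≤ 0) → g1 ⬝ᵥ u + g2 ⬝ᵥ w ≤ 0) :
    ∃ lam : Fin m' → ℝ, (∀ i, 0 ≤ lam i) ∧ (∀ i, ¬ P i → lam i = 0) ∧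
      Aᵀ.mulVec lam = g1 ∧ Bᵀ.mulVec lam = g2 := by
  classical
  set v : Fin m' → (Fin p' ⊕ Fin n') → ℝ :=
    fun i => if P i then Sum.elim (A i) (B i) else 0 with hv
  set g : (Fin p' ⊕ Fin n') → ℝ := Sum.elim g1 g2 with hgdef
  have hyp : ∀ x : (Fin p' ⊕ Fin n') → ℝ,
      (∀ i, (∑ j, v i j * x j) ≤ 0) → (∑ j, g j * x j) ≤ 0 := by
    intro x hx
    have hcond : ∀ i, P i → A i ⬝ᵥ (fun j => x (Sum.inl j)) + B i ⬝ᵥ (fun j => x (Sum.inr j)) ≤ 0 := by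
      intro i hP
      have := hx i
      rw [show ∑ j, v i j * x j
          = (∑ j, v i (Sum.inl j) * x (Sum.inl j)) + ∑ j, v i (Sum.inr j) * x (Sum.inr j) from
        Fintype.sum_sum_type _] at this
      simp only [hv, if_pos hP, Sum.elim_inl, Sum.elim_inr] at this
      exact this
    have key := h (fun j => x (Sum.inl j)) (fun j => x (Sum.inr j)) hcond
    rw [hgdef]
    rw [show ∑ j, Sum.elim g1 g2 j * x j
        = (∑ j, g1 j * x (Sum.inl j)) + ∑ j, g2 j * x (Sum.inr j) from
      Fintype.sum_sum_type _]
    exact key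
  obtain ⟨lam, hnn, hlam⟩ := farkas_dot v g hyp
  refine ⟨fun i => if P i then lam i else 0, ?_, ?_, ?_, ?_⟩
  · intro i
    by_cases hP : P i <;> simp [hP, hnn i]
  · intro i hP
    simp [hP]
  · funext j
    have hthis := hlam (Sum.inl j)
    rw [hgdef] at hthis
    simp only [Sum.elim_inl] at hthis
    simp only [Matrix.mulVec, dotProduct, Matrix.transpose_apply]
    rw [hthis]
    apply Finset.sum_congr rfl
    intro i _
    by_cases hP : P i <;> simp [hv, hP, mul_comm]
  · funext j
    have hthis := hlam (Sum.inr j)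
    rw [hgdef] at hthis
    simp only [Sum.elim_inr] at hthis
    simp only [Matrix.mulVec, dotProduct, Matrix.transpose_apply]
    rw [hthis]
    apply Finset.sum_congr rfl
    intro i _
    by_cases hP : P i <;> simp [hv, hP, mul_comm]

end Part3
section Part4
open Matrix

variable {m p n : ℕ}

lemma nonneg_of_quad {G W : ℝ} (t₀ : ℝ) (ht₀ : 0 < t₀) (hW : 0 ≤ W)
    (h : ∀ t : ℝ, 0 < t → t ≤ t₀ → 0 ≤ t * G + t^2/2 * W) : 0 ≤ G := by
  by_contra hG
  push_neg at hG
  set t := min t₀ ((-G)/(W+1)) with htdef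
  have ht1 : 0 < t := lt_min ht₀ (div_pos (by linarith) (by linarith))
  have ht2 : t ≤ t₀ := min_le_left _ _
  have ht3 : t ≤ (-G)/(W+1) := min_le_right _ _
  have h4 : t * (W+1) ≤ -G := (le_div_iff₀ (by linarith)).mp ht3
  have h5 := h t ht1 ht2
  nlinarith

/-- Sufficiency computation: a multiplier certificate gives optimality. -/
lemma key_ineq (A : Matrix (Fin m) (Fin p) ℝ) (B : Matrix (Fin m) (Fin n) ℝ) (d : Fin p → ℝ)
    (z θ₀ θ : Fin n → ℝ) (ξ₀ ξ : Fin p → ℝ) (lam : Fin m → ℝ)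
    (hA : Aᵀ.mulVec lam = -d) (hB : Bᵀ.mulVec lam = z - θ₀)
    (hsign : ∑ i, lam i * ((A.mulVec ξ + B.mulVec θ) i - (A.mulVec ξ₀ + B.mulVec θ₀) i) ≤ 0) :
    (1/2) * (∑ j, (θ₀ j - z j)^2) + d ⬝ᵥ ξ₀ ≤ (1/2) * (∑ j, (θ j - z j)^2) + d ⬝ᵥ ξ := by
  have h1 : ∑ i, lam i * ((A.mulVec ξ + B.mulVec θ) i - (A.mulVec ξ₀ + B.mulVec θ₀) i)
      = lam ⬝ᵥ (A.mulVec (ξ - ξ₀)) + lam ⬝ᵥ (B.mulVec (θ - θ₀)) := by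
    rw [← dotProduct_add]
    simp only [dotProduct]
    apply Finset.sum_congr rfl
    intro i _
    simp only [Matrix.mulVec_sub, Pi.add_apply, Pi.sub_apply]
    ring
  have h2 : lam ⬝ᵥ (A.mulVec (ξ - ξ₀)) = (-d) ⬝ᵥ (ξ - ξ₀) := by
    rw [Matrix.dotProduct_mulVec, ← Matrix.mulVec_transpose, hA]
  have h3 : lam ⬝ᵥ (B.mulVec (θ - θ₀)) = (z - θ₀) ⬝ᵥ (θ - θ₀) := by
    rw [Matrix.dotProduct_mulVec, ← Matrix.mulVec_transpose, hB]
  have h4 : 0 ≤ d ⬝ᵥ (ξ - ξ₀) + (θ₀ - z) ⬝ᵥ (θ - θ₀) := by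
    have h5 := hsign
    rw [h1, h2, h3] at h5
    rw [show z - θ₀ = -(θ₀ - z) by ring] at h5
    rw [neg_dotProduct, neg_dotProduct] at h5
    linarith
  have h5 : (1/2) * (∑ j, (θ j - z j)^2) - (1/2) * (∑ j, (θ₀ j - z j)^2)
      = ((θ₀ - z) ⬝ᵥ (θ - θ₀)) + (1/2) * ∑ j, (θ j - θ₀ j)^2 := by
    simp only [dotProduct, Pi.sub_apply]
    rw [Finset.mul_sum, Finset.mul_sum, Finset.mul_sum, ← Finset.sum_sub_distrib,
      ← Finset.sum_add_distrib]
    apply Finset.sum_congr rfl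
    intro j _
    ring
  have h6 : 0 ≤ ∑ j, (θ j - θ₀ j)^2 := Finset.sum_nonneg fun j _ => sq_nonneg _
  have h7 : d ⬝ᵥ ξ - d ⬝ᵥ ξ₀ = d ⬝ᵥ (ξ - ξ₀) := (dotProduct_sub d ξ ξ₀).symm
  nlinarith

/-- Uniqueness of the θ-component of minimizers. -/
lemma theta_unique (A : Matrix (Fin m) (Fin p) ℝ) (B : Matrix (Fin m) (Fin n) ℝ)
    (c : Fin m → ℝ) (d : Fin p → ℝ) (z : Fin n → ℝ)
    (ξ₁ ξ₂ : Fin p → ℝ) (θ₁ θ₂ : Fin n → ℝ)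
    (h1f : A.mulVec ξ₁ + B.mulVec θ₁ ≤ c) (h2f : A.mulVec ξ₂ + B.mulVec θ₂ ≤ c)
    (h1o : ∀ ξ θ, A.mulVec ξ + B.mulVec θ ≤ c →
      (1/2) * (∑ j, (θ₁ j - z j)^2) + d ⬝ᵥ ξ₁ ≤ (1/2) * (∑ j, (θ j - z j)^2) + d ⬝ᵥ ξ)
    (h2o : ∀ ξ θ, A.mulVec ξ + B.mulVec θ ≤ c →
      (1/2) * (∑ j, (θ₂ j - z j)^2) + d ⬝ᵥ ξ₂ ≤ (1/2) * (∑ j, (θ j - z j)^2) + d ⬝ᵥ ξ) :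
    θ₁ = θ₂ := by
  set ξm : Fin p → ℝ := fun j => (ξ₁ j + ξ₂ j)/2 with hξm
  set θm : Fin n → ℝ := fun j => (θ₁ j + θ₂ j)/2 with hθm
  have hfm : A.mulVec ξm + B.mulVec θm ≤ c := by
    intro i
    have e1 : (A.mulVec ξm) i = ((A.mulVec ξ₁) i + (A.mulVec ξ₂) i)/2 := by
      simp only [Matrix.mulVec, dotProduct, hξm]
      rw [← Finset.sum_add_distrib, Finset.sum_div]
      apply Finset.sum_congr rfl
      intro j _
      ring
    have e2 : (B.mulVec θm) i = ((B.mulVec θ₁) i + (B.mulVec θ₂) i)/2 := by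
      simp only [Matrix.mulVec, dotProduct, hθm]
      rw [← Finset.sum_add_distrib, Finset.sum_div]
      apply Finset.sum_congr rfl
      intro j _
      ring
    have l1 := h1f i
    have l2 := h2f i
    simp only [Pi.add_apply] at l1 l2 ⊢
    rw [e1, e2]
    linarith
  have hd : d ⬝ᵥ ξm = (d ⬝ᵥ ξ₁ + d ⬝ᵥ ξ₂)/2 := by
    simp only [dotProduct, hξm]
    rw [← Finset.sum_add_distrib, Finset.sum_div]
    apply Finset.sum_congr rfl
    intro j _
    ring
  have hs : ∑ j, (θm j - z j)^2
      = (∑ j, (θ₁ j - z j)^2)/2 + (∑ j, (θ₂ j - z j)^2)/2 - (1/4) * ∑ j, (θ₁ j - θ₂ j)^2 := by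
    rw [Finset.sum_div, Finset.sum_div, Finset.mul_sum, ← Finset.sum_add_distrib,
      ← Finset.sum_sub_distrib]
    apply Finset.sum_congr rfl
    intro j _
    simp only [hθm]
    ring
  have hv1 := h1o ξ₂ θ₂ h2f
  have hv2 := h2o ξ₁ θ₁ h1f
  have hvm := h1o ξm θm hfm
  rw [hd, hs] at hvm
  have hsq : ∑ j, (θ₁ j - θ₂ j)^2 ≤ 0 := by linarith
  have hz : ∀ j ∈ Finset.univ, (θ₁ j - θ₂ j)^2 = 0 := by
    intro j hj
    have h6 : 0 ≤ ∑ j, (θ₁ j - θ₂ j)^2 := Finset.sum_nonneg fun j _ => sq_nonneg _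
    have := (Finset.sum_eq_zero_iff_of_nonneg (fun j _ => sq_nonneg (θ₁ j - θ₂ j))).mp
      (le_antisymm hsq h6) j hj
    exact this
  funext j
  have := hz j (Finset.mem_univ j)
  have h7 := pow_eq_zero_iff (n := 2) (by norm_num) |>.mp this
  linarith [h7]

/-- KKT multipliers exist at a minimizer. -/
lemma exists_kkt (A : Matrix (Fin m) (Fin p) ℝ) (B : Matrix (Fin m) (Fin n) ℝ)
    (c : Fin m → ℝ) (d : Fin p → ℝ) (z : Fin n → ℝ) (ξ₀ : Fin p → ℝ) (θ₀ : Fin n → ℝ)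
    (hfeas : A.mulVec ξ₀ + B.mulVec θ₀ ≤ c)
    (hopt : ∀ ξ θ, A.mulVec ξ + B.mulVec θ ≤ c →
      (1/2) * (∑ j, (θ₀ j - z j)^2) + d ⬝ᵥ ξ₀ ≤ (1/2) * (∑ j, (θ j - z j)^2) + d ⬝ᵥ ξ) :
    ∃ lam : Fin m → ℝ, (∀ i, 0 ≤ lam i) ∧
      (∀ i, ¬ (A i ⬝ᵥ ξ₀ + B i ⬝ᵥ θ₀ = c i) → lam i = 0) ∧
      Aᵀ.mulVec lam = -d ∧ Bᵀ.mulVec lam = z - θ₀ := by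
  classical
  apply farkas_matrix A B (fun i => A i ⬝ᵥ ξ₀ + B i ⬝ᵥ θ₀ = c i) (-d) (z - θ₀)
  intro u w hle
  -- goal : (-d) ⬝ᵥ u + (z - θ₀) ⬝ᵥ w ≤ 0
  set G : ℝ := d ⬝ᵥ u + ∑ j, (θ₀ j - z j) * w j with hGdef
  set W : ℝ := ∑ j, (w j)^2 with hWdef
  have hW : 0 ≤ W := Finset.sum_nonneg fun j _ => sq_nonneg _
  -- construct t₀
  set r : Fin m → ℝ := fun i => A i ⬝ᵥ u + B i ⬝ᵥ w with hr
  set b : Fin m → ℝ := fun i => if A i ⬝ᵥ ξ₀ + B i ⬝ᵥ θ₀ = c i then 1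
    else (c i - (A i ⬝ᵥ ξ₀ + B i ⬝ᵥ θ₀))/(1 + |r i|) with hb
  set F : Finset ℝ := insert 1 (Finset.univ.image b) with hF
  have hFne : F.Nonempty := ⟨1, Finset.mem_insert_self _ _⟩
  set t₀ : ℝ := F.min' hFne with ht₀def
  have hslack : ∀ i, A i ⬝ᵥ ξ₀ + B i ⬝ᵥ θ₀ ≤ c i := by
    intro i
    have := hfeas i
    simpa only [Pi.add_apply, Matrix.mulVec] using this
  have hbpos : ∀ i, 0 < b i := by
    intro i
    by_cases hi : A i ⬝ᵥ ξ₀ + B i ⬝ᵥ θ₀ = c i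
    · simp [hb, hi]
    · have h1 : A i ⬝ᵥ ξ₀ + B i ⬝ᵥ θ₀ < c i := lt_of_le_of_ne (hslack i) hi
      have h2 : (0:ℝ) < 1 + |r i| := by positivity
      simp only [hb, if_neg hi]
      exact div_pos (by linarith) h2
  have ht₀pos : 0 < t₀ := by
    apply (Finset.lt_min'_iff F hFne).mpr
    intro y hy
    rw [hF] at hy
    rcases Finset.mem_insert.mp hy with h | h
    · rw [h]; norm_num
    · obtain ⟨i, -, rfl⟩ := Finset.mem_image.mp h
      exact hbpos i
  -- feasibility of perturbed points
  have hfeas' : ∀ t : ℝ, 0 < t → t ≤ t₀ →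
      A.mulVec (fun j => ξ₀ j + t * u j) + B.mulVec (fun j => θ₀ j + t * w j) ≤ c := by
    intro t htp htl i
    have e1 : (A.mulVec (fun j => ξ₀ j + t * u j)) i = A i ⬝ᵥ ξ₀ + t * (A i ⬝ᵥ u) := by
      simp only [Matrix.mulVec, dotProduct]
      rw [Finset.mul_sum, ← Finset.sum_add_distrib]
      apply Finset.sum_congr rfl
      intro j _
      ring
    have e2 : (B.mulVec (fun j => θ₀ j + t * w j)) i = B i ⬝ᵥ θ₀ + t * (B i ⬝ᵥ w) := by
      simp only [Matrix.mulVec, dotProduct]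
      rw [Finset.mul_sum, ← Finset.sum_add_distrib]
      apply Finset.sum_congr rfl
      intro j _
      ring
    simp only [Pi.add_apply]
    rw [e1, e2]
    by_cases hi : A i ⬝ᵥ ξ₀ + B i ⬝ᵥ θ₀ = c i
    · have hri : r i ≤ 0 := hle i hi
      have : t * r i ≤ 0 := mul_nonpos_of_nonneg_of_nonpos htp.le hri
      simp only [hr] at this
      linarith [this, hi.le]
    · have hble : t ≤ b i := le_trans htl (Finset.min'_le _ _ (by
        rw [hF]
        exact Finset.mem_insert_of_mem (Finset.mem_image_of_mem b (Finset.mem_univ i))))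
      have h2 : (0:ℝ) < 1 + |r i| := by positivity
      rw [hb] at hble
      simp only [if_neg hi] at hble
      have h3 : t * (1 + |r i|) ≤ c i - (A i ⬝ᵥ ξ₀ + B i ⬝ᵥ θ₀) := (le_div_iff₀ h2).mp hble
      have h4 : r i ≤ |r i| := le_abs_self _
      have h5 : t * r i ≤ t * |r i| := mul_le_mul_of_nonneg_left h4 htp.le
      simp only [hr] at h5
      nlinarith [abs_nonneg (r i)]
  -- quadratic expansion
  have hquad : ∀ t : ℝ, 0 < t → t ≤ t₀ → 0 ≤ t * G + t^2/2 * W := by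
    intro t htp htl
    have ho := hopt (fun j => ξ₀ j + t * u j) (fun j => θ₀ j + t * w j) (hfeas' t htp htl)
    have e1 : d ⬝ᵥ (fun j => ξ₀ j + t * u j) = d ⬝ᵥ ξ₀ + t * (d ⬝ᵥ u) := by
      simp only [dotProduct]
      rw [Finset.mul_sum, ← Finset.sum_add_distrib]
      apply Finset.sum_congr rfl
      intro j _
      ring
    have e2 : ∑ j, ((fun j => θ₀ j + t * w j) j - z j)^2
        = (∑ j, (θ₀ j - z j)^2) + 2*t*(∑ j, (θ₀ j - z j) * w j) + t^2 * ∑ j, (w j)^2 := by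
      rw [Finset.mul_sum, Finset.mul_sum, ← Finset.sum_add_distrib, ← Finset.sum_add_distrib]
      apply Finset.sum_congr rfl
      intro j _
      ring
    rw [e1, e2] at ho
    simp only [hGdef, hWdef]
    nlinarith [ho]
  have hG := nonneg_of_quad t₀ ht₀pos hW hquad
  have e3 : (-d) ⬝ᵥ u + (z - θ₀) ⬝ᵥ w = -G := by
    have h8 : (z - θ₀) ⬝ᵥ w = - ∑ j, (θ₀ j - z j) * w j := by
      simp only [dotProduct, Pi.sub_apply, ← Finset.sum_neg_distrib]
      apply Finset.sum_congr rfl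
      intro j _
      ring
    rw [hGdef, h8, neg_dotProduct]
    ring
  rw [e3]
  linarith

end Part4
section Part5
open Matrix MeasureTheory

variable {m p n : ℕ}

/-- Certificate set: points `z` admitting a full KKT certificate with binding set `J`
together with an affine-problem certificate for the same `J`. -/
def certSet (A : Matrix (Fin m) (Fin p) ℝ) (B : Matrix (Fin m) (Fin n) ℝ)
    (c : Fin m → ℝ) (d : Fin p → ℝ) (J : Set (Fin m)) : Set (Fin n → ℝ) :=
  {z | ∃ ξ₀ : Fin p → ℝ, ∃ θ : Fin n → ℝ, ∃ lam : Fin m → ℝ, ∃ ξt : Fin p → ℝ,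
    ∃ μ : Fin m → ℝ,
    A.mulVec ξ₀ + B.mulVec θ ≤ c ∧
    (∀ i ∈ J, A i ⬝ᵥ ξ₀ + B i ⬝ᵥ θ = c i) ∧
    (∀ i, 0 ≤ lam i) ∧ (∀ i ∉ J, lam i = 0) ∧
    Aᵀ.mulVec lam = -d ∧ Bᵀ.mulVec lam = z - θ ∧
    (∀ i ∈ J, A i ⬝ᵥ ξt + B i ⬝ᵥ θ = c i) ∧ (∀ i ∉ J, μ i = 0) ∧
    Aᵀ.mulVec μ = -d ∧ Bᵀ.mulVec μ = z - θ}

lemma convex_certSet (A : Matrix (Fin m) (Fin p) ℝ) (B : Matrix (Fin m) (Fin n) ℝ)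
    (c : Fin m → ℝ) (d : Fin p → ℝ) (J : Set (Fin m)) :
    Convex ℝ (certSet A B c d J) := by
  rintro z₁ ⟨ξ₀₁, θ₁, lam₁, ξt₁, μ₁, hf₁, hJ₁, hl₁, hlz₁, hlA₁, hlB₁, ht₁, hμz₁, hμA₁, hμB₁⟩
    z₂ ⟨ξ₀₂, θ₂, lam₂, ξt₂, μ₂, hf₂, hJ₂, hl₂, hlz₂, hlA₂, hlB₂, ht₂, hμz₂, hμA₂, hμB₂⟩
    a b ha hb hab
  refine ⟨a • ξ₀₁ + b • ξ₀₂, a • θ₁ + b • θ₂, a • lam₁ + b • lam₂,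
    a • ξt₁ + b • ξt₂, a • μ₁ + b • μ₂, ?_, ?_, ?_, ?_, ?_, ?_, ?_, ?_, ?_, ?_⟩
  · intro i
    have l1 := hf₁ i
    have l2 := hf₂ i
    simp only [Pi.add_apply] at l1 l2
    have q1 : a * ((A.mulVec ξ₀₁) i + (B.mulVec θ₁) i) ≤ a * c i :=
      mul_le_mul_of_nonneg_left l1 ha
    have q2 : b * ((A.mulVec ξ₀₂) i + (B.mulVec θ₂) i) ≤ b * c i :=
      mul_le_mul_of_nonneg_left l2 hb
    simp only [Pi.add_apply, Matrix.mulVec_add, Matrix.mulVec_smul, Pi.smul_apply,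
      smul_eq_mul]
    have q3 : a * c i + b * c i = c i := by linear_combination c i * hab
    linarith [q1, q2, q3]
  · intro i hi
    have l1 := hJ₁ i hi
    have l2 := hJ₂ i hi
    simp only [dotProduct_add, dotProduct_smul, smul_eq_mul]
    linear_combination a * l1 + b * l2 + c i * hab
  · intro i
    simp only [Pi.add_apply, Pi.smul_apply, smul_eq_mul]
    have := hl₁ i
    have := hl₂ i
    positivity
  · intro i hi
    simp only [Pi.add_apply, Pi.smul_apply, smul_eq_mul, hlz₁ i hi, hlz₂ i hi]
    ring
  · rw [Matrix.mulVec_add, Matrix.mulVec_smul, Matrix.mulVec_smul, hlA₁, hlA₂]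
    funext j
    simp only [Pi.add_apply, Pi.smul_apply, Pi.neg_apply, smul_eq_mul]
    linear_combination (-(d j)) * hab
  · rw [Matrix.mulVec_add, Matrix.mulVec_smul, Matrix.mulVec_smul, hlB₁, hlB₂]
    funext j
    simp only [Pi.add_apply, Pi.sub_apply, Pi.smul_apply, smul_eq_mul]
    ring
  · intro i hi
    have l1 := ht₁ i hi
    have l2 := ht₂ i hi
    simp only [dotProduct_add, dotProduct_smul, smul_eq_mul]
    linear_combination a * l1 + b * l2 + c i * hab
  · intro i hi
    simp only [Pi.add_apply, Pi.smul_apply, smul_eq_mul, hμz₁ i hi, hμz₂ i hi]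
    ring
  · rw [Matrix.mulVec_add, Matrix.mulVec_smul, Matrix.mulVec_smul, hμA₁, hμA₂]
    funext j
    simp only [Pi.add_apply, Pi.smul_apply, Pi.neg_apply, smul_eq_mul]
    linear_combination (-(d j)) * hab
  · rw [Matrix.mulVec_add, Matrix.mulVec_smul, Matrix.mulVec_smul, hμB₁, hμB₂]
    funext j
    simp only [Pi.add_apply, Pi.sub_apply, Pi.smul_apply, smul_eq_mul]
    ring

end Part5
/-- Local equivalence of the linearly perturbed partial projection onto
`Q = {(ξ,θ) : Aξ + Bθ ≤ c}` with the linearly perturbed partial projection onto the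
affine set of binding constraints: for almost every `y`, there is an open neighborhood
`U` of `y` such that for every `z ∈ U`, `θ̂(z)` is the θ-component of a minimizer of
`(1/2)‖θ − z‖₂² + dᵀξ` over `{(ξ,θ) : A_{J_y} ξ + B_{J_y} θ = c_{J_y}}`. -/
theorem local_affine_equivalence_linearly_perturbed {m p n : ℕ}
    (A : Matrix (Fin m) (Fin p) ℝ) (B : Matrix (Fin m) (Fin n) ℝ)
    (c : Fin m → ℝ) (d : Fin p → ℝ)
    (hQ : ∃ ξ : Fin p → ℝ, ∃ θ : Fin n → ℝ, A.mulVec ξ + B.mulVec θ ≤ c)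
    (hd : ∃ lam₀ : Fin m → ℝ, 0 ≤ lam₀ ∧ Aᵀ.mulVec lam₀ = -d)
    (θhat : (Fin n → ℝ) → (Fin n → ℝ)) (ξhat : (Fin n → ℝ) → (Fin p → ℝ))
    (hmin : ∀ z, A.mulVec (ξhat z) + B.mulVec (θhat z) ≤ c ∧
      ∀ ξ θ, A.mulVec ξ + B.mulVec θ ≤ c →
        (1 / 2) * (∑ j, (θhat z j - z j) ^ 2) + d ⬝ᵥ ξhat z
          ≤ (1 / 2) * (∑ j, (θ j - z j) ^ 2) + d ⬝ᵥ ξ) :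
    ∀ᵐ y ∂(volume : Measure (Fin n → ℝ)),
      ∃ U : Set (Fin n → ℝ), IsOpen U ∧ y ∈ U ∧
        ∀ z ∈ U, ∃ ξt : Fin p → ℝ,
          (∀ i ∈ {i : Fin m | A i ⬝ᵥ ξhat y + B i ⬝ᵥ θhat y = c i},
            A i ⬝ᵥ ξt + B i ⬝ᵥ θhat z = c i) ∧
          ∀ ξ θ, (∀ i ∈ {i : Fin m | A i ⬝ᵥ ξhat y + B i ⬝ᵥ θhat y = c i},
              A i ⬝ᵥ ξ + B i ⬝ᵥ θ = c i) →
            (1 / 2) * (∑ j, (θhat z j - z j) ^ 2) + d ⬝ᵥ ξt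
              ≤ (1 / 2) * (∑ j, (θ j - z j) ^ 2) + d ⬝ᵥ ξ := by
  classical
  -- every point is in its own certificate set
  have hmem : ∀ y, y ∈ certSet A B c d {i : Fin m | A i ⬝ᵥ ξhat y + B i ⬝ᵥ θhat y = c i} := by
    intro y
    obtain ⟨lam, hnn, hsupp, hA, hB⟩ :=
      exists_kkt A B c d y (ξhat y) (θhat y) (hmin y).1 (hmin y).2
    exact ⟨ξhat y, θhat y, lam, ξhat y, lam, (hmin y).1, fun i hi => hi,
      hnn, fun i hi => hsupp i hi, hA, hB, fun i hi => hi, fun i hi => hsupp i hi, hA, hB⟩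
  -- membership in a certificate set gives the desired conclusion at `z`
  have hsub : ∀ (Js : Set (Fin m)) (z : Fin n → ℝ), z ∈ certSet A B c d Js →
      ∃ ξt : Fin p → ℝ,
        (∀ i ∈ Js, A i ⬝ᵥ ξt + B i ⬝ᵥ θhat z = c i) ∧
        ∀ ξ θ, (∀ i ∈ Js, A i ⬝ᵥ ξ + B i ⬝ᵥ θ = c i) →
          (1 / 2) * (∑ j, (θhat z j - z j) ^ 2) + d ⬝ᵥ ξt
            ≤ (1 / 2) * (∑ j, (θ j - z j) ^ 2) + d ⬝ᵥ ξ := by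
    rintro Js z ⟨ξ₀, θ, lam, ξt, μ, hfeas, hJeq, hlnn, hlz, hlA, hlB, htJ, hμz, hμA, hμB⟩
    have hopt0 : ∀ ξ' θ', A.mulVec ξ' + B.mulVec θ' ≤ c →
        (1 / 2) * (∑ j, (θ j - z j) ^ 2) + d ⬝ᵥ ξ₀
          ≤ (1 / 2) * (∑ j, (θ' j - z j) ^ 2) + d ⬝ᵥ ξ' := by
      intro ξ' θ' hfeas'
      apply key_ineq A B d z θ θ' ξ₀ ξ' lam hlA hlB
      apply Finset.sum_nonpos
      intro i _
      by_cases hi : i ∈ Js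
      · have h1 : (A.mulVec ξ₀ + B.mulVec θ) i = c i := hJeq i hi
        have h2 : (A.mulVec ξ' + B.mulVec θ') i ≤ c i := hfeas' i
        rw [h1]
        exact mul_nonpos_of_nonneg_of_nonpos (hlnn i) (by linarith)
      · rw [hlz i hi, zero_mul]
    have hθ : θ = θhat z :=
      theta_unique A B c d z ξ₀ (ξhat z) θ (θhat z) hfeas (hmin z).1 hopt0 (hmin z).2
    rw [hθ] at htJ hμB
    refine ⟨ξt, fun i hi => htJ i hi, ?_⟩
    intro ξ θ' heq
    apply key_ineq A B d z (θhat z) θ' ξt ξ μ hμA hμB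
    apply Finset.sum_nonpos
    intro i _
    by_cases hi : i ∈ Js
    · have h1 : (A.mulVec ξt + B.mulVec (θhat z)) i = c i := htJ i hi
      have h2 : (A.mulVec ξ + B.mulVec θ') i = c i := heq i hi
      rw [h1, h2, sub_self, mul_zero]
    · rw [hμz i hi, zero_mul]
  rw [MeasureTheory.ae_iff]
  apply measure_mono_null
    (t := ⋃ Js : Set (Fin m), frontier (certSet A B c d Js))
  · intro y hy
    simp only [Set.mem_setOf_eq] at hy
    by_cases hint :
      y ∈ interior (certSet A B c d {i : Fin m | A i ⬝ᵥ ξhat y + B i ⬝ᵥ θhat y = c i})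
    · exact absurd ⟨interior _, isOpen_interior, hint,
        fun z hz => hsub _ z (interior_subset hz)⟩ hy
    · apply Set.mem_iUnion.mpr
      refine ⟨{i : Fin m | A i ⬝ᵥ ξhat y + B i ⬝ᵥ θhat y = c i}, ?_⟩
      exact ⟨subset_closure (hmem y), hint⟩
  · apply measure_iUnion_null
    intro Js
    exact (convex_certSet A B c d Js).addHaar_frontier volume
end

section
/- Let X ∈ ℝ^{n×d}, D ∈ ℝ^{l×d} with rows d₁,…,d_l, and τ > 0. For y ∈ ℝⁿ let β̂(y) ∈ argmin_{β ∈ ℝᵈ} (1/2)‖y − Xβ‖₂² + τ‖Dβ‖₁ be a generalized Lasso solution, and let θ̂(y) = X β̂(y) (the fitted value, which is unique). Then for Lebesgue-almost every y ∈ ℝⁿ, the map θ̂ is differentiable at y with divergence equal to dim(X ker(D₀)), where D₀ is the submatrix of D consisting of the rows d_i with d_iᵀ β̂(y) = 0, ker(D₀) = {x ∈ ℝᵈ : D₀ x = 0}, and X ker(D₀) is its image under X. -/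
open Matrix MeasureTheory Metric Filter Set
open scoped NNReal Topology ENNReal

namespace GLasso

variable {n : ℕ}

lemma ball_intersect {Z : Set (Fin n → ℝ)} {y : Fin n → ℝ}
    (hy : Tendsto (fun r => volume (Z ∩ closedBall y r) / volume (closedBall y r))
      (𝓝[>] 0) (𝓝 1))
    (v : Fin n → ℝ) {ε : ℝ} (hε : 0 < ε) :
    ∀ᶠ t in 𝓝[>] (0:ℝ), (Z ∩ closedBall (y + t • v) (ε*t)).Nonempty := by
  by_contra hcon
  rw [Filter.not_eventually] at hcon
  set c : ℝ≥0∞ := ENNReal.ofReal ((ε/(‖v‖+ε))^n) with hc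
  have hvε : (0:ℝ) < ‖v‖ + ε := by positivity
  have hc0 : c ≠ 0 := by
    rw [hc, Ne, ENNReal.ofReal_eq_zero, not_le]
    positivity
  have hlt : (1:ℝ≥0∞) - c < 1 := ENNReal.sub_lt_self ENNReal.one_ne_top one_ne_zero hc0
  -- the bound on the density ratio when the small ball misses Z
  have bound : ∀ t : ℝ, 0 < t → Z ∩ closedBall (y + t • v) (ε*t) = ∅ →
      volume (Z ∩ closedBall y ((‖v‖+ε)*t)) / volume (closedBall y ((‖v‖+ε)*t)) ≤ 1 - c := by
    intro t ht hemp
    set r := ε*t with hr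
    set R := (‖v‖+ε)*t with hR
    have hrpos : 0 < r := by positivity
    have hRpos : 0 < R := by positivity
    have hsub : closedBall (y + t • v) r ⊆ closedBall y R := by
      intro z hz
      rw [mem_closedBall] at hz ⊢
      have h1 : dist z y ≤ dist z (y + t • v) + dist (y + t • v) y := dist_triangle _ _ _
      have h2 : dist (y + t • v) y = t * ‖v‖ := by
        rw [dist_eq_norm, add_sub_cancel_left, norm_smul, Real.norm_eq_abs, abs_of_pos ht]
      rw [h2] at h1
      rw [hR]
      rw [hr] at hz
      nlinarith
    have hZsub : Z ∩ closedBall y R ⊆ closedBall y R \ closedBall (y + t • v) r := by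
      intro z hz
      refine ⟨hz.2, fun hzs => ?_⟩
      have : z ∈ Z ∩ closedBall (y + t • v) (ε*t) := ⟨hz.1, by rwa [← hr]⟩
      rw [hemp] at this
      exact this
    have hμs : volume (closedBall (y + t • v) r) ≠ ⊤ := measure_closedBall_lt_top.ne
    have hdiff : volume (closedBall y R \ closedBall (y + t • v) r)
        = volume (closedBall y R) - volume (closedBall (y + t • v) r) :=
      measure_diff hsub measurableSet_closedBall.nullMeasurableSet hμs
    have hVb : volume (closedBall y R) = ENNReal.ofReal ((2*R)^n) := by
      rw [Real.volume_pi_closedBall y hRpos.le, Fintype.card_fin]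
    have hVs : volume (closedBall (y + t • v) r) = ENNReal.ofReal ((2*r)^n) := by
      rw [Real.volume_pi_closedBall _ hrpos.le, Fintype.card_fin]
    have hcVb : c * volume (closedBall y R) = volume (closedBall (y + t • v) r) := by
      rw [hVb, hVs, hc, ← ENNReal.ofReal_mul (by positivity)]
      congr 1
      rw [← mul_pow]
      congr 1
      field_simp
      ring
    have hVb0 : volume (closedBall y R) ≠ 0 := by
      rw [hVb, Ne, ENNReal.ofReal_eq_zero, not_le]
      positivity
    have hVbtop : volume (closedBall y R) ≠ ⊤ := by
      rw [hVb]; exact ENNReal.ofReal_ne_top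
    have hkey : volume (Z ∩ closedBall y R) ≤ (1 - c) * volume (closedBall y R) := by
      have h1 : volume (Z ∩ closedBall y R)
          ≤ volume (closedBall y R) - volume (closedBall (y + t • v) r) := by
        rw [← hdiff]
        exact measure_mono hZsub
      have h2 : (1 - c) * volume (closedBall y R)
          = 1 * volume (closedBall y R) - c * volume (closedBall y R) := by
        rw [ENNReal.sub_mul]
        intro _ _
        exact hVbtop
      rw [h2, one_mul, hcVb]
      exact h1
    calc volume (Z ∩ closedBall y R) / volume (closedBall y R)
        ≤ ((1 - c) * volume (closedBall y R)) / volume (closedBall y R) :=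
          ENNReal.div_le_div_right hkey _
      _ = 1 - c := by
          rw [mul_div_assoc, ENNReal.div_self hVb0 hVbtop, mul_one]
  -- push the frequently along t ↦ (‖v‖+ε)*t
  have hRtend : Tendsto (fun t : ℝ => (‖v‖+ε)*t) (𝓝[>] (0:ℝ)) (𝓝[>] (0:ℝ)) := by
    apply tendsto_nhdsWithin_of_tendsto_nhds_of_eventually_within
    · have h0 : Tendsto (fun t : ℝ => (‖v‖+ε)*t) (𝓝 (0:ℝ)) (𝓝 ((‖v‖+ε)*0)) :=
        (continuous_const.mul continuous_id).tendsto 0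
      rw [mul_zero] at h0
      exact h0.mono_left nhdsWithin_le_nhds
    · filter_upwards [self_mem_nhdsWithin] with t ht
      exact mul_pos hvε ht
  have hfreq1 : ∃ᶠ t in 𝓝[>] (0:ℝ),
      (fun r => volume (Z ∩ closedBall y r) / volume (closedBall y r) ≤ 1 - c) ((‖v‖+ε)*t) := by
    have hcon2 : ∃ᶠ t in 𝓝[>] (0:ℝ),
        Z ∩ closedBall (y + t • v) (ε*t) = ∅ ∧ t ∈ Ioi (0:ℝ) := by
      apply Filter.Frequently.and_eventually _ self_mem_nhdsWithin
      exact hcon.mono fun t ht => Set.not_nonempty_iff_eq_empty.mp ht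
    exact hcon2.mono fun t ⟨hemp, ht⟩ => bound t ht hemp
  have hfreq : ∃ᶠ r in 𝓝[>] (0:ℝ),
      volume (Z ∩ closedBall y r) / volume (closedBall y r) ≤ 1 - c :=
    hRtend.frequently hfreq1
  have hev : ∀ᶠ r in 𝓝[>] (0:ℝ),
      1 - c < volume (Z ∩ closedBall y r) / volume (closedBall y r) :=
    hy (Ioi_mem_nhds hlt)
  obtain ⟨r, hle, hgt⟩ := (hfreq.and_eventually hev).exists
  exact absurd hgt (not_lt.2 hle)

lemma fderiv_zero_of_density {Z : Set (Fin n → ℝ)} {y : Fin n → ℝ}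
    (hy : Tendsto (fun r => volume (Z ∩ closedBall y r) / volume (closedBall y r))
      (𝓝[>] 0) (𝓝 1))
    {h : (Fin n → ℝ) → (Fin n → ℝ)} (hzero : ∀ z ∈ Z, h z = 0) (hyZ : y ∈ Z)
    (hdiff : DifferentiableAt ℝ h y) : fderiv ℝ h y = 0 := by
  set M := fderiv ℝ h y with hM
  have hMd : HasFDerivAt h M y := hdiff.hasFDerivAt
  have hlittleO := hMd.isLittleO
  refine ContinuousLinearMap.ext fun v => ?_
  show M v = (0 : (Fin n → ℝ) →L[ℝ] (Fin n → ℝ)) v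
  rw [ContinuousLinearMap.zero_apply]
  have hnorm : ∀ δ : ℝ, 0 < δ → ‖M v‖ ≤ δ := by
    intro δ hδ
    set ε := min 1 (δ/(2*(‖M‖+1))) with hε
    have hεpos : 0 < ε := lt_min one_pos (by positivity)
    have hε1 : ε ≤ 1 := min_le_left _ _
    have hε2 : ε ≤ δ/(2*(‖M‖+1)) := min_le_right _ _
    set cc := δ/(2*(‖v‖+2)) with hcc
    have hccpos : 0 < cc := by positivity
    have hev := hlittleO.def hccpos
    rw [Metric.eventually_nhds_iff] at hev
    obtain ⟨r₀, hr₀, hball⟩ := hev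
    have hint := ball_intersect hy v hεpos
    have hsmall : ∀ᶠ t in 𝓝[>] (0:ℝ), t * (‖v‖ + ε) < r₀ := by
      have htend : Tendsto (fun t : ℝ => t * (‖v‖ + ε)) (𝓝 (0:ℝ)) (𝓝 (0 * (‖v‖ + ε))) :=
        (continuous_id.mul continuous_const).tendsto 0
      rw [zero_mul] at htend
      exact (htend.eventually (eventually_lt_nhds hr₀)).filter_mono nhdsWithin_le_nhds
    obtain ⟨t, hne, hts, htpos⟩ := (hint.and (hsmall.and self_mem_nhdsWithin)).exists
    obtain ⟨e, heZ, hecb⟩ := hne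
    rw [mem_closedBall] at hecb
    have htpos' : (0:ℝ) < t := htpos
    have heynorm : ‖e - y‖ < r₀ := by
      have h1 : dist e y ≤ dist e (y + t • v) + dist (y + t • v) y := dist_triangle _ _ _
      have h2 : dist (y + t • v) y = t * ‖v‖ := by
        rw [dist_eq_norm, add_sub_cancel_left, norm_smul, Real.norm_eq_abs, abs_of_pos htpos']
      rw [← dist_eq_norm]
      calc dist e y ≤ ε*t + t * ‖v‖ := by rw [h2] at h1; linarith [hecb]
        _ = t * (‖v‖ + ε) := by ring
        _ < r₀ := hts
    have hey2 : ‖e - y‖ ≤ t * (‖v‖ + ε) := by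
      have h1 : dist e y ≤ dist e (y + t • v) + dist (y + t • v) y := dist_triangle _ _ _
      have h2 : dist (y + t • v) y = t * ‖v‖ := by
        rw [dist_eq_norm, add_sub_cancel_left, norm_smul, Real.norm_eq_abs, abs_of_pos htpos']
      rw [← dist_eq_norm]
      rw [h2] at h1
      nlinarith [hecb]
    have hballe := hball (show dist e y < r₀ by rwa [dist_eq_norm])
    rw [hzero e heZ, hzero y hyZ] at hballe
    have hsimp : (0:Fin n → ℝ) - 0 - M (e - y) = -(M (e - y)) := by simp
    rw [hsimp, norm_neg] at hballe
    -- hballe : ‖M (e - y)‖ ≤ cc * ‖e - y‖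
    have hMe2 : ‖M (e - y)‖ ≤ cc * (t * (‖v‖ + ε)) :=
      hballe.trans (mul_le_mul_of_nonneg_left hey2 hccpos.le)
    have hsmalld : ‖e - (y + t • v)‖ ≤ ε * t := by rwa [← dist_eq_norm]
    have hsplit : M (t • v) = M (e - y) - M (e - (y + t • v)) := by
      rw [← map_sub]
      congr 1
      abel
    have hMbound : ‖M (t • v)‖ ≤ cc * (t * (‖v‖ + ε)) + ‖M‖ * (ε * t) := by
      rw [hsplit]
      refine (norm_sub_le _ _).trans ?_
      have h3 : ‖M (e - (y + t • v))‖ ≤ ‖M‖ * (ε * t) :=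
        (M.le_opNorm _).trans (mul_le_mul_of_nonneg_left hsmalld (norm_nonneg M))
      linarith [hMe2]
    have hMtv : ‖M (t • v)‖ = t * ‖M v‖ := by
      rw [_root_.map_smul, norm_smul, Real.norm_eq_abs, abs_of_pos htpos']
    rw [hMtv] at hMbound
    have hdiv : ‖M v‖ ≤ cc * (‖v‖ + ε) + ‖M‖ * ε := by
      have : t * ‖M v‖ ≤ t * (cc * (‖v‖ + ε) + ‖M‖ * ε) := by nlinarith [hMbound]
      exact (mul_le_mul_iff_right₀ htpos').mp this
    have hv2 : (0:ℝ) < ‖v‖ + 2 := by positivity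
    have hb1 : cc * (‖v‖ + ε) ≤ δ/2 := by
      have e1 : cc * (‖v‖ + 2) = δ/2 := by
        rw [hcc]
        field_simp
      have e2 : cc * (‖v‖ + ε) ≤ cc * (‖v‖ + 2) :=
        mul_le_mul_of_nonneg_left (by linarith) hccpos.le
      linarith
    have hb2 : ‖M‖ * ε ≤ δ/2 := by
      set s := δ/(2*(‖M‖+1)) with hs
      have hMp : (0:ℝ) < ‖M‖ + 1 := by positivity
      have hs0 : 0 ≤ s := by positivity
      have hseq : s * (2*(‖M‖+1)) = δ := by
        rw [hs]
        field_simp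
      have h4 : ‖M‖ * ε ≤ ‖M‖ * s := mul_le_mul_of_nonneg_left hε2 (norm_nonneg M)
      nlinarith [norm_nonneg (M : (Fin n → ℝ) →L[ℝ] (Fin n → ℝ))]
    linarith
  by_contra hne0
  have hpos : 0 < ‖M v‖ := by
    rcases (norm_nonneg (M v)).lt_or_eq with h | h
    · exact h
    · exact absurd (norm_eq_zero.mp h.symm) hne0
  linarith [hnorm (‖M v‖/2) (by linarith)]


variable {n d l : ℕ} {X : Matrix (Fin n) (Fin d) ℝ} {D : Matrix (Fin l) (Fin d) ℝ}
  {τ : ℝ} {βhat : (Fin n → ℝ) → (Fin d → ℝ)}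

section Lip

variable (hτ : 0 < τ)
  (hmin : ∀ y, ∀ β : Fin d → ℝ,
      (1 / 2) * (∑ i, (y i - X.mulVec (βhat y) i) ^ 2) + τ * (∑ i, |D.mulVec (βhat y) i|)
        ≤ (1 / 2) * (∑ i, (y i - X.mulVec β i) ^ 2) + τ * (∑ i, |D.mulVec β i|))
include hτ hmin

lemma sq_bound (z z' : Fin n → ℝ) :
    ∑ j, (X.mulVec (βhat z) j - X.mulVec (βhat z') j)^2 ≤ 4 * ∑ j, (z j - z' j)^2 := by
  have h1 := hmin z ((1/2 : ℝ) • (βhat z + βhat z'))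
  have h2 := hmin z' ((1/2 : ℝ) • (βhat z + βhat z'))
  set β := βhat z with hβ
  set β' := βhat z' with hβ'
  set m : Fin d → ℝ := (1/2 : ℝ) • (β + β') with hm
  set a := X.mulVec β with ha
  set b := X.mulVec β' with hb
  have hXm : ∀ j, X.mulVec m j = (a j + b j)/2 := by
    intro j
    rw [hm, Matrix.mulVec_smul, Matrix.mulVec_add]
    simp only [Pi.smul_apply, Pi.add_apply, ha, hb, smul_eq_mul]
    ring
  have hDm : ∀ i, D.mulVec m i = (D.mulVec β i + D.mulVec β' i)/2 := by
    intro i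
    rw [hm, Matrix.mulVec_smul, Matrix.mulVec_add]
    simp only [Pi.smul_apply, Pi.add_apply, smul_eq_mul]
    ring
  set A := ∑ j, (z j - a j)^2 with hA
  set B := ∑ j, (z j - b j)^2 with hB
  set A' := ∑ j, (z' j - a j)^2 with hA'
  set B' := ∑ j, (z' j - b j)^2 with hB'
  set G := ∑ j, (a j - b j)^2 with hG
  set V := ∑ j, (z j - z' j)^2 with hV
  set S := ∑ j, (z j - z' j) * (a j - b j) with hS
  set Na := ∑ i, |D.mulVec β i| with hNa
  set Nb := ∑ i, |D.mulVec β' i| with hNb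
  set Qm := ∑ j, (z j - X.mulVec m j)^2 with hQm
  set Qm' := ∑ j, (z' j - X.mulVec m j)^2 with hQm'
  have hG0 : 0 ≤ G := Finset.sum_nonneg fun j _ => sq_nonneg _
  have hV0 : 0 ≤ V := Finset.sum_nonneg fun j _ => sq_nonneg _
  have e1 : 4 * Qm = 2*A + 2*B - G := by
    rw [hQm, hA, hB, hG, Finset.mul_sum, Finset.mul_sum, Finset.mul_sum,
      ← Finset.sum_add_distrib, ← Finset.sum_sub_distrib]
    refine Finset.sum_congr rfl fun j _ => ?_
    rw [hXm j]; ring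
  have e2 : 4 * Qm' = 2*A' + 2*B' - G := by
    rw [hQm', hA', hB', hG, Finset.mul_sum, Finset.mul_sum, Finset.mul_sum,
      ← Finset.sum_add_distrib, ← Finset.sum_sub_distrib]
    refine Finset.sum_congr rfl fun j _ => ?_
    rw [hXm j]; ring
  have e5 : 2*S = B + A' - A - B' := by
    rw [hS, hA, hB, hA', hB', Finset.mul_sum, ← Finset.sum_add_distrib,
      ← Finset.sum_sub_distrib, ← Finset.sum_sub_distrib]
    refine Finset.sum_congr rfl fun j _ => ?_
    ring
  have eNm : ∑ i, |D.mulVec m i| ≤ (Na + Nb)/2 := by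
    have hstep : ∀ i ∈ Finset.univ, |D.mulVec m i| ≤ (|D.mulVec β i| + |D.mulVec β' i|)/2 := by
      intro i _
      rw [hDm i, abs_div]
      have h3 := abs_add_le (D.mulVec β i) (D.mulVec β' i)
      have h4 : |(2:ℝ)| = 2 := by norm_num
      rw [h4]
      linarith
    refine le_trans (Finset.sum_le_sum hstep) ?_
    rw [hNa, hNb, ← Finset.sum_add_distrib, Finset.sum_div]
  have hτNm := mul_le_mul_of_nonneg_left eNm (le_of_lt hτ)
  have hGS : G ≤ 2*S := by linarith
  have hCS : S^2 ≤ V * G := by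
    have := Finset.sum_mul_sq_le_sq_mul_sq Finset.univ (fun j => z j - z' j) (fun j => a j - b j)
    simpa [hS, hV, hG] using this
  rcases eq_or_lt_of_le hG0 with h0 | h0
  · linarith
  · have hS0 : 0 ≤ S := by linarith
    have hGG : G * G ≤ (2*S)*(2*S) := mul_self_le_mul_self hG0 hGS
    have hGG2 : G * G ≤ (4*V) * G := by nlinarith [hCS]
    have := le_of_mul_le_mul_right hGG2 h0
    linarith

lemma lipschitz : LipschitzWith (2*(n+1) : ℝ≥0) (fun z => X.mulVec (βhat z)) := by
  apply LipschitzWith.of_dist_le_mul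
  intro z z'
  have hd0 : (0:ℝ) ≤ dist z z' := dist_nonneg
  have key := sq_bound hτ hmin z z'
  have hVle : ∑ j, (z j - z' j)^2 ≤ n * (dist z z')^2 := by
    have hstep : ∀ j ∈ Finset.univ, (z j - z' j)^2 ≤ (dist z z')^2 := by
      intro j _
      have h1 : dist (z j) (z' j) ≤ dist z z' := dist_le_pi_dist z z' j
      have h2 : |z j - z' j| ≤ dist z z' := by rwa [Real.dist_eq] at h1
      calc (z j - z' j)^2 = |z j - z' j|^2 := (sq_abs _).symm
        _ ≤ (dist z z')^2 := by
            apply pow_le_pow_left₀ (abs_nonneg _) h2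
    refine le_trans (Finset.sum_le_sum hstep) ?_
    rw [Finset.sum_const, Finset.card_univ, Fintype.card_fin, nsmul_eq_mul]
  rw [dist_pi_le_iff (by positivity)]
  intro j
  set K : ℝ := ((2*(n+1) : ℝ≥0) : ℝ) with hK
  have hKval : K = 2*((n:ℝ)+1) := by rw [hK]; push_cast; ring
  have hK0 : 0 ≤ K := by rw [hKval]; positivity
  set dj := dist (X.mulVec (βhat z) j) (X.mulVec (βhat z') j) with hdj
  have hj : dj^2 ≤ ∑ j, (X.mulVec (βhat z) j - X.mulVec (βhat z') j)^2 := by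
    rw [hdj, Real.dist_eq, sq_abs]
    exact Finset.single_le_sum (f := fun j => (X.mulVec (βhat z) j - X.mulVec (βhat z') j)^2)
      (fun j _ => sq_nonneg _) (Finset.mem_univ j)
  have hsq : dj^2 ≤ (K * dist z z')^2 := by
    have hle : dj^2 ≤ 4 * ((n:ℝ) * (dist z z')^2) := by
      refine hj.trans (key.trans ?_)
      have := mul_le_mul_of_nonneg_left hVle (by norm_num : (0:ℝ) ≤ 4)
      linarith
    refine hle.trans ?_
    rw [hKval]
    have hn0 : (0:ℝ) ≤ (n:ℝ) := Nat.cast_nonneg n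
    nlinarith [sq_nonneg (dist z z'), hd0, hn0]
  have hdj0 : 0 ≤ dj := dist_nonneg
  nlinarith [hsq, hdj0, mul_nonneg hK0 hd0]

end Lip

section Stat

variable (hτ : 0 < τ)
  (hmin : ∀ y, ∀ β : Fin d → ℝ,
      (1 / 2) * (∑ i, (y i - X.mulVec (βhat y) i) ^ 2) + τ * (∑ i, |D.mulVec (βhat y) i|)
        ≤ (1 / 2) * (∑ i, (y i - X.mulVec β i) ^ 2) + τ * (∑ i, |D.mulVec β i|))
include hτ hmin

lemma stationarity (z : Fin n → ℝ) (w : Fin d → ℝ)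
    (hw : ∀ i, D.mulVec (βhat z) i = 0 → D.mulVec w i = 0) :
    ∑ j, (X.mulVec w j) * (z j - X.mulVec (βhat z) j)
      = τ * ∑ i, (SignType.sign (D.mulVec (βhat z) i) : ℝ) * D.mulVec w i := by
  set β := βhat z with hβ
  set S := ∑ j, (X.mulVec w j) * (z j - X.mulVec β j) with hS
  set T := ∑ i, (SignType.sign (D.mulVec β i) : ℝ) * D.mulVec w i with hT
  set K := ∑ j, (X.mulVec w j)^2 with hKdef
  have hK0 : 0 ≤ K := Finset.sum_nonneg fun j _ => sq_nonneg _
  -- a small positive δ below which all signs are preserved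
  set F : Finset ℝ := insert 1 (Finset.univ.image
    (fun i : Fin l => if D.mulVec β i = 0 then 1 else |D.mulVec β i| / (|D.mulVec w i| + 1)))
    with hF
  have hFne : F.Nonempty := ⟨1, Finset.mem_insert_self _ _⟩
  set δ := F.min' hFne with hδdef
  have hδpos : 0 < δ := by
    rw [hδdef]
    apply (Finset.lt_min'_iff F hFne).2
    intro x hx
    rw [hF] at hx
    rcases Finset.mem_insert.1 hx with h | h
    · rw [h]; norm_num
    · rcases Finset.mem_image.1 h with ⟨i, _, rfl⟩
      by_cases hzero : D.mulVec β i = 0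
      · simp [hzero]
      · simp only [hzero, if_false]
        apply div_pos (abs_pos.2 hzero)
        positivity
  have hδsign : ∀ t : ℝ, |t| ≤ δ → ∀ i : Fin l, D.mulVec β i ≠ 0 →
      |t * D.mulVec w i| < |D.mulVec β i| := by
    intro t ht i hi
    have hmem : |D.mulVec β i| / (|D.mulVec w i| + 1) ∈ F := by
      rw [hF]
      refine Finset.mem_insert_of_mem (Finset.mem_image.2 ⟨i, Finset.mem_univ i, ?_⟩)
      simp [hi]
    have hδle : δ ≤ |D.mulVec β i| / (|D.mulVec w i| + 1) := Finset.min'_le F _ hmem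
    have h1 : |t * D.mulVec w i| = |t| * |D.mulVec w i| := abs_mul _ _
    have h2 : |t| * |D.mulVec w i| ≤ (|D.mulVec β i| / (|D.mulVec w i| + 1)) * |D.mulVec w i| := by
      apply mul_le_mul (le_trans ht hδle) le_rfl (abs_nonneg _)
      positivity
    have h3 : (|D.mulVec β i| / (|D.mulVec w i| + 1)) * |D.mulVec w i| < |D.mulVec β i| := by
      rw [div_mul_eq_mul_div, div_lt_iff₀ (by positivity)]
      have : 0 < |D.mulVec β i| := abs_pos.2 hi
      nlinarith [abs_nonneg (D.mulVec w i)]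
    linarith [h1.le]
  -- penalty expansion
  have hpen : ∀ t : ℝ, |t| ≤ δ →
      ∑ i, |D.mulVec (β + t • w) i| = (∑ i, |D.mulVec β i|) + t * T := by
    intro t ht
    have : ∀ i ∈ Finset.univ, |D.mulVec (β + t • w) i|
        = |D.mulVec β i| + t * ((SignType.sign (D.mulVec β i) : ℝ) * D.mulVec w i) := by
      intro i _
      rw [Matrix.mulVec_add, Matrix.mulVec_smul]
      simp only [Pi.add_apply, Pi.smul_apply, smul_eq_mul]
      by_cases hzero : D.mulVec β i = 0
      · rw [hzero, hw i hzero]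
        simp
      · have hlt := hδsign t ht i hzero
        rcases lt_or_gt_of_ne hzero with hneg | hpos
        · have habs : |D.mulVec β i| = -(D.mulVec β i) := abs_of_neg hneg
          have hsum_neg : D.mulVec β i + t * D.mulVec w i < 0 := by
            have := abs_lt.1 hlt
            rw [habs] at this
            linarith [this.1, this.2]
          rw [abs_of_neg hsum_neg, sign_neg hneg, habs]
          simp only [SignType.coe_neg_one]
          ring
        · have habs : |D.mulVec β i| = D.mulVec β i := abs_of_pos hpos
          have hsum_pos : 0 < D.mulVec β i + t * D.mulVec w i := by
            have := abs_lt.1 hlt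
            rw [habs] at this
            linarith [this.1]
          rw [abs_of_pos hsum_pos, sign_pos hpos, habs]
          simp only [SignType.coe_one]
          ring
    rw [Finset.sum_congr rfl this, Finset.sum_add_distrib, hT, Finset.mul_sum]
  -- quadratic expansion
  have hquad : ∀ t : ℝ,
      ∑ j, (z j - X.mulVec (β + t • w) j)^2
        = (∑ j, (z j - X.mulVec β j)^2) - 2*t*S + t^2 * K := by
    intro t
    have : ∀ j ∈ Finset.univ, (z j - X.mulVec (β + t • w) j)^2
        = (z j - X.mulVec β j)^2 - 2*t*((X.mulVec w j) * (z j - X.mulVec β j))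
            + t^2 * (X.mulVec w j)^2 := by
      intro j _
      rw [Matrix.mulVec_add, Matrix.mulVec_smul]
      simp only [Pi.add_apply, Pi.smul_apply, smul_eq_mul]
      ring
    rw [Finset.sum_congr rfl this]
    simp only [Finset.sum_add_distrib, Finset.sum_sub_distrib, ← Finset.mul_sum, hS, hKdef]
  -- the key inequality for |t| ≤ δ
  have hineq : ∀ t : ℝ, |t| ≤ δ → 0 ≤ t * (-S + τ * T) + t^2 * (K/2) := by
    intro t ht
    have h := hmin z (β + t • w)
    rw [hquad t] at h
    rw [hpen t ht] at h
    have hτT : τ * ((∑ i, |D.mulVec β i|) + t * T)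
        = τ * (∑ i, |D.mulVec β i|) + t * (τ * T) := by ring
    rw [hτT] at h
    nlinarith [h]
  -- conclude the linear coefficient vanishes
  have hc : -S + τ * T = 0 := by
    set c := -S + τ * T with hcdef
    by_contra hc0
    have habs : 0 < |c| := abs_pos.2 hc0
    set t0 := min δ (|c|/(K+1)) with ht0
    have ht0pos : 0 < t0 := lt_min hδpos (by positivity)
    have ht0le : t0 ≤ δ := min_le_left _ _
    have ht0le2 : t0 ≤ |c|/(K+1) := min_le_right _ _
    -- choose t with t*c = -t0*|c|
    set t := if 0 < c then -t0 else t0 with ht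
    have htabs : |t| ≤ δ := by
      rw [ht]
      split
      · rw [abs_neg, abs_of_pos ht0pos]; exact ht0le
      · rw [abs_of_pos ht0pos]; exact ht0le
    have htc : t * c = -(t0 * |c|) := by
      rw [ht]
      rcases lt_trichotomy c 0 with hneg | hzero | hpos
      · rw [if_neg (by linarith), abs_of_neg hneg]; ring
      · exact absurd hzero hc0
      · rw [if_pos hpos, abs_of_pos hpos]; ring
    have ht2 : t^2 = t0^2 := by
      rw [ht]; split <;> ring
    have := hineq t htabs
    rw [htc, ht2] at this
    -- 0 ≤ -(t0*|c|) + t0^2*(K/2), so |c| ≤ t0*K/2 ≤ (|c|/(K+1))*K/2 < |c|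
    have hb1 : t0 * |c| ≤ t0^2 * (K/2) := by linarith
    have hb2 : |c| ≤ t0 * (K/2) := by
      have e : t0^2 * (K/2) = t0 * (t0 * (K/2)) := by ring
      rw [e] at hb1
      exact (mul_le_mul_iff_right₀ ht0pos).mp hb1
    have hb3 : t0 * (K/2) ≤ (|c|/(K+1)) * (K/2) := by
      apply mul_le_mul_of_nonneg_right ht0le2
      linarith
    have hb4 : (|c|/(K+1)) * (K/2) < |c| := by
      rw [div_mul_eq_mul_div, div_lt_iff₀ (by linarith : (0:ℝ) < K+1)]
      exact mul_lt_mul_of_pos_left (by linarith) habs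
    linarith
  linarith [hc]

end Stat

section Proj

variable (X : Matrix (Fin n) (Fin d) ℝ) (D : Matrix (Fin l) (Fin d) ℝ)

/-- Kernel of the active rows. -/
noncomputable def ksub (σ : Fin l → SignType) : Submodule ℝ (Fin d → ℝ) :=
  ⨅ i ∈ {i : Fin l | σ i = 0},
    LinearMap.ker ((LinearMap.proj i : (Fin l → ℝ) →ₗ[ℝ] ℝ).comp D.mulVecLin)

lemma mem_ksub {σ : Fin l → SignType} {w : Fin d → ℝ} :
    w ∈ ksub D σ ↔ ∀ i, σ i = 0 → D.mulVec w i = 0 := by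
  simp only [ksub, Submodule.mem_iInf, LinearMap.mem_ker, LinearMap.comp_apply,
    LinearMap.proj_apply, Matrix.mulVecLin_apply, Set.mem_setOf_eq]

/-- The image subspace X ker(D₀). -/
noncomputable def Lsub (σ : Fin l → SignType) : Submodule ℝ (Fin n → ℝ) :=
  (ksub D σ).map X.mulVecLin

lemma mem_Lsub {σ : Fin l → SignType} {x : Fin n → ℝ} :
    x ∈ Lsub X D σ ↔ ∃ w, w ∈ ksub D σ ∧ X.mulVec w = x := by
  simp only [Lsub, Submodule.mem_map, Matrix.mulVecLin_apply]

/-- Transfer to Euclidean space. -/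
noncomputable def eqvE : EuclideanSpace ℝ (Fin n) ≃ₗ[ℝ] (Fin n → ℝ) :=
  WithLp.linearEquiv 2 ℝ (Fin n → ℝ)

noncomputable def LsubE (σ : Fin l → SignType) : Submodule ℝ (EuclideanSpace ℝ (Fin n)) :=
  (Lsub X D σ).comap (eqvE (n := n)).toLinearMap

lemma mem_LsubE {σ : Fin l → SignType} {x : EuclideanSpace ℝ (Fin n)} :
    x ∈ LsubE X D σ ↔ eqvE (n := n) x ∈ Lsub X D σ := by
  simp [LsubE, Submodule.mem_comap]

/-- An orthonormal basis of `LsubE`, as vectors of `ℝⁿ`. -/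
noncomputable def bv (σ : Fin l → SignType) (i : Fin (Module.finrank ℝ ↥(LsubE X D σ))) :
    Fin n → ℝ :=
  eqvE (n := n) ((stdOrthonormalBasis ℝ ↥(LsubE X D σ)) i : EuclideanSpace ℝ (Fin n))

lemma bv_mem (σ : Fin l → SignType) (i) : bv X D σ i ∈ Lsub X D σ := by
  rw [bv, ← mem_LsubE]
  exact SetLike.coe_mem _

lemma bv_ortho (σ : Fin l → SignType) (i i') :
    ∑ j, bv X D σ i j * bv X D σ i' j = if i = i' then 1 else 0 := by
  classical
  have horth := (stdOrthonormalBasis ℝ ↥(LsubE X D σ)).orthonormal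
  have h := orthonormal_iff_ite.mp horth i i'
  rw [Submodule.coe_inner] at h
  rw [← h, PiLp.inner_apply]
  exact Finset.sum_congr rfl fun j _ => mul_comm _ _

lemma inner_eq_sum {σ : Fin l → SignType} (i) (y : ↥(LsubE X D σ)) :
    (inner ℝ ((stdOrthonormalBasis ℝ ↥(LsubE X D σ)) i) y : ℝ)
      = ∑ k, bv X D σ i k * (eqvE (n := n)) (y : EuclideanSpace ℝ (Fin n)) k := by
  rw [Submodule.coe_inner, PiLp.inner_apply]
  exact Finset.sum_congr rfl fun k _ => mul_comm _ _

lemma bv_repr {σ : Fin l → SignType} {x : Fin n → ℝ} (hx : x ∈ Lsub X D σ) (j : Fin n) :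
    x j = ∑ i, (∑ k, bv X D σ i k * x k) * bv X D σ i j := by
  classical
  set b := stdOrthonormalBasis ℝ ↥(LsubE X D σ) with hbdef
  set x' : ↥(LsubE X D σ) := ⟨(eqvE (n := n)).symm x, by
    rw [mem_LsubE, LinearEquiv.apply_symm_apply]; exact hx⟩ with hx'def
  have hs := b.sum_repr' x'
  have hcoe : (∑ i, (inner ℝ (b i) x' : ℝ) • ((b i : ↥(LsubE X D σ)) : EuclideanSpace ℝ (Fin n)))
      = ((x' : ↥(LsubE X D σ)) : EuclideanSpace ℝ (Fin n)) := by
    rw [← congrArg Subtype.val hs, Submodule.coe_sum]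
    rfl
  have hxv : (eqvE (n := n)) ((x' : ↥(LsubE X D σ)) : EuclideanSpace ℝ (Fin n)) = x := by
    show (eqvE (n := n)) ((eqvE (n := n)).symm x) = x
    exact LinearEquiv.apply_symm_apply _ _
  have happ := congrFun (congrArg (fun (v : EuclideanSpace ℝ (Fin n)) => (eqvE (n := n)) v) hcoe) j
  simp only [hxv] at happ
  rw [← happ, map_sum]
  have hterm : ∀ i, (eqvE (n := n)) ((inner ℝ (b i) x' : ℝ) • ((b i : ↥(LsubE X D σ))
      : EuclideanSpace ℝ (Fin n))) = (inner ℝ (b i) x' : ℝ) • bv X D σ i := by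
    intro i
    rw [LinearEquiv.map_smul]
    rfl
  rw [Finset.sum_congr rfl (fun i _ => hterm i), Finset.sum_apply]
  refine Finset.sum_congr rfl fun i _ => ?_
  rw [Pi.smul_apply, smul_eq_mul]
  have hi := inner_eq_sum X D i x'
  have hxv2 : (eqvE (n := n)) ((x' : ↥(LsubE X D σ)) : EuclideanSpace ℝ (Fin n)) = x := hxv
  rw [hxv2] at hi
  rw [hi]

/-- The orthogonal-projection matrix onto `Lsub`. -/
noncomputable def Pmat (σ : Fin l → SignType) : Matrix (Fin n) (Fin n) ℝ :=
  Matrix.of fun j k => ∑ i, bv X D σ i j * bv X D σ i k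

lemma mulVec_eq_sum' (M : Matrix (Fin n) (Fin n) ℝ) (x : Fin n → ℝ) (j : Fin n) :
    M.mulVec x j = ∑ k, M j k * x k := by
  simp [Matrix.mulVec, dotProduct]

lemma Pmat_apply_pt (σ : Fin l → SignType) (x : Fin n → ℝ) (j : Fin n) :
    (Pmat X D σ).mulVec x j = ∑ i, (∑ k, bv X D σ i k * x k) * bv X D σ i j := by
  rw [mulVec_eq_sum']
  calc ∑ k, (Pmat X D σ) j k * x k
      = ∑ k, ∑ i, bv X D σ i j * bv X D σ i k * x k := by
        refine Finset.sum_congr rfl fun k _ => ?_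
        simp only [Pmat, Matrix.of_apply]
        rw [Finset.sum_mul]
    _ = ∑ i, ∑ k, bv X D σ i j * bv X D σ i k * x k := Finset.sum_comm
    _ = ∑ i, (∑ k, bv X D σ i k * x k) * bv X D σ i j := by
        refine Finset.sum_congr rfl fun i _ => ?_
        rw [Finset.sum_mul]
        refine Finset.sum_congr rfl fun k _ => ?_
        ring

lemma Pmat_fix {σ : Fin l → SignType} {x : Fin n → ℝ} (hx : x ∈ Lsub X D σ) :
    (Pmat X D σ).mulVec x = x := by
  funext j
  rw [Pmat_apply_pt]
  exact (bv_repr X D hx j).symm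

lemma Pmat_mem (σ : Fin l → SignType) (x : Fin n → ℝ) :
    (Pmat X D σ).mulVec x ∈ Lsub X D σ := by
  have : (Pmat X D σ).mulVec x = ∑ i, (∑ k, bv X D σ i k * x k) • bv X D σ i := by
    funext j
    rw [Pmat_apply_pt, Finset.sum_apply]
    exact Finset.sum_congr rfl fun i _ => by rw [Pi.smul_apply, smul_eq_mul]
  rw [this]
  exact Submodule.sum_mem _ fun i _ => Submodule.smul_mem _ _ (bv_mem X D σ i)

lemma Pmat_kill {σ : Fin l → SignType} {u : Fin n → ℝ}
    (hu : ∀ x ∈ Lsub X D σ, ∑ j, x j * u j = 0) :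
    (Pmat X D σ).mulVec u = 0 := by
  funext j
  rw [Pmat_apply_pt]
  have : ∀ i ∈ Finset.univ, (∑ k, bv X D σ i k * u k) * bv X D σ i j = 0 := by
    intro i _
    rw [hu (bv X D σ i) (bv_mem X D σ i), zero_mul]
  rw [Finset.sum_congr rfl this, Finset.sum_const, smul_zero]
  rfl

lemma Pmat_trace (σ : Fin l → SignType) :
    ∑ j, Pmat X D σ j j = (Module.finrank ℝ ↥(Lsub X D σ) : ℝ) := by
  have h1 : ∑ j, Pmat X D σ j j = ∑ i, ∑ j, bv X D σ i j * bv X D σ i j := by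
    rw [Finset.sum_comm]
    exact Finset.sum_congr rfl fun j _ => by simp only [Pmat, Matrix.of_apply]
  rw [h1]
  have h2 : ∀ i ∈ Finset.univ, ∑ j, bv X D σ i j * bv X D σ i j = 1 := by
    intro i _
    rw [bv_ortho X D σ i i, if_pos rfl]
  rw [Finset.sum_congr rfl h2, Finset.sum_const, Finset.card_univ, Fintype.card_fin,
    nsmul_eq_mul, mul_one]
  have hmapeq : LsubE X D σ
      = (Lsub X D σ).map
        (((eqvE (n := n)).symm : (Fin n → ℝ) ≃ₗ[ℝ] EuclideanSpace ℝ (Fin n)) :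
          (Fin n → ℝ) →ₗ[ℝ] EuclideanSpace ℝ (Fin n)) := by
    ext v
    rw [mem_LsubE, Submodule.mem_map_equiv, LinearEquiv.symm_symm]
  rw [hmapeq]
  norm_cast
  exact LinearEquiv.finrank_map_eq _ _

end Proj

section Aff

variable {X : Matrix (Fin n) (Fin d) ℝ} {D : Matrix (Fin l) (Fin d) ℝ}
  {τ : ℝ} {βhat : (Fin n → ℝ) → (Fin d → ℝ)}

/-- The sign pattern of a point. -/
noncomputable def pat (D : Matrix (Fin l) (Fin d) ℝ) (βhat : (Fin n → ℝ) → (Fin d → ℝ))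
    (z : Fin n → ℝ) : Fin l → SignType :=
  fun i => SignType.sign (D.mulVec (βhat z) i)

variable (hτ : 0 < τ)
  (hmin : ∀ y, ∀ β : Fin d → ℝ,
      (1 / 2) * (∑ i, (y i - X.mulVec (βhat y) i) ^ 2) + τ * (∑ i, |D.mulVec (βhat y) i|)
        ≤ (1 / 2) * (∑ i, (y i - X.mulVec β i) ^ 2) + τ * (∑ i, |D.mulVec β i|))

lemma theta_mem {σ : Fin l → SignType} {z : Fin n → ℝ} (hz : pat D βhat z = σ) :
    X.mulVec (βhat z) ∈ Lsub X D σ := by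
  rw [mem_Lsub X D]
  refine ⟨βhat z, ?_, rfl⟩
  rw [mem_ksub D]
  intro i hi
  have : SignType.sign (D.mulVec (βhat z) i) = 0 := by
    rw [show SignType.sign (D.mulVec (βhat z) i) = pat D βhat z i from rfl, hz, hi]
  exact sign_eq_zero_iff.mp this

include hτ hmin

lemma affine_on_pattern {σ : Fin l → SignType} {z z' : Fin n → ℝ}
    (hz : pat D βhat z = σ) (hz' : pat D βhat z' = σ) :
    X.mulVec (βhat z) - X.mulVec (βhat z') = (Pmat X D σ).mulVec (z - z') := by
  set θz := X.mulVec (βhat z) with hθz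
  set θz' := X.mulVec (βhat z') with hθz'
  have hmem : θz - θz' ∈ Lsub X D σ :=
    Submodule.sub_mem _ (theta_mem hz) (theta_mem hz')
  set u : Fin n → ℝ := (z - θz) - (z' - θz') with hu
  have horth : ∀ x ∈ Lsub X D σ, ∑ j, x j * u j = 0 := by
    intro x hx
    obtain ⟨w, hw, rfl⟩ := (mem_Lsub X D).mp hx
    have hw1 : ∀ i, D.mulVec (βhat z) i = 0 → D.mulVec w i = 0 := by
      intro i hi
      refine (mem_ksub D).mp hw i ?_
      rw [← hz]
      show SignType.sign (D.mulVec (βhat z) i) = 0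
      rw [hi, sign_zero]
    have hw2 : ∀ i, D.mulVec (βhat z') i = 0 → D.mulVec w i = 0 := by
      intro i hi
      refine (mem_ksub D).mp hw i ?_
      rw [← hz']
      show SignType.sign (D.mulVec (βhat z') i) = 0
      rw [hi, sign_zero]
    have hs1 := stationarity hτ hmin z w hw1
    have hs2 := stationarity hτ hmin z' w hw2
    have hsgn1 : ∀ i, (SignType.sign (D.mulVec (βhat z) i) : ℝ) = ((σ i : ℤ) : ℝ) := by
      intro i
      rw [show SignType.sign (D.mulVec (βhat z) i) = pat D βhat z i from rfl, hz]
      simp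
    have hsgn2 : ∀ i, (SignType.sign (D.mulVec (βhat z') i) : ℝ) = ((σ i : ℤ) : ℝ) := by
      intro i
      rw [show SignType.sign (D.mulVec (βhat z') i) = pat D βhat z' i from rfl, hz']
      simp
    have hr1 : ∑ j, (X.mulVec w j) * (z j - θz j)
        = τ * ∑ i, ((σ i : ℤ) : ℝ) * D.mulVec w i := by
      rw [hθz, hs1]
      congr 1
      exact Finset.sum_congr rfl fun i _ => by rw [hsgn1 i]
    have hr2 : ∑ j, (X.mulVec w j) * (z' j - θz' j)
        = τ * ∑ i, ((σ i : ℤ) : ℝ) * D.mulVec w i := by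
      rw [hθz', hs2]
      congr 1
      exact Finset.sum_congr rfl fun i _ => by rw [hsgn2 i]
    have : ∑ j, (X.mulVec w) j * u j
        = (∑ j, (X.mulVec w j) * (z j - θz j)) - ∑ j, (X.mulVec w j) * (z' j - θz' j) := by
      rw [← Finset.sum_sub_distrib]
      refine Finset.sum_congr rfl fun j _ => ?_
      rw [hu]
      simp only [Pi.sub_apply]
      ring
    rw [this, hr1, hr2, sub_self]
  have hdecomp : z - z' = (θz - θz') + u := by
    rw [hu]
    funext j
    simp only [Pi.sub_apply, Pi.add_apply]
    ring
  rw [hdecomp, Matrix.mulVec_add, Pmat_fix X D hmem, Pmat_kill X D horth, add_zero]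

end Aff

end GLasso

open GLasso

/-- Generalized Lasso: for almost every `y`, the fitted-value map
`y ↦ X β̂(y)` is differentiable at `y` with divergence `dim(X ker(D₀))`, where `D₀`
consists of the rows `dᵢ` of `D` with `dᵢᵀ β̂(y) = 0`. -/
theorem divergence_generalized_lasso {n d l : ℕ}
    (X : Matrix (Fin n) (Fin d) ℝ) (D : Matrix (Fin l) (Fin d) ℝ)
    (τ : ℝ) (hτ : 0 < τ)
    (βhat : (Fin n → ℝ) → (Fin d → ℝ))
    (hmin : ∀ y, ∀ β : Fin d → ℝ,
      (1 / 2) * (∑ i, (y i - X.mulVec (βhat y) i) ^ 2) + τ * (∑ i, |D.mulVec (βhat y) i|)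
        ≤ (1 / 2) * (∑ i, (y i - X.mulVec β i) ^ 2) + τ * (∑ i, |D.mulVec β i|)) :
    ∀ᵐ y ∂(volume : Measure (Fin n → ℝ)),
      DifferentiableAt ℝ (fun z => X.mulVec (βhat z)) y ∧
      divg (fun z => X.mulVec (βhat z)) y =
        (Module.finrank ℝ
          ↥(Submodule.map X.mulVecLin
            (⨅ i ∈ {i : Fin l | D i ⬝ᵥ βhat y = 0},
              LinearMap.ker ((LinearMap.proj i : (Fin l → ℝ) →ₗ[ℝ] ℝ).comp D.mulVecLin))) : ℝ) := by
  classical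
  have hlip := GLasso.lipschitz hτ hmin
  have hcont : Continuous (fun z => X.mulVec (βhat z)) := hlip.continuous
  -- continuous linear map version of the projection
  set Pclm : (Fin l → SignType) → ((Fin n → ℝ) →L[ℝ] (Fin n → ℝ)) := fun σ =>
    LinearMap.toContinuousLinearMap ((Pmat X D σ).mulVecLin) with hPclm
  have hPapp : ∀ σ z, Pclm σ z = (Pmat X D σ).mulVec z := by
    intro σ z
    simp [hPclm, Matrix.mulVecLin_apply]
  -- the affine comparison map for each pattern
  set cv : (Fin l → SignType) → (Fin n → ℝ) := fun σ =>
    if hσ : ∃ z₀, pat D βhat z₀ = σ then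
      X.mulVec (βhat hσ.choose) - (Pmat X D σ).mulVec hσ.choose else 0 with hcv
  set F : (Fin l → SignType) → (Fin n → ℝ) → (Fin n → ℝ) := fun σ z => Pclm σ z + cv σ with hF
  have haff : ∀ σ z, pat D βhat z = σ → X.mulVec (βhat z) = F σ z := by
    intro σ z hz
    have hσex : ∃ z₀, pat D βhat z₀ = σ := ⟨z, hz⟩
    have hz₀ := hσex.choose_spec
    have hkey := GLasso.affine_on_pattern hτ hmin hz hz₀
    rw [hF]
    simp only
    rw [hPapp, hcv]
    simp only [dif_pos hσex]
    rw [Matrix.mulVec_sub] at hkey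
    funext j
    have := congrFun hkey j
    simp only [Pi.sub_apply, Pi.add_apply] at this ⊢
    linarith
  set Zs : (Fin l → SignType) → Set (Fin n → ℝ) := fun σ => {z | X.mulVec (βhat z) = F σ z}
    with hZs
  have hZclosed : ∀ σ, IsClosed (Zs σ) := by
    intro σ
    apply isClosed_eq hcont
    rw [hF]
    exact ((Pclm σ).continuous.add continuous_const)
  have hdiff_ae : ∀ᵐ y ∂(volume : Measure (Fin n → ℝ)),
      DifferentiableAt ℝ (fun z => X.mulVec (βhat z)) y :=
    hlip.ae_differentiableAt
  have hdens : ∀ᵐ y ∂(volume : Measure (Fin n → ℝ)), ∀ σ, y ∈ Zs σ →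
      Tendsto (fun r => volume (Zs σ ∩ closedBall y r) / volume (closedBall y r))
        (𝓝[>] 0) (𝓝 1) := by
    rw [ae_all_iff]
    intro σ
    filter_upwards [Besicovitch.ae_tendsto_measure_inter_div_of_measurableSet volume
      (hZclosed σ).measurableSet] with y hy hmem
    rwa [Set.indicator_of_mem hmem, Pi.one_apply] at hy
  filter_upwards [hdiff_ae, hdens] with y hdiffy hdensy
  refine ⟨hdiffy, ?_⟩
  set σ := pat D βhat y with hσdef
  have hyZ : y ∈ Zs σ := by
    show X.mulVec (βhat y) = F σ y
    exact haff σ y rfl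
  -- derivative identification
  have hFd : HasFDerivAt (F σ) (Pclm σ) y := by
    rw [hF]
    exact (Pclm σ).hasFDerivAt.add_const (cv σ)
  have hzero : ∀ z ∈ Zs σ, (fun z => X.mulVec (βhat z) - F σ z) z = 0 := by
    intro z hz
    have hz' : X.mulVec (βhat z) = F σ z := hz
    simpa [sub_eq_zero] using hz'
  have hdiffh : DifferentiableAt ℝ (fun z => X.mulVec (βhat z) - F σ z) y :=
    hdiffy.sub hFd.differentiableAt
  have hzero' := GLasso.fderiv_zero_of_density (hdensy σ hyZ) hzero hyZ hdiffh
  have hsub : fderiv ℝ (fun z => X.mulVec (βhat z) - F σ z) y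
      = fderiv ℝ (fun z => X.mulVec (βhat z)) y - fderiv ℝ (F σ) y :=
    fderiv_sub hdiffy hFd.differentiableAt
  have hFder : fderiv ℝ (F σ) y = Pclm σ := hFd.fderiv
  have hderiv : fderiv ℝ (fun z => X.mulVec (βhat z)) y = Pclm σ := by
    rw [hsub, hFder] at hzero'
    have := sub_eq_zero.mp hzero'
    exact this
  -- compute the divergence
  have hdivg : divg (fun z => X.mulVec (βhat z)) y = ∑ j, Pmat X D σ j j := by
    rw [divg]
    rw [hderiv]
    refine Finset.sum_congr rfl fun j _ => ?_
    rw [hPapp, Matrix.mulVec_single]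
    simp
  rw [hdivg, GLasso.Pmat_trace]
  -- identify the submodule
  have hiff : ∀ i : Fin l, (σ i = 0) ↔ (D i ⬝ᵥ βhat y = 0) := by
    intro i
    rw [hσdef]
    show SignType.sign (D.mulVec (βhat y) i) = 0 ↔ _
    rw [sign_eq_zero_iff]
    rfl
  have hsubmod : Lsub X D σ = Submodule.map X.mulVecLin
      (⨅ i ∈ {i : Fin l | D i ⬝ᵥ βhat y = 0},
        LinearMap.ker ((LinearMap.proj i : (Fin l → ℝ) →ₗ[ℝ] ℝ).comp D.mulVecLin)) := by
    rw [Lsub, ksub]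
    congr 1
    ext w
    simp only [Submodule.mem_iInf, Set.mem_setOf_eq]
    constructor
    · intro h i hi
      exact h i ((hiff i).mpr hi)
    · intro h i hi
      exact h i ((hiff i).mp hi)
  rw [hsubmod]
  rfl
end

section
/- Let X ∈ ℝ^{n×d} and τ > 0. For y ∈ ℝⁿ let β̂(y) ∈ argmin_{β ∈ ℝᵈ} (1/2)‖y − Xβ‖₂² + τ‖β‖₁ be a Lasso solution and θ̂(y) = X β̂(y) the (unique) fitted value. Then for Lebesgue-almost every y ∈ ℝⁿ, the map θ̂ is differentiable at y with divergence equal to rank(X_{J₀ᶜ}), where J₀ = {i ∈ {1,…,d} : β̂_i(y) = 0}, J₀ᶜ is its complement, and X_{J₀ᶜ} is the submatrix of X consisting of the columns indexed by J₀ᶜ. -/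
open Matrix MeasureTheory
open scoped Classical
open Metric Filter Module


lemma fderiv_eq_zero_of_dens {n : ℕ} {φ : (Fin n → ℝ) → (Fin n → ℝ)} {S : Set (Fin n → ℝ)}
    {y : Fin n → ℝ}
    (h0 : ∀ z ∈ S, φ z = 0) (hy : y ∈ S) (hd : DifferentiableAt ℝ φ y)
    (dens : Tendsto (fun r => volume (S ∩ closedBall y r) / volume (closedBall y r))
      (nhdsWithin 0 (Set.Ioi 0)) (nhds 1)) :
    fderiv ℝ φ y = 0 := by
  set L := fderiv ℝ φ y with hL
  refine ContinuousLinearMap.ext fun v => ?_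
  simp only [ContinuousLinearMap.zero_apply]
  rcases eq_or_ne v 0 with rfl | hv
  · simp
  have hvpos : 0 < ‖v‖ := norm_pos_iff.mpr hv
  have H : ∀ ε : ℝ, 0 < ε → ‖L v‖ ≤ ε * (‖v‖ * (1 + ε + ‖L‖)) := by
    intro ε hε
    -- little-o bound
    have hlo := (hd.hasFDerivAt.isLittleO).def hε
    rw [Metric.eventually_nhds_iff] at hlo
    obtain ⟨δ, hδ, hδ'⟩ := hlo
    -- density bound
    set k := Module.finrank ℝ (Fin n → ℝ) with hk
    set c : ENNReal := ENNReal.ofReal ((ε / (1 + ε)) ^ k) with hc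
    have hcpos : c ≠ 0 := by
      simp only [hc, ne_eq, ENNReal.ofReal_eq_zero, not_le]
      positivity
    have h1c : (1 : ENNReal) - c < 1 :=
      ENNReal.sub_lt_self ENNReal.one_ne_top one_ne_zero hcpos
    have ev1 : ∀ᶠ R in nhdsWithin (0:ℝ) (Set.Ioi 0),
        1 - c < volume (S ∩ closedBall y R) / volume (closedBall y R) :=
      dens.eventually (lt_mem_nhds h1c)
    have ev2 : Set.Ioo (0:ℝ) δ ∈ nhdsWithin (0:ℝ) (Set.Ioi 0) :=
      Ioo_mem_nhdsGT_of_mem ⟨le_refl 0, hδ⟩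
    obtain ⟨R, hR1, hR2⟩ := (ev1.and (eventually_mem_set.mpr ev2)).exists
    obtain ⟨hR0, hRδ⟩ := hR2
    set t : ℝ := R / (‖v‖ * (1 + ε)) with ht
    have htpos : 0 < t := by positivity
    have htR : t * ‖v‖ * (1 + ε) = R := by
      rw [ht]
      field_simp
    -- find a point of S near y + t v
    have hz : ∃ z ∈ S, dist z (y + t • v) ≤ ε * (t * ‖v‖) := by
      by_contra hcon
      push_neg at hcon
      have hsub : S ∩ closedBall y R ⊆
          closedBall y R \ closedBall (y + t • v) (ε * (t * ‖v‖)) := by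
        rintro z ⟨hzS, hzB⟩
        refine ⟨hzB, fun hzb => ?_⟩
        exact absurd (mem_closedBall.mp hzb) (not_le.mpr (hcon z hzS))
      have hsmall_sub : closedBall (y + t • v) (ε * (t * ‖v‖)) ⊆ closedBall y R := by
        intro z hz
        rw [mem_closedBall] at hz ⊢
        have h1 : dist (y + t • v) y = t * ‖v‖ := by
          simp [dist_eq_norm, norm_smul, abs_of_pos htpos]
        calc dist z y ≤ dist z (y + t • v) + dist (y + t • v) y := dist_triangle _ _ _
          _ ≤ ε * (t * ‖v‖) + t * ‖v‖ := by linarith [hz, h1.le, h1.ge]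
          _ = R := by rw [← htR]; ring
      set b := volume (closedBall (y + t • v) (ε * (t * ‖v‖)))
      set a := volume (closedBall y R)
      have hvol : volume (S ∩ closedBall y R) ≤ a - b := by
        calc volume (S ∩ closedBall y R)
            ≤ volume (closedBall y R \ closedBall (y + t • v) (ε * (t * ‖v‖))) :=
              measure_mono hsub
          _ = a - b := measure_diff hsmall_sub
              measurableSet_closedBall.nullMeasurableSet measure_closedBall_lt_top.ne
      have ha0 : a ≠ 0 := (measure_closedBall_pos volume y hR0).ne'
      have hatop : a ≠ ⊤ := measure_closedBall_lt_top.ne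
      have hba : b / a = c := by
        have hb' : b = ENNReal.ofReal ((ε * (t * ‖v‖)) ^ k) * volume (ball (0 : Fin n → ℝ) 1) :=
          Measure.addHaar_closedBall _ _ (by positivity)
        have ha' : a = ENNReal.ofReal (R ^ k) * volume (ball (0 : Fin n → ℝ) 1) :=
          Measure.addHaar_closedBall _ _ hR0.le
        have hvb0 : volume (ball (0 : Fin n → ℝ) 1) ≠ 0 :=
          (measure_ball_pos volume _ one_pos).ne'
        have hvbtop : volume (ball (0 : Fin n → ℝ) 1) ≠ ⊤ := measure_ball_lt_top.ne
        rw [hb', ha', ENNReal.mul_div_mul_right _ _ hvb0 hvbtop,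
          ← ENNReal.ofReal_div_of_pos (by positivity), hc]
        congr 1
        rw [← div_pow]
        congr 1
        rw [← htR]
        field_simp
      have hfinal : volume (S ∩ closedBall y R) / a ≤ 1 - c := by
        calc volume (S ∩ closedBall y R) / a ≤ (a - b) / a :=
              ENNReal.div_le_div_right hvol a
          _ = a / a - b / a := ENNReal.sub_div (fun _ _ => ha0)
          _ = 1 - c := by rw [ENNReal.div_self ha0 hatop, hba]
      exact absurd hR1 (not_lt.mpr hfinal)
    obtain ⟨z, hzS, hzd⟩ := hz
    have hzy : dist z y ≤ R := by
      have h1 : dist (y + t • v) y = t * ‖v‖ := by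
        simp [dist_eq_norm, norm_smul, abs_of_pos htpos]
      calc dist z y ≤ dist z (y + t • v) + dist (y + t • v) y := dist_triangle _ _ _
        _ ≤ ε * (t * ‖v‖) + t * ‖v‖ := by linarith
        _ = R := by rw [← htR]; ring
    have hzδ : dist z y < δ := lt_of_le_of_lt hzy hRδ
    have hlob := hδ' hzδ
    rw [h0 z hzS, h0 y hy] at hlob
    simp only [sub_zero, zero_sub, norm_neg] at hlob
    -- ‖L (z - y)‖ ≤ ε R
    have h1 : ‖L (z - y)‖ ≤ ε * R := by
      calc ‖L (z - y)‖ ≤ ε * ‖z - y‖ := hlob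
        _ ≤ ε * R := by
            have := hzy
            rw [dist_eq_norm] at this
            exact mul_le_mul_of_nonneg_left this hε.le
    have h2 : ‖L (t • v)‖ ≤ ‖L (z - y)‖ + ‖L‖ * (ε * (t * ‖v‖)) := by
      have : L (t • v) = L (z - y) + L ((y + t • v) - z) := by
        rw [← map_add]
        congr 1
        abel
      rw [this]
      refine (norm_add_le _ _).trans ?_
      gcongr
      calc ‖L ((y + t • v) - z)‖ ≤ ‖L‖ * ‖(y + t • v) - z‖ := L.le_opNorm _
        _ ≤ ‖L‖ * (ε * (t * ‖v‖)) := by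
            have := hzd
            rw [dist_comm, dist_eq_norm] at this
            exact mul_le_mul_of_nonneg_left this (norm_nonneg _)
    have h3 : ‖L (t • v)‖ = t * ‖L v‖ := by
      rw [L.map_smul, norm_smul, Real.norm_eq_abs, abs_of_pos htpos]
    have h4 : t * ‖L v‖ ≤ ε * R + ‖L‖ * (ε * (t * ‖v‖)) := by
      rw [← h3]; linarith
    rw [← htR] at h4
    have := mul_le_mul_of_nonneg_left h4 (le_of_lt (inv_pos.mpr htpos))
    rw [← mul_assoc, inv_mul_cancel₀ htpos.ne', one_mul] at this
    calc ‖L v‖ ≤ t⁻¹ * (ε * (t * ‖v‖ * (1 + ε)) + ‖L‖ * (ε * (t * ‖v‖))) := this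
      _ = ε * (‖v‖ * (1 + ε + ‖L‖)) := by field_simp
  -- conclude ‖L v‖ = 0
  by_contra hne
  have hpos : 0 < ‖L v‖ := norm_pos_iff.mpr hne
  set C := ‖v‖ * (2 + ‖L‖) with hC
  have hCpos : 0 < C := by positivity
  set ε := min (1/2 : ℝ) (‖L v‖ / (2 * C)) with hε
  have hεpos : 0 < ε := lt_min (by norm_num) (by positivity)
  have := H ε hεpos
  have hb : ε * (‖v‖ * (1 + ε + ‖L‖)) ≤ ε * C := by
    apply mul_le_mul_of_nonneg_left _ hεpos.le
    rw [hC]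
    have : ε ≤ 1 := (min_le_left _ _).trans (by norm_num)
    nlinarith [norm_nonneg v, norm_nonneg (L : (Fin n → ℝ) →L[ℝ] (Fin n → ℝ))]
  have hεC : ε * C ≤ ‖L v‖ / 2 := by
    have : ε ≤ ‖L v‖ / (2 * C) := min_le_right _ _
    calc ε * C ≤ (‖L v‖ / (2 * C)) * C := mul_le_mul_of_nonneg_right this hCpos.le
      _ = ‖L v‖ / 2 := by field_simp
  linarith

section
variable {n d : ℕ} {X : Matrix (Fin n) (Fin d) ℝ} {τ : ℝ}
  {βhat : (Fin n → ℝ) → (Fin d → ℝ)}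

variable {n d : ℕ} {X : Matrix (Fin n) (Fin d) ℝ} {τ : ℝ}
  {βhat : (Fin n → ℝ) → (Fin d → ℝ)}

lemma lasso_strong_ineq (hτ : 0 < τ)
    (hmin : ∀ y, ∀ β : Fin d → ℝ,
      (1 / 2) * (∑ i, (y i - X.mulVec (βhat y) i) ^ 2) + τ * (∑ i, |βhat y i|)
        ≤ (1 / 2) * (∑ i, (y i - X.mulVec β i) ^ 2) + τ * (∑ i, |β i|))
    (y y' : Fin n → ℝ) :
    ∑ i, (X.mulVec (βhat y) i - X.mulVec (βhat y') i) ^ 2 ≤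
      2 * ∑ i, (y i - y' i) * (X.mulVec (βhat y) i - X.mulVec (βhat y') i) := by
  set θ := X.mulVec (βhat y) with hθ
  set θ' := X.mulVec (βhat y') with hθ'
  set M : Fin d → ℝ := (1/2 : ℝ) • (βhat y + βhat y') with hM
  have hXM : ∀ i, X.mulVec M i = (θ i + θ' i) / 2 := by
    intro i
    rw [hM, mulVec_smul, mulVec_add]
    simp only [Pi.smul_apply, Pi.add_apply, smul_eq_mul]
    rw [← hθ, ← hθ']
    ring
  set G := ∑ i, |βhat y i| with hG
  set G' := ∑ i, |βhat y' i| with hG'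
  have habs : ∑ i, |M i| ≤ (G + G') / 2 := by
    have hpt : ∀ i ∈ Finset.univ, |M i| ≤ |βhat y i| / 2 + |βhat y' i| / 2 := by
      intro i _
      rw [hM]
      simp only [Pi.smul_apply, Pi.add_apply, smul_eq_mul]
      have h1 : |1/2 * (βhat y i + βhat y' i)| = |βhat y i + βhat y' i| / 2 := by
        rw [abs_mul, abs_of_pos (by norm_num : (0:ℝ) < 1/2)]; ring
      have h2 := abs_add_le (βhat y i) (βhat y' i)
      rw [h1]; linarith
    calc ∑ i, |M i| ≤ ∑ i, (|βhat y i| / 2 + |βhat y' i| / 2) := Finset.sum_le_sum hpt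
      _ = (G + G') / 2 := by
          rw [Finset.sum_add_distrib, hG, hG', ← Finset.sum_div, ← Finset.sum_div]
          ring
  set a := ∑ i, (y i - θ i) ^ 2 with ha
  set b := ∑ i, (y i - θ' i) ^ 2 with hb
  set a' := ∑ i, (y' i - θ i) ^ 2 with ha'
  set b' := ∑ i, (y' i - θ' i) ^ 2 with hb'
  set Q := ∑ i, (θ i - θ' i) ^ 2 with hQ
  set W := ∑ i, (y i - y' i) * (θ i - θ' i) with hW
  set m2 := ∑ i, (y i - X.mulVec M i) ^ 2 with hm2d
  set m2' := ∑ i, (y' i - X.mulVec M i) ^ 2 with hm2d'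
  have hm2 : 4 * m2 = 2 * a + 2 * b - Q := by
    calc 4 * m2 = ∑ i, 4 * (y i - X.mulVec M i) ^ 2 := by rw [hm2d, Finset.mul_sum]
      _ = ∑ i, (2 * (y i - θ i) ^ 2 + 2 * (y i - θ' i) ^ 2 - (θ i - θ' i) ^ 2) :=
          Finset.sum_congr rfl (fun i _ => by rw [hXM i]; ring)
      _ = 2 * a + 2 * b - Q := by
          rw [Finset.sum_sub_distrib, Finset.sum_add_distrib, ← Finset.mul_sum,
            ← Finset.mul_sum, ← ha, ← hb, ← hQ]
  have hm2' : 4 * m2' = 2 * a' + 2 * b' - Q := by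
    calc 4 * m2' = ∑ i, 4 * (y' i - X.mulVec M i) ^ 2 := by rw [hm2d', Finset.mul_sum]
      _ = ∑ i, (2 * (y' i - θ i) ^ 2 + 2 * (y' i - θ' i) ^ 2 - (θ i - θ' i) ^ 2) :=
          Finset.sum_congr rfl (fun i _ => by rw [hXM i]; ring)
      _ = 2 * a' + 2 * b' - Q := by
          rw [Finset.sum_sub_distrib, Finset.sum_add_distrib, ← Finset.mul_sum,
            ← Finset.mul_sum, ← ha', ← hb', ← hQ]
  have hcross : 2 * W = (b - a) + (a' - b') := by
    calc 2 * W = ∑ i, 2 * ((y i - y' i) * (θ i - θ' i)) := by rw [hW, Finset.mul_sum]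
      _ = ∑ i, (((y i - θ' i) ^ 2 - (y i - θ i) ^ 2) +
            ((y' i - θ i) ^ 2 - (y' i - θ' i) ^ 2)) :=
          Finset.sum_congr rfl (fun i _ => by ring)
      _ = (b - a) + (a' - b') := by
          rw [Finset.sum_add_distrib, Finset.sum_sub_distrib, Finset.sum_sub_distrib,
            ← ha, ← hb, ← ha', ← hb']
  have I1 := hmin y M
  have I2 := hmin y' M
  rw [← hθ, ← ha, ← hG, ← hm2d] at I1
  rw [← hθ', ← hb', ← hG', ← hm2d'] at I2
  have hτM : τ * (∑ i, |M i|) ≤ τ * ((G + G') / 2) :=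
    mul_le_mul_of_nonneg_left habs hτ.le
  have goal2 : Q ≤ 2 * W := by linarith
  exact goal2

lemma lasso_lipschitz (hτ : 0 < τ)
    (hmin : ∀ y, ∀ β : Fin d → ℝ,
      (1 / 2) * (∑ i, (y i - X.mulVec (βhat y) i) ^ 2) + τ * (∑ i, |βhat y i|)
        ≤ (1 / 2) * (∑ i, (y i - X.mulVec β i) ^ 2) + τ * (∑ i, |β i|)) :
    LipschitzWith (2 * n : NNReal) (fun y => X.mulVec (βhat y)) := by
  apply LipschitzWith.of_dist_le_mul
  intro y y'
  rw [dist_eq_norm, dist_eq_norm]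
  set u : Fin n → ℝ := X.mulVec (βhat y) - X.mulVec (βhat y') with hu
  have hQW := lasso_strong_ineq hτ hmin y y'
  set Q := ∑ i, (X.mulVec (βhat y) i - X.mulVec (βhat y') i) ^ 2 with hQ
  have hQnn : 0 ≤ Q := Finset.sum_nonneg fun i _ => sq_nonneg _
  have hnormu : ∀ i, u i = X.mulVec (βhat y) i - X.mulVec (βhat y') i := fun i => rfl
  have hub : ‖u‖ ≤ Real.sqrt Q := by
    refine (pi_norm_le_iff_of_nonneg (Real.sqrt_nonneg _)).mpr ?_
    intro i
    rw [Real.norm_eq_abs, ← Real.sqrt_sq_eq_abs]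
    apply Real.sqrt_le_sqrt
    have hui : u i = X.mulVec (βhat y) i - X.mulVec (βhat y') i := rfl
    rw [hui, hQ]
    exact Finset.single_le_sum
      (f := fun j => (X.mulVec (βhat y) j - X.mulVec (βhat y') j) ^ 2)
      (fun j _ => sq_nonneg _) (Finset.mem_univ i)
  have husq : ‖u‖ ^ 2 ≤ Q := by
    calc ‖u‖ ^ 2 ≤ Real.sqrt Q ^ 2 := by
          apply pow_le_pow_left₀ (norm_nonneg _) hub
      _ = Q := Real.sq_sqrt hQnn
  have hWbound : ∑ i, (y i - y' i) * (X.mulVec (βhat y) i - X.mulVec (βhat y') i) ≤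
      (n : ℝ) * (‖y - y'‖ * ‖u‖) := by
    calc ∑ i, (y i - y' i) * (X.mulVec (βhat y) i - X.mulVec (βhat y') i)
        ≤ ∑ _i : Fin n, ‖y - y'‖ * ‖u‖ := by
          apply Finset.sum_le_sum
          intro i _
          calc (y i - y' i) * (X.mulVec (βhat y) i - X.mulVec (βhat y') i)
              ≤ |(y i - y' i) * (X.mulVec (βhat y) i - X.mulVec (βhat y') i)| := le_abs_self _
            _ = |(y - y') i| * |u i| := by rw [abs_mul]; rfl
            _ ≤ ‖y - y'‖ * ‖u‖ := by
                apply mul_le_mul (norm_le_pi_norm (y - y') i) (norm_le_pi_norm u i)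
                  (abs_nonneg _) (norm_nonneg _)
      _ = (n : ℝ) * (‖y - y'‖ * ‖u‖) := by
          rw [Finset.sum_const, Finset.card_univ, Fintype.card_fin, nsmul_eq_mul]
  have hkey : ‖u‖ ^ 2 ≤ 2 * (n : ℝ) * ‖y - y'‖ * ‖u‖ := by
    calc ‖u‖ ^ 2 ≤ Q := husq
      _ ≤ 2 * ∑ i, (y i - y' i) * (X.mulVec (βhat y) i - X.mulVec (βhat y') i) := hQW
      _ ≤ 2 * ((n : ℝ) * (‖y - y'‖ * ‖u‖)) := by linarith
      _ = 2 * (n : ℝ) * ‖y - y'‖ * ‖u‖ := by ring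
  have hfinal : ‖u‖ ≤ 2 * (n : ℝ) * ‖y - y'‖ := by
    rcases eq_or_lt_of_le (norm_nonneg u) with h0 | hpos
    · rw [← h0]; positivity
    · nlinarith
  have hcoe : ((2 * n : NNReal) : ℝ) = 2 * (n : ℝ) := by push_cast; ring
  calc ‖X.mulVec (βhat y) - X.mulVec (βhat y')‖ = ‖u‖ := rfl
    _ ≤ 2 * (n : ℝ) * ‖y - y'‖ := hfinal
    _ = ((2 * n : NNReal) : ℝ) * ‖y - y'‖ := by rw [hcoe]



lemma lasso_kkt (hτ : 0 < τ)
    (hmin : ∀ y, ∀ β : Fin d → ℝ,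
      (1 / 2) * (∑ i, (y i - X.mulVec (βhat y) i) ^ 2) + τ * (∑ i, |βhat y i|)
        ≤ (1 / 2) * (∑ i, (y i - X.mulVec β i) ^ 2) + τ * (∑ i, |β i|))
    (y : Fin n → ℝ) (i : Fin d) (hi : βhat y i ≠ 0) :
    ∑ j, X j i * (y j - X.mulVec (βhat y) j) = τ * (SignType.sign (βhat y i) : ℝ) := by
  set β := βhat y with hβ
  set θ := X.mulVec β with hθ
  set c := ∑ j, X j i * (y j - θ j) with hc
  set s2 := ∑ j, (X j i) ^ 2 with hs2
  set sg : ℝ := (SignType.sign (β i) : ℝ) with hsg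
  have hs2nn : 0 ≤ s2 := Finset.sum_nonneg fun j _ => sq_nonneg _
  have hβipos : 0 < |β i| := abs_pos.mpr hi
  have habs : ∀ t : ℝ, |t| ≤ |β i| → |β i + t| = |β i| + t * sg := by
    intro t ht
    rcases lt_trichotomy (β i) 0 with hneg | hzero | hpos
    · have hsg1 : sg = -1 := by rw [hsg, sign_neg hneg]; simp
      rw [abs_of_neg hneg] at ht ⊢
      have h1 : β i + t ≤ 0 := by
        rcases abs_le.mp ht with ⟨h2, h3⟩; linarith
      rw [abs_of_nonpos h1, hsg1]; ring
    · exact absurd hzero hi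
    · have hsg1 : sg = 1 := by rw [hsg, sign_pos hpos]; simp
      rw [abs_of_pos hpos] at ht ⊢
      have h1 : 0 ≤ β i + t := by
        rcases abs_le.mp ht with ⟨h2, h3⟩; linarith
      rw [abs_of_nonneg h1, hsg1]; ring
  have hpert : ∀ t : ℝ, 0 ≤ -(t * c) + t ^ 2 / 2 * s2 + τ * (|β i + t| - |β i|) := by
    intro t
    set e1 : Fin d → ℝ := Pi.single i 1 with he1
    have hmin' := hmin y (β + t • e1)
    have hsingle : t • e1 = (Pi.single i t : Fin d → ℝ) := by
      rw [he1]
      funext j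
      rcases eq_or_ne j i with rfl | hne
      · simp
      · simp [Pi.single_eq_of_ne hne]
    have hXpert : ∀ j, X.mulVec (β + t • e1) j = θ j + t * X j i := by
      intro j
      rw [mulVec_add, hsingle]
      have : X.mulVec (Pi.single i t) j = t * X j i := by
        simp [mulVec, dotProduct, Pi.single_apply, mul_comm]
      simp only [Pi.add_apply, this, ← hθ]
    have hsum1 : ∑ j, (y j - X.mulVec (β + t • e1) j) ^ 2
        = (∑ j, (y j - θ j) ^ 2) - 2 * (t * c) + t ^ 2 * s2 := by
      calc ∑ j, (y j - X.mulVec (β + t • e1) j) ^ 2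
          = ∑ j, ((y j - θ j) ^ 2 - 2 * (t * (X j i * (y j - θ j))) + t ^ 2 * (X j i) ^ 2) :=
            Finset.sum_congr rfl (fun j _ => by rw [hXpert j]; ring)
        _ = (∑ j, (y j - θ j) ^ 2) - 2 * (t * c) + t ^ 2 * s2 := by
            rw [Finset.sum_add_distrib, Finset.sum_sub_distrib, hc, hs2,
              Finset.mul_sum, Finset.mul_sum, Finset.mul_sum]
    have hsum2 : ∑ j, |(β + t • e1) j| = (∑ j, |β j|) - |β i| + |β i + t| := by
      have hval : ∀ j : Fin d, (β + t • e1) j = if j = i then β i + t else β j := by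
        intro j
        rcases eq_or_ne j i with rfl | hne
        · simp [he1]
        · simp [he1, Pi.single_eq_of_ne hne, hne]
      have key : ∀ (γ : Fin d → ℝ), ∑ j, |γ j| = (∑ j ∈ Finset.univ.erase i, |γ j|) + |γ i| :=
        fun γ => (Finset.sum_erase_add _ _ (Finset.mem_univ i)).symm
      rw [key (β + t • e1), key β]
      have h1 : ∑ j ∈ Finset.univ.erase i, |(β + t • e1) j|
          = ∑ j ∈ Finset.univ.erase i, |β j| := by
        apply Finset.sum_congr rfl
        intro j hj
        rw [hval j, if_neg (Finset.ne_of_mem_erase hj)]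
      rw [h1, hval i, if_pos rfl]
      ring
    rw [hsum1, hsum2] at hmin'
    set A := ∑ j, (y j - θ j) ^ 2
    set G := ∑ j, |β j|
    nlinarith [hmin']
  have hK : ∀ η : ℝ, 0 < η → η ≤ |β i| → |τ * sg - c| ≤ η * s2 / 2 := by
    intro η hη hηβ
    have h1 := hpert η
    have h2 := hpert (-η)
    rw [habs η (by rwa [abs_of_pos hη])] at h1
    rw [habs (-η) (by rwa [abs_neg, abs_of_pos hη])] at h2
    rw [abs_le]
    constructor
    · nlinarith
    · nlinarith
  by_contra hne
  have hKne : τ * sg - c ≠ 0 := fun h => hne (by linarith)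
  have hKpos : 0 < |τ * sg - c| := abs_pos.mpr hKne
  set η := min (|β i|) (|τ * sg - c| / (s2 + 1)) with hη
  have hηpos : 0 < η := lt_min hβipos (by positivity)
  have hηβ : η ≤ |β i| := min_le_left _ _
  have := hK η hηpos hηβ
  have hη2 : η ≤ |τ * sg - c| / (s2 + 1) := min_le_right _ _
  have hη3 : η * (s2 + 1) ≤ |τ * sg - c| := (le_div_iff₀ (by positivity)).mp hη2
  linarith [mul_nonneg hηpos.le hs2nn]



/-- the `i`-th column of `X`, as an element of Euclidean space -/
noncomputable def ecol (X : Matrix (Fin n) (Fin d) ℝ) (i : Fin d) :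
    EuclideanSpace ℝ (Fin n) :=
  (EuclideanSpace.equiv (Fin n) ℝ).symm (fun j => X j i)

/-- span of the active columns -/
noncomputable def Vsub (X : Matrix (Fin n) (Fin d) ℝ) (σ : Fin d → SignType) :
    Submodule ℝ (EuclideanSpace ℝ (Fin n)) :=
  Submodule.span ℝ (ecol X '' {i | σ i ≠ 0})

/-- orthogonal projection onto the span of active columns, conjugated to the sup-norm
pi space -/
noncomputable def Pproj (X : Matrix (Fin n) (Fin d) ℝ) (σ : Fin d → SignType) :
    (Fin n → ℝ) →L[ℝ] (Fin n → ℝ) :=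
  ((EuclideanSpace.equiv (Fin n) ℝ).toContinuousLinearMap.comp
    (((Vsub X σ).subtypeL).comp (Submodule.orthogonalProjectionOnto (Vsub X σ)))).comp
    ((EuclideanSpace.equiv (Fin n) ℝ).symm.toContinuousLinearMap)

lemma ecol_apply (X : Matrix (Fin n) (Fin d) ℝ) (i : Fin d) (j : Fin n) :
    ecol X i j = X j i := rfl

lemma equiv_symm_apply (v : Fin n → ℝ) (j : Fin n) :
    ((EuclideanSpace.equiv (Fin n) ℝ).symm v : EuclideanSpace ℝ (Fin n)) j = v j := rfl

lemma equiv_apply (v : EuclideanSpace ℝ (Fin n)) (j : Fin n) :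
    (EuclideanSpace.equiv (Fin n) ℝ) v j = v j := rfl

lemma inner_eq_dot (u v : EuclideanSpace ℝ (Fin n)) :
    (inner ℝ u v : ℝ) = ∑ j, u j * v j := by
  rw [PiLp.inner_apply]
  simp [RCLike.inner_apply, mul_comm]

/-- membership in the active span -/
lemma mem_Vsub (X : Matrix (Fin n) (Fin d) ℝ) (σ : Fin d → SignType)
    (β : Fin d → ℝ) (hβ : ∀ i, β i ≠ 0 → σ i ≠ 0) :
    ((EuclideanSpace.equiv (Fin n) ℝ).symm (X.mulVec β) : EuclideanSpace ℝ (Fin n))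
      ∈ Vsub X σ := by
  have hXβ : X.mulVec β = ∑ i, β i • (fun j => X j i) := by
    funext j
    rw [Finset.sum_apply]
    simp only [Pi.smul_apply, smul_eq_mul]
    simp [mulVec, dotProduct, mul_comm]
  rw [hXβ, map_sum]
  apply Submodule.sum_mem
  intro i _
  rcases eq_or_ne (β i) 0 with h0 | h0
  · rw [h0]
    simp
  · rw [_root_.map_smul]
    apply Submodule.smul_mem
    apply Submodule.subset_span
    exact ⟨i, hβ i h0, rfl⟩

/-- orthogonality to the active span -/
lemma mem_Vsub_orth (X : Matrix (Fin n) (Fin d) ℝ) (σ : Fin d → SignType)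
    (w : Fin n → ℝ) (hw : ∀ i, σ i ≠ 0 → ∑ j, X j i * w j = 0) :
    ((EuclideanSpace.equiv (Fin n) ℝ).symm w : EuclideanSpace ℝ (Fin n))
      ∈ (Vsub X σ)ᗮ := by
  rw [Submodule.mem_orthogonal]
  intro u hu
  induction hu using Submodule.span_induction with
  | mem x hx =>
      obtain ⟨i, hi, rfl⟩ := hx
      rw [inner_eq_dot]
      have : ∀ j, ecol X i j * ((EuclideanSpace.equiv (Fin n) ℝ).symm w :
          EuclideanSpace ℝ (Fin n)) j = X j i * w j := by
        intro j
        rw [ecol_apply, equiv_symm_apply]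
      rw [Finset.sum_congr rfl (fun j _ => this j)]
      exact hw i hi
  | zero => simp
  | add x y hx hy ihx ihy => rw [inner_add_left, ihx, ihy, add_zero]
  | smul c x hx ihx => rw [inner_smul_left, ihx, mul_zero]

/-- trace of the projection is the dimension of the active span -/
lemma trace_Pproj (X : Matrix (Fin n) (Fin d) ℝ) (σ : Fin d → SignType) :
    ∑ i, Pproj X σ (Pi.single i 1) i = (finrank ℝ (Vsub X σ) : ℝ) := by
  set V := Vsub X σ
  set P : EuclideanSpace ℝ (Fin n) →ₗ[ℝ] EuclideanSpace ℝ (Fin n) :=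
    (V.subtype).comp (Submodule.orthogonalProjectionOnto V).toLinearMap with hP
  have hPapp : ∀ i, Pproj X σ (Pi.single i 1) i
      = P (EuclideanSpace.single i 1) i := by
    intro i
    rfl
  rw [Finset.sum_congr rfl (fun i _ => hPapp i)]
  -- identify with the trace
  set b := EuclideanSpace.basisFun (Fin n) ℝ
  have htr : LinearMap.trace ℝ _ P = ∑ i, P (EuclideanSpace.single i 1) i := by
    rw [LinearMap.trace_eq_matrix_trace ℝ b.toBasis, Matrix.trace]
    apply Finset.sum_congr rfl
    intro i _
    rw [Matrix.diag_apply, LinearMap.toMatrix_apply]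
    rw [OrthonormalBasis.coe_toBasis_repr_apply, OrthonormalBasis.coe_toBasis]
    rw [EuclideanSpace.basisFun_repr, EuclideanSpace.basisFun_apply]
  rw [← htr]
  have hcomp : LinearMap.trace ℝ _ P
      = LinearMap.trace ℝ V ((Submodule.orthogonalProjectionOnto V).toLinearMap.comp V.subtype) := by
    rw [hP]
    exact (LinearMap.trace_comp_comm' V.subtype (Submodule.orthogonalProjectionOnto V).toLinearMap).symm
  have hid : (Submodule.orthogonalProjectionOnto V).toLinearMap.comp V.subtype = LinearMap.id := by
    ext x
    simp [Submodule.orthogonalProjectionOnto_mem_subspace_eq_self]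
  rw [hcomp, hid, LinearMap.trace_id]

/-- rank of the active submatrix equals the dimension of the active span -/
lemma rank_active (X : Matrix (Fin n) (Fin d) ℝ) (P : Fin d → Prop)
    [Fintype {i : Fin d // P i}] :
    (X.submatrix id (fun i : {i : Fin d // P i} => (i : Fin d))).rank
      = finrank ℝ (Submodule.span ℝ ((fun i => (fun j => X j i)) '' {i | P i})) := by
  rw [Matrix.rank_eq_finrank_span_cols]
  have hset : Set.range (X.submatrix id (fun i : {i : Fin d // P i} => (i : Fin d))).col
      = (fun i => (fun j => X j i)) '' {i | P i} := by
    ext u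
    simp only [Set.mem_range, Set.mem_image, Set.mem_setOf_eq]
    constructor
    · rintro ⟨k, rfl⟩
      exact ⟨k.1, k.2, by funext j; rfl⟩
    · rintro ⟨i, hi, rfl⟩
      exact ⟨⟨i, hi⟩, by funext j; rfl⟩
  rw [hset]

lemma finrank_Vsub (X : Matrix (Fin n) (Fin d) ℝ) (σ : Fin d → SignType) :
    finrank ℝ (Vsub X σ)
      = finrank ℝ (Submodule.span ℝ ((fun i => (fun j => X j i)) '' {i | σ i ≠ 0})) := by
  have : Vsub X σ = (Submodule.span ℝ ((fun i => (fun j => X j i)) '' {i | σ i ≠ 0})).map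
      (((EuclideanSpace.equiv (Fin n) ℝ).symm.toLinearEquiv : (Fin n → ℝ) ≃ₗ[ℝ] _) : (Fin n → ℝ) →ₗ[ℝ] _) := by
    rw [Submodule.map_span, Vsub]
    congr 1
    rw [← Set.image_comp]
    rfl
  rw [this]
  exact LinearEquiv.finrank_map_eq _ _


/-- the fitted values are a fixed affine function on each sign-pattern piece -/
lemma lasso_affine (hτ : 0 < τ)
    (hmin : ∀ y, ∀ β : Fin d → ℝ,
      (1 / 2) * (∑ i, (y i - X.mulVec (βhat y) i) ^ 2) + τ * (∑ i, |βhat y i|)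
        ≤ (1 / 2) * (∑ i, (y i - X.mulVec β i) ^ 2) + τ * (∑ i, |β i|))
    (σ : Fin d → SignType) (y y' : Fin n → ℝ)
    (hy : ∀ i, SignType.sign (βhat y i) = σ i)
    (hy' : ∀ i, SignType.sign (βhat y' i) = σ i) :
    X.mulVec (βhat y) - X.mulVec (βhat y') = Pproj X σ (y - y') := by
  set es := (EuclideanSpace.equiv (Fin n) ℝ).symm with hes
  have hp : (es (X.mulVec (βhat y) - X.mulVec (βhat y')) : EuclideanSpace ℝ (Fin n))
      ∈ Vsub X σ := by
    rw [← Matrix.mulVec_sub]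
    apply mem_Vsub
    intro i hne
    intro h0
    apply hne
    have h1 : βhat y i = 0 := by
      have := hy i; rw [h0] at this; exact sign_eq_zero_iff.mp this
    have h2 : βhat y' i = 0 := by
      have := hy' i; rw [h0] at this; exact sign_eq_zero_iff.mp this
    simp [Pi.sub_apply, h1, h2]
  have horth : (es ((y - y') - (X.mulVec (βhat y) - X.mulVec (βhat y'))) :
      EuclideanSpace ℝ (Fin n)) ∈ (Vsub X σ)ᗮ := by
    apply mem_Vsub_orth
    intro i hσ
    have hyi : βhat y i ≠ 0 := by
      intro h0
      apply hσ
      rw [← hy i, h0, sign_zero]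
    have hy'i : βhat y' i ≠ 0 := by
      intro h0
      apply hσ
      rw [← hy' i, h0, sign_zero]
    have k1 := lasso_kkt hτ hmin y i hyi
    have k2 := lasso_kkt hτ hmin y' i hy'i
    rw [hy i] at k1
    rw [hy' i] at k2
    have hpt : ∀ j, X j i * (y - y' - (X.mulVec (βhat y) - X.mulVec (βhat y'))) j
        = X j i * (y j - X.mulVec (βhat y) j) - X j i * (y' j - X.mulVec (βhat y') j) := by
      intro j
      simp only [Pi.sub_apply]
      ring
    rw [Finset.sum_congr rfl (fun j _ => hpt j), Finset.sum_sub_distrib, k1, k2, sub_self]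
  rw [map_sub] at horth
  have hproj : ((Submodule.orthogonalProjectionOnto (Vsub X σ) (es (y - y')) :
      EuclideanSpace ℝ (Fin n))) = _ := Submodule.eq_starProjection_of_mem_orthogonal
    (K := Vsub X σ) hp horth
  have happ : Pproj X σ (y - y')
      = (EuclideanSpace.equiv (Fin n) ℝ)
          ((Submodule.orthogonalProjectionOnto (Vsub X σ) (es (y - y')) : EuclideanSpace ℝ (Fin n))) := rfl
  rw [happ, hproj]
  exact (EuclideanSpace.equiv (Fin n) ℝ).apply_symm_apply _

lemma ae_imp_of_ae_restrict'' {α : Type*} [MeasurableSpace α] {μ : Measure α} {s : Set α}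
    {p : α → Prop} (h : ∀ᵐ x ∂μ.restrict s, p x) : ∀ᵐ x ∂μ, x ∈ s → p x := by
  rw [ae_iff] at h ⊢
  set t := MeasureTheory.toMeasurable (μ.restrict s) {x | ¬ p x} with ht
  have h1 : μ.restrict s t = 0 := by
    rw [ht, measure_toMeasurable]; exact h
  rw [Measure.restrict_apply (measurableSet_toMeasurable _ _)] at h1
  apply measure_mono_null _ h1
  intro x hx
  simp only [Set.mem_setOf_eq] at hx
  push_neg at hx
  exact ⟨subset_toMeasurable _ _ hx.2, hx.1⟩

end

/-- Lasso: for almost every `y`, the fitted-value map `y ↦ X β̂(y)` is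
differentiable at `y` with divergence `rank(X_{J₀ᶜ})`, where `J₀ = {i : β̂ᵢ(y) = 0}` and
`X_{J₀ᶜ}` consists of the columns of `X` indexed by the complement of `J₀`. -/
theorem divergence_lasso {n d : ℕ} (X : Matrix (Fin n) (Fin d) ℝ)
    (τ : ℝ) (hτ : 0 < τ)
    (βhat : (Fin n → ℝ) → (Fin d → ℝ))
    (hmin : ∀ y, ∀ β : Fin d → ℝ,
      (1 / 2) * (∑ i, (y i - X.mulVec (βhat y) i) ^ 2) + τ * (∑ i, |βhat y i|)
        ≤ (1 / 2) * (∑ i, (y i - X.mulVec β i) ^ 2) + τ * (∑ i, |β i|)) :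
    ∀ᵐ y ∂(volume : Measure (Fin n → ℝ)),
      DifferentiableAt ℝ (fun z => X.mulVec (βhat z)) y ∧
      divg (fun z => X.mulVec (βhat z)) y =
        (Matrix.rank (X.submatrix id
          (fun i : {i : Fin d // βhat y i ≠ 0} => (i : Fin d))) : ℝ) := by
  have hdiff : ∀ᵐ y ∂(volume : Measure (Fin n → ℝ)),
      DifferentiableAt ℝ (fun z => X.mulVec (βhat z)) y :=
    (lasso_lipschitz hτ hmin).ae_differentiableAt
  have hdens : ∀ σ : Fin d → SignType, ∀ᵐ y ∂(volume : Measure (Fin n → ℝ)),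
      y ∈ {z | (fun i => SignType.sign (βhat z i)) = σ} →
      Filter.Tendsto (fun r => volume ({z | (fun i => SignType.sign (βhat z i)) = σ}
          ∩ Metric.closedBall y r) / volume (Metric.closedBall y r))
        (nhdsWithin 0 (Set.Ioi 0)) (nhds 1) :=
    fun σ => ae_imp_of_ae_restrict''
      (Besicovitch.ae_tendsto_measure_inter_div volume _)
  have hall : ∀ᵐ y ∂(volume : Measure (Fin n → ℝ)),
      ∀ σ : Fin d → SignType,
      y ∈ {z | (fun i => SignType.sign (βhat z i)) = σ} →
      Filter.Tendsto (fun r => volume ({z | (fun i => SignType.sign (βhat z i)) = σ}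
          ∩ Metric.closedBall y r) / volume (Metric.closedBall y r))
        (nhdsWithin 0 (Set.Ioi 0)) (nhds 1) := ae_all_iff.mpr hdens
  filter_upwards [hdiff, hall] with y hdy hdy2
  set f : (Fin n → ℝ) → (Fin n → ℝ) := fun z => X.mulVec (βhat z) with hf
  set σ : Fin d → SignType := fun i => SignType.sign (βhat y i) with hσ
  have hyS : y ∈ {z | (fun i => SignType.sign (βhat z i)) = σ} := rfl
  have dens := hdy2 σ hyS
  have hgd : DifferentiableAt ℝ (fun z => Pproj X σ z + (f y - Pproj X σ y)) y :=
    ((Pproj X σ).differentiableAt).add_const _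
  have hfg : fderiv ℝ f y = (Pproj X σ : (Fin n → ℝ) →L[ℝ] (Fin n → ℝ)) := by
    have h0 : ∀ z ∈ {z | (fun i => SignType.sign (βhat z i)) = σ},
        (fun w => f w - (Pproj X σ w + (f y - Pproj X σ y))) z = 0 := by
      intro z hz
      have haff := lasso_affine hτ hmin σ z y
        (fun i => congrFun hz i) (fun i => congrFun hσ.symm i)
      have haff' : f z - f y = Pproj X σ z - Pproj X σ y := by
        rw [← map_sub]; exact haff
      simp only
      rw [sub_eq_zero]
      have : f z = f y + (Pproj X σ z - Pproj X σ y) := by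
        rw [← haff']; abel
      rw [this]; abel
    have hφd : DifferentiableAt ℝ
        (fun w => f w - (Pproj X σ w + (f y - Pproj X σ y))) y := hdy.sub hgd
    have hz0 := fderiv_eq_zero_of_dens h0 hyS hφd dens
    have heq : fderiv ℝ (fun w => f w - (Pproj X σ w + (f y - Pproj X σ y))) y
        = fderiv ℝ f y - Pproj X σ := by
      rw [fderiv_fun_sub hdy hgd]
      congr 1
      rw [fderiv_add_const]
      exact (Pproj X σ).fderiv
    rw [heq] at hz0
    rw [← sub_eq_zero]
    exact hz0
  refine ⟨hdy, ?_⟩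
  rw [divg]
  have hterm : ∀ i, fderiv ℝ f y (Pi.single i 1) i = Pproj X σ (Pi.single i 1) i := by
    intro i; rw [hfg]
  rw [Finset.sum_congr rfl (fun i _ => hterm i), trace_Pproj]
  have hseteq : {i | σ i ≠ 0} = {i : Fin d | βhat y i ≠ 0} := by
    ext i
    simp only [Set.mem_setOf_eq, hσ, ne_eq, sign_eq_zero_iff]
  have : (X.submatrix id (fun i : {i : Fin d // βhat y i ≠ 0} => (i : Fin d))).rank
      = finrank ℝ (Vsub X σ) := by
    rw [rank_active X (fun i => βhat y i ≠ 0), finrank_Vsub, hseteq]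
  rw [this]
end
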